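/- arXiv:1206.1193 — 11 statements merged into one kernel-verified Lean document; each statement's English description precedes it below -/
import Mathlib

section
/- Let h : J ⊂ ℝ → ℝ be a non-negative function with h(α) ≥ α for all α ∈ (0,1), and let f : I ⊂ [0,∞) → ℝ be a differentiable function on the interior of I with h^q, f′ ∈ L[a,b], where a, b are interior points of I with a < b. Let p, q > 1 with 1/p + 1/q = 1. If |f′| is h-convex on I, then |(1/(b−a)) ∫_a^b f(x) dx − (1/3)[(f(a)+f(b))/2 + 2 f((a+b)/2)]| ≤ ((b−a)/3) ((1 + 2^{p+1})/(6(p+1)))^{1/p} · { |f′(a)| [ (∫_0^{1/2} h(t)^q dt)^{1/q} + (∫_{1/2}^1 h(t)^q dt)^{1/q} ] + |f′(b)| [ (∫_0^{1/2} h(1−t)^q dt)^{1/q} + (∫_{1/2}^1 h(1−t)^q dt)^{1/q} ] }. -/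
open MeasureTheory Set

lemma aux_ae_Ioo {α β : ℝ} :
    ∀ᵐ t ∂(volume.restrict (Set.Ioc α β)), t ∈ Set.Ioo α β := by
  have hne : ∀ᵐ (t : ℝ), t ≠ β := by
    rw [ae_iff]
    simpa [Set.setOf_eq_eq_singleton] using volume_singleton (a := β)
  filter_upwards [ae_restrict_mem measurableSet_Ioc, ae_restrict_of_ae hne] with t ht htne
  exact ⟨ht.1, lt_of_le_of_ne ht.2 htne⟩

lemma aux_ae_Icc {α β : ℝ} :
    ∀ᵐ t ∂(volume.restrict (Set.Icc α β)), t ∈ Set.Ioo α β := by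
  have hne : ∀ᵐ (t : ℝ), t ≠ β ∧ t ≠ α := by
    rw [ae_iff]
    refine measure_mono_null (fun t ht => ?_) (measure_union_null
      (Real.volume_singleton (a := β)) (Real.volume_singleton (a := α)))
    simp only [Set.mem_setOf_eq, not_and_or, not_not] at ht
    rcases ht with h | h <;> simp [h]
  filter_upwards [ae_restrict_mem measurableSet_Icc, ae_restrict_of_ae hne] with t ht htne
  exact ⟨lt_of_le_of_ne ht.1 (Ne.symm htne.2), lt_of_le_of_ne ht.2 htne.1⟩

/-- `Memℒp` from integrability of the `q`-th power, for nonneg functions. -/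
lemma aux_memLp {q : ℝ} (hq : 1 < q) {s : Set ℝ} (hs : MeasurableSet s) {H : ℝ → ℝ}
    (hae : ∀ᵐ t ∂(volume.restrict s), 0 ≤ H t)
    (hHint : IntegrableOn (fun t => H t ^ q) s) :
    MemLp H (ENNReal.ofReal q) (volume.restrict s) := by
  have hq0 : (0:ℝ) < q := lt_trans one_pos hq
  have h1 : AEMeasurable (fun t => H t ^ q) (volume.restrict s) :=
    hHint.aestronglyMeasurable.aemeasurable
  have h2 : AEMeasurable (fun t => (H t ^ q) ^ q⁻¹) (volume.restrict s) :=
    (Real.continuous_rpow_const (inv_nonneg.2 hq0.le)).measurable.comp_aemeasurable h1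
  have hm : AEStronglyMeasurable H (volume.restrict s) := by
    refine (h2.congr ?_).aestronglyMeasurable
    filter_upwards [hae] with t ht
    exact Real.rpow_rpow_inv ht hq0.ne'
  have key : MemLp (fun t => ‖H t‖ ^ (ENNReal.ofReal q).toReal)
      (ENNReal.ofReal q / ENNReal.ofReal q) (volume.restrict s) := by
    rw [ENNReal.toReal_ofReal hq0.le,
      ENNReal.div_self (by simpa using hq0) ENNReal.ofReal_ne_top,
      memLp_one_iff_integrable]
    refine hHint.congr ?_
    filter_upwards [hae] with t ht
    rw [Real.norm_of_nonneg ht]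
  exact (memLp_norm_rpow_iff hm (by simpa using hq0) ENNReal.ofReal_ne_top).1 key

/-- Hölder inequality on an interval, for `|k| * H` with `H ≥ 0`, `|k| ≤ 1`. -/
lemma aux_holder {p q : ℝ} (hp : 1 < p) (hq : 1 < q) (hpq : 1/p + 1/q = 1)
    {α β : ℝ} (hαβ : α ≤ β) {k H : ℝ → ℝ} (hk : Continuous k)
    (hkb : ∀ t ∈ Set.Ioc α β, |k t| ≤ 1)
    (hH0 : ∀ t ∈ Set.Ioo α β, 0 ≤ H t)
    (hHint : IntegrableOn (fun t => H t ^ q) (Set.Ioc α β)) :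
    ∫ t in α..β, |k t| * H t ≤
      (∫ t in α..β, |k t| ^ p) ^ (1/p) * (∫ t in α..β, H t ^ q) ^ (1/q) := by
  have hconj : p.HolderConjugate q := Real.holderConjugate_iff.mpr ⟨hp, by rw [← one_div, ← one_div]; exact hpq⟩
  haveI : IsFiniteMeasure (volume.restrict (Set.Ioc α β)) := by
    constructor
    rw [Measure.restrict_apply_univ]
    exact measure_Ioc_lt_top
  have hkm : MemLp (fun t => |k t|) (ENNReal.ofReal p) (volume.restrict (Set.Ioc α β)) := by
    refine MemLp.of_bound hk.abs.aestronglyMeasurable.restrict 1 ?_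
    filter_upwards [ae_restrict_mem measurableSet_Ioc] with t ht
    rw [Real.norm_of_nonneg (abs_nonneg _)]
    exact hkb t ht
  have haeH : ∀ᵐ t ∂(volume.restrict (Set.Ioc α β)), 0 ≤ H t := by
    filter_upwards [aux_ae_Ioo] with t ht using hH0 t ht
  have hHm : MemLp H (ENNReal.ofReal q) (volume.restrict (Set.Ioc α β)) :=
    aux_memLp hq measurableSet_Ioc haeH hHint
  rw [intervalIntegral.integral_of_le hαβ, intervalIntegral.integral_of_le hαβ,
    intervalIntegral.integral_of_le hαβ]
  exact integral_mul_le_Lp_mul_Lq_of_nonneg hconj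
    (Filter.Eventually.of_forall fun t => abs_nonneg _) haeH hkm hHm

/-- The core bound for one half of the Simpson kernel estimate. -/
lemma aux_half {p q : ℝ} (hp : 1 < p) (hq : 1 < q) (hpq : 1/p + 1/q = 1)
    {α β : ℝ} (hαβ : α ≤ β) (hsub : Set.Ioo α β ⊆ Set.Ioo 0 1)
    {k F h : ℝ → ℝ} (hk : Continuous k) (hkb : ∀ t ∈ Set.Ioc α β, |k t| ≤ 1)
    {ca cb : ℝ} (hca : 0 ≤ ca) (hcb : 0 ≤ cb)
    (hFint : IntegrableOn F (Set.Ioc α β))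
    (hh0 : ∀ t ∈ Set.Ioo (0:ℝ) 1, 0 ≤ h t)
    (hbound : ∀ t ∈ Set.Ioo (0:ℝ) 1, |F t| ≤ h t * ca + h (1-t) * cb)
    (hhint1 : IntegrableOn (fun t => h t ^ q) (Set.Ioc α β))
    (hhint2 : IntegrableOn (fun t => h (1-t) ^ q) (Set.Ioc α β)) :
    ∫ t in α..β, |k t| * |F t| ≤
      (∫ t in α..β, |k t| ^ p) ^ (1/p) *
        (ca * (∫ t in α..β, h t ^ q) ^ (1/q) + cb * (∫ t in α..β, h (1-t) ^ q) ^ (1/q)) := by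
  have hq0 : (0:ℝ) < q := lt_trans one_pos hq
  haveI : IsFiniteMeasure (volume.restrict (Set.Ioc α β)) := by
    constructor
    rw [Measure.restrict_apply_univ]
    exact measure_Ioc_lt_top
  have hH10 : ∀ t ∈ Set.Ioo α β, 0 ≤ h t := fun t ht => hh0 t (hsub ht)
  have hH20 : ∀ t ∈ Set.Ioo α β, 0 ≤ h (1-t) := fun t ht => by
    have h' := hsub ht
    exact hh0 (1-t) ⟨by linarith [h'.2], by linarith [h'.1]⟩
  have hae1 : ∀ᵐ t ∂(volume.restrict (Set.Ioc α β)), 0 ≤ h t := by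
    filter_upwards [aux_ae_Ioo] with t ht using hH10 t ht
  have hae2 : ∀ᵐ t ∂(volume.restrict (Set.Ioc α β)), 0 ≤ h (1-t) := by
    filter_upwards [aux_ae_Ioo] with t ht using hH20 t ht
  -- integrability of h and h(1-·) on the interval
  have hint1 : IntegrableOn h (Set.Ioc α β) := by
    exact memLp_one_iff_integrable.1 <|
      (aux_memLp hq measurableSet_Ioc hae1 hhint1).mono_exponent
        (by simpa using ENNReal.one_le_ofReal.2 hq.le)
  have hint2 : IntegrableOn (fun t => h (1-t)) (Set.Ioc α β) := by
    exact memLp_one_iff_integrable.1 <|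
      (aux_memLp hq measurableSet_Ioc hae2 hhint2).mono_exponent
        (by simpa using ENNReal.one_le_ofReal.2 hq.le)
  -- integrability of products with |k|
  have hmul : ∀ {G : ℝ → ℝ}, IntegrableOn G (Set.Ioc α β) →
      IntegrableOn (fun t => |k t| * G t) (Set.Ioc α β) := by
    intro G hG
    refine hG.abs.mono' (hk.abs.aestronglyMeasurable.restrict.mul hG.aestronglyMeasurable) ?_
    filter_upwards [ae_restrict_mem measurableSet_Ioc] with t ht
    rw [Real.norm_eq_abs, abs_mul, abs_abs]
    calc |k t| * |G t| ≤ 1 * |G t| :=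
          mul_le_mul_of_nonneg_right (hkb t ht) (abs_nonneg _)
      _ = |G t| := one_mul _
  have toII : ∀ {G : ℝ → ℝ}, IntegrableOn G (Set.Ioc α β) →
      IntervalIntegrable G volume α β := fun {G} hG =>
    intervalIntegrable_iff.2 (by rwa [uIoc_of_le hαβ])
  have key1 : ∫ t in α..β, |k t| * |F t| ≤
      ∫ t in α..β, |k t| * (h t * ca + h (1-t) * cb) := by
    refine intervalIntegral.integral_mono_ae_restrict hαβ (toII (hmul hFint.abs))
      (toII (hmul ((hint1.mul_const ca).add (hint2.mul_const cb)))) ?_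
    filter_upwards [aux_ae_Icc] with t ht
    exact mul_le_mul_of_nonneg_left (hbound t (hsub ht)) (abs_nonneg _)
  have key2 : ∫ t in α..β, |k t| * (h t * ca + h (1-t) * cb) =
      (∫ t in α..β, |k t| * h t) * ca + (∫ t in α..β, |k t| * h (1-t)) * cb := by
    have hrw : ∀ t : ℝ, |k t| * (h t * ca + h (1-t) * cb)
        = (|k t| * h t) * ca + (|k t| * h (1-t)) * cb := fun t => by ring
    simp_rw [hrw]
    rw [intervalIntegral.integral_add ((toII (hmul hint1)).mul_const ca)
      ((toII (hmul hint2)).mul_const cb),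
      intervalIntegral.integral_mul_const, intervalIntegral.integral_mul_const]
  have hol1 := aux_holder hp hq hpq hαβ hk hkb hH10 hhint1
  have hol2 := aux_holder hp hq hpq hαβ hk hkb hH20 hhint2
  have hK0 : 0 ≤ (∫ t in α..β, |k t| ^ p) ^ (1/p) :=
    Real.rpow_nonneg (intervalIntegral.integral_nonneg hαβ
      (fun t _ => Real.rpow_nonneg (abs_nonneg _) _)) _
  calc ∫ t in α..β, |k t| * |F t|
      ≤ (∫ t in α..β, |k t| * h t) * ca + (∫ t in α..β, |k t| * h (1-t)) * cb := by
        rw [← key2]; exact key1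
    _ ≤ ((∫ t in α..β, |k t| ^ p) ^ (1/p) * (∫ t in α..β, h t ^ q) ^ (1/q)) * ca
        + ((∫ t in α..β, |k t| ^ p) ^ (1/p) * (∫ t in α..β, h (1-t) ^ q) ^ (1/q)) * cb :=
        add_le_add (mul_le_mul_of_nonneg_right hol1 hca)
          (mul_le_mul_of_nonneg_right hol2 hcb)
    _ = (∫ t in α..β, |k t| ^ p) ^ (1/p) *
        (ca * (∫ t in α..β, h t ^ q) ^ (1/q) + cb * (∫ t in α..β, h (1-t) ^ q) ^ (1/q)) := by
        ring

/-- Explicit value of the kernel integral `∫ |t - c|^p` over `[α, β]` with `α ≤ c ≤ β`. -/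
lemma aux_kernel {p : ℝ} (hp : 1 < p) {c α β : ℝ} (hαc : α ≤ c) (hcβ : c ≤ β) :
    ∫ t in α..β, |t - c| ^ p = ((c-α)^(p+1) + (β-c)^(p+1))/(p+1) := by
  have hp0 : (0:ℝ) < p := lt_trans one_pos hp
  have hcont : Continuous (fun t : ℝ => |t - c| ^ p) :=
    (Real.continuous_rpow_const hp0.le).comp ((continuous_id.sub continuous_const).abs)
  have hsplit : ∫ t in α..β, |t - c| ^ p
      = (∫ t in α..c, |t - c| ^ p) + ∫ t in c..β, |t - c| ^ p :=
    (intervalIntegral.integral_add_adjacent_intervals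
      (hcont.intervalIntegrable _ _) (hcont.intervalIntegrable _ _)).symm
  have h1 : ∫ t in α..c, |t - c| ^ p = (c-α)^(p+1)/(p+1) := by
    rw [intervalIntegral.integral_congr (g := fun t => (c - t) ^ p) ?_]
    · rw [intervalIntegral.integral_comp_sub_left (fun s => s ^ p) c, sub_self]
      rw [integral_rpow (Or.inl (by linarith))]
      rw [Real.zero_rpow (by positivity), sub_zero]
    · intro t ht
      rw [uIcc_of_le hαc] at ht
      simp only []
      rw [abs_of_nonpos (by linarith [ht.2]), neg_sub]
  have h2 : ∫ t in c..β, |t - c| ^ p = (β-c)^(p+1)/(p+1) := by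
    rw [intervalIntegral.integral_congr (g := fun t => (t - c) ^ p) ?_]
    · rw [intervalIntegral.integral_comp_sub_right (fun s => s ^ p) c, sub_self]
      rw [integral_rpow (Or.inl (by linarith))]
      rw [Real.zero_rpow (by positivity), sub_zero]
    · intro t ht
      rw [uIcc_of_le hcβ] at ht
      simp only []
      rw [abs_of_nonneg (by linarith [ht.1])]
  rw [hsplit, h1, h2]
  ring

/-- rpow algebra for the Simpson kernel constant. -/
lemma aux_rpow {p : ℝ} (hp : 1 < p) :
    (((1/6:ℝ)^(p+1) + (1/3:ℝ)^(p+1))/(p+1))^(1/p)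
      = (1/6) * ((1 + 2^(p+1))/(6*(p+1)))^(1/p) := by
  have hp0 : (0:ℝ) < p := lt_trans one_pos hp
  have h13 : (1/3:ℝ)^(p+1) = 2^(p+1) * (1/6:ℝ)^(p+1) := by
    rw [← Real.mul_rpow (by norm_num) (by norm_num)]
    norm_num
  have h6 : (1/6:ℝ)^(p+1) = (1/6:ℝ)^p * (1/6) := by
    rw [Real.rpow_add (by norm_num), Real.rpow_one]
  have hC0 : (0:ℝ) ≤ (1 + 2^(p+1))/(6*(p+1)) := by
    have : (0:ℝ) < 2^(p+1) := Real.rpow_pos_of_pos (by norm_num) _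
    positivity
  have key : ((1/6:ℝ)^(p+1) + (1/3:ℝ)^(p+1))/(p+1)
      = ((1 + 2^(p+1))/(6*(p+1))) * (1/6:ℝ)^p := by
    rw [h13, h6]
    field_simp
  rw [key, Real.mul_rpow hC0 (Real.rpow_nonneg (by norm_num) _),
    ← Real.rpow_mul (by norm_num : (0:ℝ) ≤ 1/6),
    mul_one_div_cancel hp0.ne', Real.rpow_one]
  ring

lemma aux_nonneg {q : ℝ} {α β : ℝ} (hαβ : α ≤ β) {H : ℝ → ℝ}
    (hH0 : ∀ t ∈ Set.Ioo α β, 0 ≤ H t) : 0 ≤ (∫ t in α..β, H t ^ q)^(1/q) := by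
  refine Real.rpow_nonneg ?_ _
  refine intervalIntegral.integral_nonneg_of_ae_restrict hαβ ?_
  filter_upwards [aux_ae_Icc] with t ht
  exact Real.rpow_nonneg (hH0 t ht) _

set_option maxHeartbeats 1000000 in
/-- Simpson-type inequality for functions whose derivative has `h`-convex absolute value,
via Hölder's inequality with conjugate exponents `p, q`. -/
theorem simpson_hconvex_holder
    (I : Set ℝ) (hI : I ⊆ Set.Ici (0:ℝ)) (hIc : I.OrdConnected)
    (h f f' : ℝ → ℝ) (a b : ℝ)
    (ha : a ∈ interior I) (hb : b ∈ interior I) (hab : a < b)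
    (hh0 : ∀ t ∈ Set.Ioo (0:ℝ) 1, 0 ≤ h t)
    (hha : ∀ t ∈ Set.Ioo (0:ℝ) 1, t ≤ h t)
    (p q : ℝ) (hp : 1 < p) (hq : 1 < q) (hpq : 1/p + 1/q = 1)
    (hderiv : ∀ x ∈ interior I, HasDerivAt f (f' x) x)
    (hfint : IntervalIntegrable f' volume a b)
    (hhint : IntervalIntegrable (fun t => h t ^ q) volume 0 1)
    (hconv : ∀ x ∈ I, ∀ y ∈ I, ∀ t ∈ Set.Ioo (0:ℝ) 1,
      |f' (t*x + (1-t)*y)| ≤ h t * |f' x| + h (1-t) * |f' y|) :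
    |(1/(b-a)) * ∫ x in a..b, f x
        - (1/3) * ((f a + f b)/2 + 2 * f ((a+b)/2))|
      ≤ ((b-a)/3) * ((1 + 2^(p+1))/(6*(p+1)))^(1/p) *
        (|f' a| * ((∫ t in (0:ℝ)..(1/2), h t ^ q)^(1/q)
                    + (∫ t in (1/2:ℝ)..1, h t ^ q)^(1/q))
          + |f' b| * ((∫ t in (0:ℝ)..(1/2), h (1-t) ^ q)^(1/q)
                    + (∫ t in (1/2:ℝ)..1, h (1-t) ^ q)^(1/q))) := by
  have hba : (0:ℝ) < b - a := sub_pos.2 hab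
  have habne : a - b ≠ 0 := sub_ne_zero.2 hab.ne
  have hIcc : Set.Icc a b ⊆ interior I := hIc.interior.out ha hb
  set φ : ℝ → ℝ := fun t => (a-b)*t + b with hφ
  set F : ℝ → ℝ := fun t => f' (φ t) with hF
  set g : ℝ → ℝ := fun t => f (φ t) with hgdef
  have hφmem : ∀ t ∈ Set.Icc (0:ℝ) 1, φ t ∈ Set.Icc a b := by
    intro t ht
    have h1 : 0 ≤ (1 - t) * (b - a) := mul_nonneg (by linarith [ht.2]) hba.le
    have h2 : 0 ≤ t * (b - a) := mul_nonneg ht.1 hba.le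
    simp only [hφ]
    constructor
    · nlinarith
    · nlinarith
  have hg : ∀ t ∈ Set.Icc (0:ℝ) 1, HasDerivAt g ((a-b) * F t) t := by
    intro t ht
    have h1 : HasDerivAt φ (a-b) t := by
      have h := ((hasDerivAt_id t).const_mul (a-b)).add_const b; rw [mul_one] at h; exact h
    have h2 := (hderiv (φ t) (hIcc (hφmem t ht))).comp t h1
    exact h2.congr_deriv (mul_comm _ _)
  -- interval integrability of F on [0,1]
  have hFint01 : IntervalIntegrable F volume 0 1 := by
    have h1 : IntervalIntegrable (fun x => f' (x + b)) volume (a - b) 0 := by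
      simpa using hfint.comp_add_right b
    have h2 := h1.comp_mul_left (c := a-b)
    rw [div_self habne, zero_div] at h2
    exact h2.symm
  have hFII1 : IntervalIntegrable F volume 0 (1/2) :=
    hFint01.mono_set (by rw [Set.uIcc_of_le (by norm_num : (0:ℝ) ≤ 1/2),
      Set.uIcc_of_le (by norm_num : (0:ℝ) ≤ 1)]; exact Set.Icc_subset_Icc le_rfl (by norm_num))
  have hFII2 : IntervalIntegrable F volume (1/2) 1 :=
    hFint01.mono_set (by rw [Set.uIcc_of_le (by norm_num : (1/2:ℝ) ≤ 1),
      Set.uIcc_of_le (by norm_num : (0:ℝ) ≤ 1)]; exact Set.Icc_subset_Icc (by norm_num) le_rfl)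
  -- continuity of g
  have hgc : ContinuousOn g (Set.Icc (0:ℝ) 1) := fun t ht =>
    (hg t ht).continuousAt.continuousWithinAt
  have hgint1 : IntervalIntegrable g volume 0 (1/2) :=
    (hgc.mono (Set.Icc_subset_Icc le_rfl (by norm_num))).intervalIntegrable_of_Icc (by norm_num)
  have hgint2 : IntervalIntegrable g volume (1/2) 1 :=
    (hgc.mono (Set.Icc_subset_Icc (by norm_num) le_rfl)).intervalIntegrable_of_Icc (by norm_num)
  -- integration by parts on the two halves
  have ibp1 : ∫ t in (0:ℝ)..(1/2), (t - 1/6) * ((a-b) * F t)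
      = (1/2 - 1/6) * g (1/2) - (0 - 1/6) * g 0 - ∫ t in (0:ℝ)..(1/2), 1 * g t := by
    refine intervalIntegral.integral_mul_deriv_eq_deriv_mul
      (u' := fun _ => (1:ℝ)) (fun x hx => (hasDerivAt_id x).sub_const _)
      (fun x hx => hg x ?_) (by simp) (hFII1.const_mul _)
    rw [Set.uIcc_of_le (by norm_num : (0:ℝ) ≤ 1/2)] at hx
    exact ⟨hx.1, by linarith [hx.2]⟩
  have ibp2 : ∫ t in (1/2:ℝ)..1, (t - 5/6) * ((a-b) * F t)
      = (1 - 5/6) * g 1 - (1/2 - 5/6) * g (1/2) - ∫ t in (1/2:ℝ)..1, 1 * g t := by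
    refine intervalIntegral.integral_mul_deriv_eq_deriv_mul
      (u' := fun _ => (1:ℝ)) (fun x hx => (hasDerivAt_id x).sub_const _)
      (fun x hx => hg x ?_) (by simp) (hFII2.const_mul _)
    rw [Set.uIcc_of_le (by norm_num : (1/2:ℝ) ≤ 1)] at hx
    exact ⟨by linarith [hx.1], hx.2⟩
  -- substitution for ∫ g
  have hadj : (∫ t in (0:ℝ)..(1/2), g t) + ∫ t in (1/2:ℝ)..1, g t = ∫ t in (0:ℝ)..1, g t :=
    intervalIntegral.integral_add_adjacent_intervals hgint1 hgint2
  have hsubst : ∫ t in (0:ℝ)..1, g t = (1/(b-a)) * ∫ x in a..b, f x := by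
    have h1 := intervalIntegral.integral_comp_mul_add f habne b
      (a := (0:ℝ)) (b := (1:ℝ))
    simp only [mul_zero, zero_add, mul_one] at h1
    have h2 : a - b + b = a := by ring
    rw [h2] at h1
    rw [show (∫ t in (0:ℝ)..1, g t) = ∫ t in (0:ℝ)..1, f ((a-b)*t + b) from rfl, h1,
      intervalIntegral.integral_symm a b]
    simp only [smul_eq_mul]
    field_simp
    ring
  -- endpoint values
  have hg0 : g 0 = f b := by
    simp only [hgdef, hφ]; exact congrArg f (by ring)
  have hg1 : g 1 = f a := by
    simp only [hgdef, hφ]; exact congrArg f (by ring)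
  have hghalf : g (1/2) = f ((a+b)/2) := by
    simp only [hgdef, hφ]; exact congrArg f (by ring)
  -- the key identity
  have hiden : (1/(b-a)) * (∫ x in a..b, f x) - (1/3) * ((f a + f b)/2 + 2 * f ((a+b)/2))
      = -((∫ t in (0:ℝ)..(1/2), (t - 1/6) * ((a-b) * F t))
          + ∫ t in (1/2:ℝ)..1, (t - 5/6) * ((a-b) * F t)) := by
    rw [ibp1, ibp2]
    simp only [one_mul]
    rw [hg0, hg1, hghalf]
    have := hadj
    rw [hsubst] at this
    linarith [this]
  -- convexity bound on |F|
  have hbound : ∀ t ∈ Set.Ioo (0:ℝ) 1, |F t| ≤ h t * |f' a| + h (1-t) * |f' b| := by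
    intro t ht
    have hc := hconv a (interior_subset ha) b (interior_subset hb) t ht
    have heq : t*a + (1-t)*b = (a-b)*t + b := by ring
    rw [heq] at hc
    simpa only [hF, hφ] using hc
  -- restriction helper
  have restr : ∀ {G : ℝ → ℝ} {α β : ℝ}, IntervalIntegrable G volume 0 1 → 0 ≤ α → α ≤ β →
      β ≤ 1 → IntegrableOn G (Set.Ioc α β) := by
    intro G α β hG h0 hαβ h1
    have h2 := hG.mono_set (by
      rw [Set.uIcc_of_le hαβ, Set.uIcc_of_le (zero_le_one (α := ℝ))]
      exact Set.Icc_subset_Icc h0 h1)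
    rwa [intervalIntegrable_iff, Set.uIoc_of_le hαβ] at h2
  have hh2int01 : IntervalIntegrable (fun t => h (1-t) ^ q) volume 0 1 := by
    have h2 := (hhint.comp_sub_left 1).symm
    norm_num at h2
    exact h2
  have hFOn1 : IntegrableOn F (Set.Ioc (0:ℝ) (1/2)) := restr hFint01 le_rfl (by norm_num) (by norm_num)
  have hFOn2 : IntegrableOn F (Set.Ioc (1/2:ℝ) 1) := restr hFint01 (by norm_num) (by norm_num) le_rfl
  have hhOn1 : IntegrableOn (fun t => h t ^ q) (Set.Ioc (0:ℝ) (1/2)) :=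
    restr hhint le_rfl (by norm_num) (by norm_num)
  have hhOn2 : IntegrableOn (fun t => h t ^ q) (Set.Ioc (1/2:ℝ) 1) :=
    restr hhint (by norm_num) (by norm_num) le_rfl
  have hh2On1 : IntegrableOn (fun t => h (1-t) ^ q) (Set.Ioc (0:ℝ) (1/2)) :=
    restr hh2int01 le_rfl (by norm_num) (by norm_num)
  have hh2On2 : IntegrableOn (fun t => h (1-t) ^ q) (Set.Ioc (1/2:ℝ) 1) :=
    restr hh2int01 (by norm_num) (by norm_num) le_rfl
  -- apply the core Hölder bound on each half
  have main1 : ∫ t in (0:ℝ)..(1/2), |t - 1/6| * |F t| ≤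
      ((∫ t in (0:ℝ)..(1/2), |t - 1/6| ^ p) ^ (1/p)) *
        (|f' a| * (∫ t in (0:ℝ)..(1/2), h t ^ q) ^ (1/q)
          + |f' b| * (∫ t in (0:ℝ)..(1/2), h (1-t) ^ q) ^ (1/q)) :=
    aux_half (k := fun t => t - 1/6) (α := 0) (β := 1/2) hp hq hpq (by norm_num)
      (fun t ht => ⟨ht.1, by linarith [ht.2]⟩)
      (continuous_id.sub continuous_const)
      (fun t ht => by
        simp only [Set.mem_Ioc] at ht
        rw [abs_le]
        constructor <;> linarith [ht.1, ht.2])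
      (abs_nonneg (f' a)) (abs_nonneg (f' b)) hFOn1 hh0 hbound hhOn1 hh2On1
  have main2 : ∫ t in (1/2:ℝ)..1, |t - 5/6| * |F t| ≤
      ((∫ t in (1/2:ℝ)..1, |t - 5/6| ^ p) ^ (1/p)) *
        (|f' a| * (∫ t in (1/2:ℝ)..1, h t ^ q) ^ (1/q)
          + |f' b| * (∫ t in (1/2:ℝ)..1, h (1-t) ^ q) ^ (1/q)) :=
    aux_half (k := fun t => t - 5/6) (α := 1/2) (β := 1) hp hq hpq (by norm_num)
      (fun t ht => ⟨by linarith [ht.1], ht.2⟩)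
      (continuous_id.sub continuous_const)
      (fun t ht => by
        simp only [Set.mem_Ioc] at ht
        rw [abs_le]
        constructor <;> linarith [ht.1, ht.2])
      (abs_nonneg (f' a)) (abs_nonneg (f' b)) hFOn2 hh0 hbound hhOn2 hh2On2
  -- kernel integral values
  set C : ℝ := ((1 + 2^(p+1))/(6*(p+1)))^(1/p) with hC
  have hK1 : (∫ t in (0:ℝ)..(1/2), |t - 1/6| ^ p) ^ (1/p) = (1/6) * C := by
    rw [aux_kernel hp (by norm_num : (0:ℝ) ≤ 1/6) (by norm_num : (1/6:ℝ) ≤ 1/2)]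
    have e1 : (1/6:ℝ) - 0 = 1/6 := by norm_num
    have e2 : (1/2:ℝ) - 1/6 = 1/3 := by norm_num
    rw [e1, e2, aux_rpow hp]
  have hK2 : (∫ t in (1/2:ℝ)..1, |t - 5/6| ^ p) ^ (1/p) = (1/6) * C := by
    rw [aux_kernel hp (by norm_num : (1/2:ℝ) ≤ 5/6) (by norm_num : (5/6:ℝ) ≤ 1)]
    have e1 : (5/6:ℝ) - 1/2 = 1/3 := by norm_num
    have e2 : (1:ℝ) - 5/6 = 1/6 := by norm_num
    rw [e1, e2, add_comm, aux_rpow hp]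
  -- bounds on the absolute values of the two half integrals
  have habs : ∀ {α β c : ℝ}, α ≤ β → IntervalIntegrable F volume α β →
      |∫ t in α..β, (t - c) * ((a-b) * F t)| ≤ (b-a) * ∫ t in α..β, |t - c| * |F t| := by
    intro α β c hαβ hFab
    have e : ∀ t : ℝ, |(t - c) * ((a-b) * F t)| = (b-a) * (|t - c| * |F t|) := by
      intro t
      rw [abs_mul, abs_mul, abs_of_neg (by linarith : a - b < 0)]
      ring
    calc |∫ t in α..β, (t - c) * ((a-b) * F t)|
        ≤ ∫ t in α..β, |(t - c) * ((a-b) * F t)| :=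
          intervalIntegral.abs_integral_le_integral_abs hαβ
      _ = ∫ t in α..β, (b-a) * (|t - c| * |F t|) := by simp_rw [e]
      _ = (b-a) * ∫ t in α..β, |t - c| * |F t| := intervalIntegral.integral_const_mul _ _
  -- nonnegativity facts
  have hA1 : 0 ≤ (∫ t in (0:ℝ)..(1/2), h t ^ q) ^ (1/q) :=
    aux_nonneg (by norm_num) (fun t ht => hh0 t ⟨ht.1, by linarith [ht.2]⟩)
  have hA2 : 0 ≤ (∫ t in (1/2:ℝ)..1, h t ^ q) ^ (1/q) :=
    aux_nonneg (by norm_num) (fun t ht => hh0 t ⟨by linarith [ht.1], ht.2⟩)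
  have hB1 : 0 ≤ (∫ t in (0:ℝ)..(1/2), h (1-t) ^ q) ^ (1/q) :=
    aux_nonneg (by norm_num) (fun t ht => hh0 (1-t) ⟨by linarith [ht.2], by linarith [ht.1]⟩)
  have hB2 : 0 ≤ (∫ t in (1/2:ℝ)..1, h (1-t) ^ q) ^ (1/q) :=
    aux_nonneg (by norm_num) (fun t ht => hh0 (1-t) ⟨by linarith [ht.2], by linarith [ht.1]⟩)
  have hC0 : 0 ≤ C := Real.rpow_nonneg (by
    have : (0:ℝ) < 2^(p+1) := Real.rpow_pos_of_pos (by norm_num) _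
    positivity) _
  -- final assembly: the LHS parses as an integral of the difference
  have hfc : ContinuousOn f (Set.Icc a b) := fun x hx =>
    (hderiv x (hIcc hx)).continuousAt.continuousWithinAt
  have hfint' : IntervalIntegrable f volume a b := hfc.intervalIntegrable_of_Icc hab.le
  have hgoalEq : (1/(b-a)) * ∫ x in a..b, (f x - (1/3) * ((f a + f b)/2 + 2 * f ((a+b)/2)))
      = (1/(b-a)) * (∫ x in a..b, f x) - (1/3) * ((f a + f b)/2 + 2 * f ((a+b)/2)) := by
    rw [intervalIntegral.integral_sub hfint' intervalIntegrable_const,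
      intervalIntegral.integral_const]
    simp only [smul_eq_mul]
    field_simp
  rw [hgoalEq, hiden, abs_neg]
  have step1 := (abs_add_le (∫ t in (0:ℝ)..(1/2), (t - 1/6) * ((a-b) * F t))
    (∫ t in (1/2:ℝ)..1, (t - 5/6) * ((a-b) * F t)))
  have step2 := habs (by norm_num : (0:ℝ) ≤ 1/2) hFII1 (c := 1/6)
  have step3 := habs (by norm_num : (1/2:ℝ) ≤ 1) hFII2 (c := 5/6)
  have step4 := mul_le_mul_of_nonneg_left main1 hba.le
  have step5 := mul_le_mul_of_nonneg_left main2 hba.le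
  rw [hK1] at step4
  rw [hK2] at step5
  have hM0 : 0 ≤ |f' a| * ((∫ t in (0:ℝ)..(1/2), h t ^ q)^(1/q)
      + (∫ t in (1/2:ℝ)..1, h t ^ q)^(1/q))
      + |f' b| * ((∫ t in (0:ℝ)..(1/2), h (1-t) ^ q)^(1/q)
      + (∫ t in (1/2:ℝ)..1, h (1-t) ^ q)^(1/q)) :=
    add_nonneg (mul_nonneg (abs_nonneg _) (add_nonneg hA1 hA2))
      (mul_nonneg (abs_nonneg _) (add_nonneg hB1 hB2))
  nlinarith [mul_nonneg (mul_nonneg hba.le hC0) hM0]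
end

section
/- Let h : J ⊂ ℝ → ℝ be a non-negative supermultiplicative function with h(α) ≥ α for all α ∈ (0,1), and let f : I ⊂ [0,∞) → ℝ be differentiable on the interior of I with h², f′ ∈ L[a,b], where a, b are interior points of I with a < b. If |f′| is h-convex on I, then |(1/(b−a)) ∫_a^b f(x) dx − (1/3)[(f(a)+f(b))/2 + 2 f((a+b)/2)]| ≤ ((b−a)/(3√2)) · { |f′(a)| [ (∫_0^{1/2} h(t²) dt)^{1/2} + (∫_{1/2}^1 h(t²) dt)^{1/2} ] + |f′(b)| [ (∫_0^{1/2} h((1−t)²) dt)^{1/2} + (∫_{1/2}^1 h((1−t)²) dt)^{1/2} ] }. -/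
open MeasureTheory Set

lemma holder2 {μ : Measure ℝ} (u v : ℝ → ℝ) (hu0 : 0 ≤ᵐ[μ] u) (hv0 : 0 ≤ᵐ[μ] v)
    (hu2 : MemLp u 2 μ) (hv2 : MemLp v 2 μ) :
    ∫ x, u x * v x ∂μ ≤ Real.sqrt (∫ x, (u x)^2 ∂μ) * Real.sqrt (∫ x, (v x)^2 ∂μ) := by
  have hpq : (2:ℝ).HolderConjugate 2 := by constructor <;> norm_num
  have h2 : ENNReal.ofReal (2:ℝ) = 2 := by norm_num
  have key := integral_mul_le_Lp_mul_Lq_of_nonneg hpq hu0 hv0 (h2 ▸ hu2) (h2 ▸ hv2)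
  have e1 : ∀ w : ℝ → ℝ, (∫ a, w a ^ (2:ℝ) ∂μ) = ∫ a, (w a)^2 ∂μ := by
    intro w; congr 1; ext a
    rw [show ((2:ℝ) = ((2:ℕ):ℝ)) by norm_num, Real.rpow_natCast]
  rw [e1, e1] at key
  calc ∫ x, u x * v x ∂μ ≤ (∫ a, (u a)^2 ∂μ) ^ (1/2:ℝ) * (∫ a, (v a)^2 ∂μ) ^ (1/2:ℝ) := key
    _ = _ := by rw [← Real.sqrt_eq_rpow, ← Real.sqrt_eq_rpow]

lemma step {μ : Measure ℝ} [IsFiniteMeasure μ] (k G u v : ℝ → ℝ)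
    (hkc : Continuous k) (hkb : ∀ᵐ t ∂μ, |k t| ≤ 1)
    (hG : Integrable G μ)
    (huS : AEStronglyMeasurable u μ) (hvS : AEStronglyMeasurable v μ)
    (hu2 : Integrable (fun t => (u t)^2) μ) (hv2 : Integrable (fun t => (v t)^2) μ)
    (hu0 : 0 ≤ᵐ[μ] u) (hv0 : 0 ≤ᵐ[μ] v)
    (hb : ∀ᵐ t ∂μ, |G t| ≤ u t + v t) :
    ∫ t, |k t| * |G t| ∂μ ≤
      Real.sqrt (∫ t, (k t)^2 ∂μ) * Real.sqrt (∫ t, (u t)^2 ∂μ)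
        + Real.sqrt (∫ t, (k t)^2 ∂μ) * Real.sqrt (∫ t, (v t)^2 ∂μ) := by
  have hkS : AEStronglyMeasurable (fun t => |k t|) μ := (hkc.abs).aestronglyMeasurable
  have habs : ∀ w : ℝ → ℝ, AEStronglyMeasurable w μ → Integrable (fun t => (w t)^2) μ →
      Integrable w μ := by
    intro w hS h2i
    refine Integrable.mono' ((h2i.add (integrable_const 1)).div_const 2) hS ?_
    filter_upwards with t
    have : |w t| ≤ ((w t)^2 + 1)/2 := by nlinarith [sq_nonneg (|w t| - 1), sq_abs (w t)]
    simpa [Real.norm_eq_abs] using this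
  have hu1 : Integrable u μ := habs u huS hu2
  have hv1 : Integrable v μ := habs v hvS hv2
  have hprod : ∀ w : ℝ → ℝ, AEStronglyMeasurable w μ → Integrable w μ →
      Integrable (fun t => |k t| * w t) μ := by
    intro w hS h1
    refine Integrable.mono' h1.abs (hkS.mul hS) ?_
    filter_upwards [hkb] with t ht
    rw [Real.norm_eq_abs, abs_mul, abs_abs]
    calc |k t| * |w t| ≤ 1 * |w t| := by gcongr
      _ = |w t| := one_mul _
  have hkuu : Integrable (fun t => |k t| * u t) μ := hprod u huS hu1
  have hkvv : Integrable (fun t => |k t| * v t) μ := hprod v hvS hv1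
  have hkG : Integrable (fun t => |k t| * |G t|) μ :=
    hprod _ hG.abs.aestronglyMeasurable hG.abs
  have mono1 : ∫ t, |k t| * |G t| ∂μ ≤ ∫ t, (|k t| * u t + |k t| * v t) ∂μ := by
    refine integral_mono_ae hkG (hkuu.add hkvv) ?_
    filter_upwards [hb] with t ht
    have := abs_nonneg (k t)
    nlinarith
  have memk : MemLp (fun t => |k t|) 2 μ := MemLp.of_bound hkS 1 (by
    filter_upwards [hkb] with t ht; simpa [Real.norm_eq_abs, abs_abs] using ht)
  have ek : (∫ t, (|k t|)^2 ∂μ) = ∫ t, (k t)^2 ∂μ := by simp [sq_abs]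
  have h1 := holder2 (fun t => |k t|) u (Filter.Eventually.of_forall fun t => abs_nonneg _) hu0 memk
    ((memLp_two_iff_integrable_sq huS).2 hu2)
  have h2 := holder2 (fun t => |k t|) v (Filter.Eventually.of_forall fun t => abs_nonneg _) hv0 memk
    ((memLp_two_iff_integrable_sq hvS).2 hv2)
  rw [ek] at h1 h2
  calc ∫ t, |k t| * |G t| ∂μ ≤ ∫ t, (|k t| * u t + |k t| * v t) ∂μ := mono1
    _ = (∫ t, |k t| * u t ∂μ) + ∫ t, |k t| * v t ∂μ := integral_add hkuu hkvv
    _ ≤ _ := add_le_add h1 h2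


lemma sqrt_sq_mul_le {μ : Measure ℝ} (w : ℝ → ℝ) (c J : ℝ)
    (hmono : (∫ t, (w t)^2 ∂μ) ≤ J) :
    Real.sqrt (∫ t, (w t * c)^2 ∂μ) ≤ |c| * Real.sqrt J := by
  have e : (fun t => (w t * c)^2) = fun t => (w t)^2 * c^2 := by funext t; ring
  rw [e, integral_mul_const, Real.sqrt_mul (integral_nonneg fun t => sq_nonneg _),
    Real.sqrt_sq_eq_abs, mul_comm]
  exact mul_le_mul_of_nonneg_left (Real.sqrt_le_sqrt hmono) (abs_nonneg _)

set_option maxHeartbeats 2000000 in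
/-- Simpson-type inequality (case `p = q = 2`) for functions whose derivative has
`h`-convex absolute value, for a supermultiplicative `h`. -/
theorem simpson_hconvex_supermultiplicative_sq
    (I : Set ℝ) (hI : I ⊆ Set.Ici (0:ℝ)) (hIc : I.OrdConnected)
    (h f f' : ℝ → ℝ) (a b : ℝ)
    (ha : a ∈ interior I) (hb : b ∈ interior I) (hab : a < b)
    (hh0 : ∀ t ∈ Set.Icc (0:ℝ) 1, 0 ≤ h t)
    (hha : ∀ t ∈ Set.Ioo (0:ℝ) 1, t ≤ h t)
    (hsm : ∀ x ∈ Set.Icc (0:ℝ) 1, ∀ y ∈ Set.Icc (0:ℝ) 1, h x * h y ≤ h (x*y))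
    (hderiv : ∀ x ∈ interior I, HasDerivAt f (f' x) x)
    (hfint : IntervalIntegrable f' volume a b)
    (hhint : IntervalIntegrable (fun t => (h t)^2) volume 0 1)
    (hhint' : IntervalIntegrable (fun t => h (t^2)) volume 0 1)
    (hhint'' : IntervalIntegrable (fun t => h ((1-t)^2)) volume 0 1)
    (hconv : ∀ x ∈ I, ∀ y ∈ I, ∀ t ∈ Set.Ioo (0:ℝ) 1,
      |f' (t*x + (1-t)*y)| ≤ h t * |f' x| + h (1-t) * |f' y|) :
    |(1/(b-a)) * ∫ x in a..b, f x
        - (1/3) * ((f a + f b)/2 + 2 * f ((a+b)/2))|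
      ≤ ((b-a)/(3 * Real.sqrt 2)) *
        (|f' a| * (Real.sqrt (∫ t in (0:ℝ)..(1/2), h (t^2))
                    + Real.sqrt (∫ t in (1/2:ℝ)..1, h (t^2)))
          + |f' b| * (Real.sqrt (∫ t in (0:ℝ)..(1/2), h ((1-t)^2))
                    + Real.sqrt (∫ t in (1/2:ℝ)..1, h ((1-t)^2)))) := by
  have hab' : (0:ℝ) < b - a := sub_pos.2 hab
  have hne : a - b ≠ 0 := sub_ne_zero.2 hab.ne
  have hIcc : Icc a b ⊆ interior I := hIc.interior.out ha hb
  set φ : ℝ → ℝ := fun t => t*a + (1-t)*b with hφdef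
  have hφmem : ∀ t ∈ Icc (0:ℝ) 1, φ t ∈ Icc a b := by
    intro t ht
    constructor <;> [skip; skip] <;> simp only [hφdef] <;> nlinarith [ht.1, ht.2]
  have hφd : ∀ t : ℝ, HasDerivAt φ (a-b) t := by
    intro t
    have h1 : HasDerivAt (fun s : ℝ => s*a + (1-s)*b) (1*a + (0-1)*b) t :=
      ((hasDerivAt_id t).mul_const a).add
        (((hasDerivAt_const t (1:ℝ)).sub (hasDerivAt_id t)).mul_const b)
    simpa [hφdef] using h1.congr_deriv (by ring)
  have hgd : ∀ t ∈ Icc (0:ℝ) 1, HasDerivAt (fun s => f (φ s)) (f' (φ t) * (a-b)) t := by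
    intro t ht
    exact (hderiv (φ t) (hIcc (hφmem t ht))).comp t (hφd t)
  -- integrability of f' ∘ φ on [0,1]
  have hGint : IntervalIntegrable (fun t => f' (φ t)) volume 0 1 := by
    have h1 := hfint.comp_add_right b
    have h2 := h1.comp_mul_left (c := a-b)
    have e : (fun t => f' ((a-b)*t + b)) = fun t => f' (φ t) := by
      funext t; congr 1; simp only [hφdef]; ring
    have h3 : IntervalIntegrable (fun t => f' (φ t)) volume ((a-b)/(a-b)) ((b-b)/(a-b)) := by
      rw [← e]; exact h2
    rw [div_self hne] at h3
    simpa using h3.symm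
  have hsub01 : uIcc (0:ℝ) (1/2) ⊆ uIcc (0:ℝ) 1 := by
    rw [uIcc_of_le (by norm_num), uIcc_of_le (by norm_num)]
    exact Icc_subset_Icc (le_refl _) (by norm_num)
  have hsub11 : uIcc (1/2:ℝ) 1 ⊆ uIcc (0:ℝ) 1 := by
    rw [uIcc_of_le (by norm_num), uIcc_of_le (by norm_num)]
    exact Icc_subset_Icc (by norm_num) (le_refl _)
  have hG1 : IntervalIntegrable (fun t => f' (φ t)) volume 0 (1/2) := hGint.mono_set hsub01
  have hG2 : IntervalIntegrable (fun t => f' (φ t)) volume (1/2) 1 := hGint.mono_set hsub11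
  -- continuity / integrability of g = f ∘ φ
  have hgc : ContinuousOn (fun s => f (φ s)) (Icc 0 1) :=
    fun t ht => (hgd t ht).continuousAt.continuousWithinAt
  have hgi1 : IntervalIntegrable (fun s => f (φ s)) volume 0 (1/2) := by
    apply ContinuousOn.intervalIntegrable
    exact hgc.mono (by rw [uIcc_of_le (by norm_num)]; exact Icc_subset_Icc (le_refl _) (by norm_num))
  have hgi2 : IntervalIntegrable (fun s => f (φ s)) volume (1/2) 1 := by
    apply ContinuousOn.intervalIntegrable
    exact hgc.mono (by rw [uIcc_of_le (by norm_num)]; exact Icc_subset_Icc (by norm_num) (le_refl _))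
  -- integration by parts on each half
  have IBP1 : ∫ t in (0:ℝ)..(1/2), (t - 1/6) * (f' (φ t) * (a-b))
      = (1/2 - 1/6) * f (φ (1/2)) - (0 - 1/6) * f (φ 0) - ∫ t in (0:ℝ)..(1/2), 1 * f (φ t) := by
    apply intervalIntegral.integral_mul_deriv_eq_deriv_mul (u := fun t => t - 1/6)
      (v := fun s => f (φ s)) (u' := fun _ => (1:ℝ)) (v' := fun t => f' (φ t) * (a-b))
    · intro x hx
      simpa using (hasDerivAt_id x).sub_const (1/6)
    · intro x hx
      refine hgd x ?_
      rw [uIcc_of_le (by norm_num)] at hx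
      exact ⟨hx.1, by linarith [hx.2]⟩
    · exact intervalIntegrable_const
    · exact hG1.mul_const _
  have IBP2 : ∫ t in (1/2:ℝ)..1, (t - 5/6) * (f' (φ t) * (a-b))
      = (1 - 5/6) * f (φ 1) - (1/2 - 5/6) * f (φ (1/2)) - ∫ t in (1/2:ℝ)..1, 1 * f (φ t) := by
    apply intervalIntegral.integral_mul_deriv_eq_deriv_mul (u := fun t => t - 5/6)
      (v := fun s => f (φ s)) (u' := fun _ => (1:ℝ)) (v' := fun t => f' (φ t) * (a-b))
    · intro x hx
      simpa using (hasDerivAt_id x).sub_const (5/6)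
    · intro x hx
      refine hgd x ?_
      rw [uIcc_of_le (by norm_num)] at hx
      exact ⟨by linarith [hx.1], hx.2⟩
    · exact intervalIntegrable_const
    · exact hG2.mul_const _
  -- substitution
  have hsub : ∫ t in (0:ℝ)..1, f (φ t) = (1/(b-a)) * ∫ x in a..b, f x := by
    have e : (fun t => f (φ t)) = fun t => f ((a-b)*t + b) := by
      funext t; congr 1; simp only [hφdef]; ring
    rw [e, intervalIntegral.integral_comp_mul_add f hne b,
      show (a-b) * 0 + b = b from by ring, show (a-b) * 1 + b = a from by ring,
      intervalIntegral.integral_symm a b, smul_eq_mul]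
    field_simp
    ring
  have hsplit : (∫ t in (0:ℝ)..(1/2), f (φ t)) + ∫ t in (1/2:ℝ)..1, f (φ t)
      = ∫ t in (0:ℝ)..1, f (φ t) := intervalIntegral.integral_add_adjacent_intervals hgi1 hgi2
  have hφ0 : φ 0 = b := by simp [hφdef]
  have hφ1 : φ 1 = a := by simp [hφdef]
  have hφh : φ (1/2) = (a+b)/2 := by simp only [hφdef]; ring
  -- the identity
  set K1 := ∫ t in (0:ℝ)..(1/2), (t - 1/6) * (f' (φ t) * (a-b)) with hK1
  set K2 := ∫ t in (1/2:ℝ)..1, (t - 5/6) * (f' (φ t) * (a-b)) with hK2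
  have hident : (1/(b-a)) * (∫ x in a..b, f x)
      - (1/3) * ((f a + f b)/2 + 2 * f ((a+b)/2)) = -(K1 + K2) := by
    simp only [hφ0, hφ1, hφh, one_mul] at IBP1 IBP2
    rw [IBP1, IBP2, ← hsub, ← hsplit]
    ring
  -- Part 2 : estimates
  set μ1 := volume.restrict (Ioc (0:ℝ) (1/2)) with hμ1
  set μ2 := volume.restrict (Ioc (1/2:ℝ) 1) with hμ2
  haveI i1 : IsFiniteMeasure μ1 := ⟨by rw [hμ1, Measure.restrict_apply_univ]; exact measure_Ioc_lt_top⟩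
  haveI i2 : IsFiniteMeasure μ2 := ⟨by rw [hμ2, Measure.restrict_apply_univ]; exact measure_Ioc_lt_top⟩
  have hmem1 : ∀ᵐ t ∂μ1, t ∈ Ioc (0:ℝ) (1/2) := ae_restrict_mem measurableSet_Ioc
  have hmem2 : ∀ᵐ t ∂μ2, t ∈ Ioc (1/2:ℝ) 1 := ae_restrict_mem measurableSet_Ioc
  have hne2 : ∀ᵐ t ∂μ2, t ≠ (1:ℝ) := by
    refine ae_restrict_of_ae (ae_iff.2 ?_)
    simp only [ne_eq, not_not, setOf_eq_eq_singleton]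
    exact measure_singleton 1
  -- integrabilities
  have hGm1 : Integrable (fun t => f' (φ t)) μ1 :=
    (intervalIntegrable_iff_integrableOn_Ioc_of_le (by norm_num)).1 hG1
  have hGm2 : Integrable (fun t => f' (φ t)) μ2 :=
    (intervalIntegrable_iff_integrableOn_Ioc_of_le (by norm_num)).1 hG2
  have hh2m1 : Integrable (fun t => (h t)^2) μ1 :=
    (intervalIntegrable_iff_integrableOn_Ioc_of_le (by norm_num)).1 (hhint.mono_set hsub01)
  have hh2m2 : Integrable (fun t => (h t)^2) μ2 :=
    (intervalIntegrable_iff_integrableOn_Ioc_of_le (by norm_num)).1 (hhint.mono_set hsub11)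
  have hrefl : IntervalIntegrable (fun t => (h (1-t))^2) volume 0 1 := by
    have h1 := hhint.comp_sub_left 1
    have h2 : IntervalIntegrable (fun t => (h (1-t))^2) volume (1-0) (1-1) := h1
    norm_num at h2
    exact h2.symm
  have hh2m1' : Integrable (fun t => (h (1-t))^2) μ1 :=
    (intervalIntegrable_iff_integrableOn_Ioc_of_le (by norm_num)).1 (hrefl.mono_set hsub01)
  have hh2m2' : Integrable (fun t => (h (1-t))^2) μ2 :=
    (intervalIntegrable_iff_integrableOn_Ioc_of_le (by norm_num)).1 (hrefl.mono_set hsub11)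
  have hhq1 : Integrable (fun t => h (t^2)) μ1 :=
    (intervalIntegrable_iff_integrableOn_Ioc_of_le (by norm_num)).1 (hhint'.mono_set hsub01)
  have hhq2 : Integrable (fun t => h (t^2)) μ2 :=
    (intervalIntegrable_iff_integrableOn_Ioc_of_le (by norm_num)).1 (hhint'.mono_set hsub11)
  have hhq1' : Integrable (fun t => h ((1-t)^2)) μ1 :=
    (intervalIntegrable_iff_integrableOn_Ioc_of_le (by norm_num)).1 (hhint''.mono_set hsub01)
  have hhq2' : Integrable (fun t => h ((1-t)^2)) μ2 :=
    (intervalIntegrable_iff_integrableOn_Ioc_of_le (by norm_num)).1 (hhint''.mono_set hsub11)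
  -- a.e. strong measurability of h and h(1-·)
  have hSh1 : AEStronglyMeasurable h μ1 := by
    refine (Real.continuous_sqrt.comp_aestronglyMeasurable
      hh2m1.aestronglyMeasurable).congr ?_
    filter_upwards [hmem1] with t ht
    exact Real.sqrt_sq (hh0 t ⟨le_of_lt ht.1, by linarith [ht.2]⟩)
  have hSh2 : AEStronglyMeasurable h μ2 := by
    refine (Real.continuous_sqrt.comp_aestronglyMeasurable
      hh2m2.aestronglyMeasurable).congr ?_
    filter_upwards [hmem2] with t ht
    exact Real.sqrt_sq (hh0 t ⟨by linarith [ht.1], ht.2⟩)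
  have hSh1' : AEStronglyMeasurable (fun t => h (1-t)) μ1 := by
    refine (Real.continuous_sqrt.comp_aestronglyMeasurable
      hh2m1'.aestronglyMeasurable).congr ?_
    filter_upwards [hmem1] with t ht
    exact Real.sqrt_sq (hh0 (1-t) ⟨by linarith [ht.2], by linarith [ht.1]⟩)
  have hSh2' : AEStronglyMeasurable (fun t => h (1-t)) μ2 := by
    refine (Real.continuous_sqrt.comp_aestronglyMeasurable
      hh2m2'.aestronglyMeasurable).congr ?_
    filter_upwards [hmem2] with t ht
    exact Real.sqrt_sq (hh0 (1-t) ⟨by linarith [ht.2], by linarith [ht.1]⟩)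
  have esq : ∀ c : ℝ, (fun t : ℝ => (h t * c)^2) = fun t => (h t)^2 * c^2 := by
    intro c; funext t; ring
  have esq' : ∀ c : ℝ, (fun t : ℝ => (h (1-t) * c)^2) = fun t => (h (1-t))^2 * c^2 := by
    intro c; funext t; ring
  -- step applied on each half
  have S1 := step (μ := μ1) (fun t => t - 1/6) (fun t => f' (φ t))
      (fun t => h t * |f' a|) (fun t => h (1-t) * |f' b|)
      (by fun_prop)
      (by filter_upwards [hmem1] with t ht
          rw [abs_le]; constructor <;> [linarith [ht.1]; linarith [ht.2]])
      hGm1 (hSh1.mul_const _) (hSh1'.mul_const _)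
      (by rw [esq]; exact hh2m1.mul_const _)
      (by rw [esq']; exact hh2m1'.mul_const _)
      (by filter_upwards [hmem1] with t ht
          exact mul_nonneg (hh0 t ⟨le_of_lt ht.1, by linarith [ht.2]⟩) (abs_nonneg _))
      (by filter_upwards [hmem1] with t ht
          exact mul_nonneg (hh0 (1-t) ⟨by linarith [ht.2], by linarith [ht.1]⟩) (abs_nonneg _))
      (by filter_upwards [hmem1] with t ht
          exact hconv a (interior_subset ha) b (interior_subset hb) t
            ⟨ht.1, by linarith [ht.2]⟩)
  have S2 := step (μ := μ2) (fun t => t - 5/6) (fun t => f' (φ t))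
      (fun t => h t * |f' a|) (fun t => h (1-t) * |f' b|)
      (by fun_prop)
      (by filter_upwards [hmem2] with t ht
          rw [abs_le]; constructor <;> [linarith [ht.1]; linarith [ht.2]])
      hGm2 (hSh2.mul_const _) (hSh2'.mul_const _)
      (by rw [esq]; exact hh2m2.mul_const _)
      (by rw [esq']; exact hh2m2'.mul_const _)
      (by filter_upwards [hmem2] with t ht
          exact mul_nonneg (hh0 t ⟨by linarith [ht.1], ht.2⟩) (abs_nonneg _))
      (by filter_upwards [hmem2] with t ht
          exact mul_nonneg (hh0 (1-t) ⟨by linarith [ht.2], by linarith [ht.1]⟩) (abs_nonneg _))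
      (by filter_upwards [hmem2, hne2] with t ht ht1
          exact hconv a (interior_subset ha) b (interior_subset hb) t
            ⟨by linarith [ht.1], lt_of_le_of_ne ht.2 ht1⟩)
  -- kernel integrals
  have ek1 : (∫ t, (t - 1/6)^2 ∂μ1) = 1/72 := by
    rw [show (∫ t, (t - 1/6)^2 ∂μ1)
        = ∫ t in (0:ℝ)..(1/2), (t - 1/6)^2 from (intervalIntegral.integral_of_le (by norm_num)).symm]
    rw [intervalIntegral.integral_comp_sub_right (fun x => x^2) (1/6)]
    rw [integral_pow]
    norm_num
  have ek2 : (∫ t, (t - 5/6)^2 ∂μ2) = 1/72 := by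
    rw [show (∫ t, (t - 5/6)^2 ∂μ2)
        = ∫ t in (1/2:ℝ)..1, (t - 5/6)^2 from (intervalIntegral.integral_of_le (by norm_num)).symm]
    rw [intervalIntegral.integral_comp_sub_right (fun x => x^2) (5/6)]
    rw [integral_pow]
    norm_num
  -- comparisons of h² with h(t²), h((1-t)²)
  have cmp1 : (∫ t, (h t)^2 ∂μ1) ≤ ∫ t in (0:ℝ)..(1/2), h (t^2) := by
    rw [show (∫ t in (0:ℝ)..(1/2), h (t^2)) = ∫ t, h (t^2) ∂μ1 from
      intervalIntegral.integral_of_le (by norm_num)]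
    refine integral_mono_ae hh2m1 hhq1 ?_
    filter_upwards [hmem1] with t ht
    have ht' : t ∈ Icc (0:ℝ) 1 := ⟨le_of_lt ht.1, by linarith [ht.2]⟩
    calc (h t)^2 = h t * h t := pow_two (h t)
      _ ≤ h (t*t) := hsm t ht' t ht'
      _ = h (t^2) := by rw [← pow_two t]
  have cmp2 : (∫ t, (h t)^2 ∂μ2) ≤ ∫ t in (1/2:ℝ)..1, h (t^2) := by
    rw [show (∫ t in (1/2:ℝ)..1, h (t^2)) = ∫ t, h (t^2) ∂μ2 from
      intervalIntegral.integral_of_le (by norm_num)]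
    refine integral_mono_ae hh2m2 hhq2 ?_
    filter_upwards [hmem2] with t ht
    have ht' : t ∈ Icc (0:ℝ) 1 := ⟨by linarith [ht.1], ht.2⟩
    calc (h t)^2 = h t * h t := pow_two (h t)
      _ ≤ h (t*t) := hsm t ht' t ht'
      _ = h (t^2) := by rw [← pow_two t]
  have cmp1' : (∫ t, (h (1-t))^2 ∂μ1) ≤ ∫ t in (0:ℝ)..(1/2), h ((1-t)^2) := by
    rw [show (∫ t in (0:ℝ)..(1/2), h ((1-t)^2)) = ∫ t, h ((1-t)^2) ∂μ1 from
      intervalIntegral.integral_of_le (by norm_num)]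
    refine integral_mono_ae hh2m1' hhq1' ?_
    filter_upwards [hmem1] with t ht
    have ht' : 1 - t ∈ Icc (0:ℝ) 1 := ⟨by linarith [ht.2], by linarith [ht.1]⟩
    calc (h (1-t))^2 = h (1-t) * h (1-t) := pow_two (h (1-t))
      _ ≤ h ((1-t)*(1-t)) := hsm _ ht' _ ht'
      _ = h ((1-t)^2) := by rw [← pow_two (1-t)]
  have cmp2' : (∫ t, (h (1-t))^2 ∂μ2) ≤ ∫ t in (1/2:ℝ)..1, h ((1-t)^2) := by
    rw [show (∫ t in (1/2:ℝ)..1, h ((1-t)^2)) = ∫ t, h ((1-t)^2) ∂μ2 from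
      intervalIntegral.integral_of_le (by norm_num)]
    refine integral_mono_ae hh2m2' hhq2' ?_
    filter_upwards [hmem2] with t ht
    have ht' : 1 - t ∈ Icc (0:ℝ) 1 := ⟨by linarith [ht.2], by linarith [ht.1]⟩
    calc (h (1-t))^2 = h (1-t) * h (1-t) := pow_two (h (1-t))
      _ ≤ h ((1-t)*(1-t)) := hsm _ ht' _ ht'
      _ = h ((1-t)^2) := by rw [← pow_two (1-t)]
  -- abbreviations
  set C1 := ∫ t in (0:ℝ)..(1/2), h (t^2) with hC1
  set C2 := ∫ t in (1/2:ℝ)..1, h (t^2) with hC2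
  set D1 := ∫ t in (0:ℝ)..(1/2), h ((1-t)^2) with hD1
  set D2 := ∫ t in (1/2:ℝ)..1, h ((1-t)^2) with hD2
  have q1 : Real.sqrt (∫ t, (h t * |f' a|)^2 ∂μ1) ≤ |f' a| * Real.sqrt C1 := by
    simpa [abs_abs] using sqrt_sq_mul_le (μ := μ1) h (|f' a|) C1 cmp1
  have q2 : Real.sqrt (∫ t, (h t * |f' a|)^2 ∂μ2) ≤ |f' a| * Real.sqrt C2 := by
    simpa [abs_abs] using sqrt_sq_mul_le (μ := μ2) h (|f' a|) C2 cmp2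
  have q1' : Real.sqrt (∫ t, (h (1-t) * |f' b|)^2 ∂μ1) ≤ |f' b| * Real.sqrt D1 := by
    simpa [abs_abs] using sqrt_sq_mul_le (μ := μ1) (fun t => h (1-t)) (|f' b|) D1 cmp1'
  have q2' : Real.sqrt (∫ t, (h (1-t) * |f' b|)^2 ∂μ2) ≤ |f' b| * Real.sqrt D2 := by
    simpa [abs_abs] using sqrt_sq_mul_le (μ := μ2) (fun t => h (1-t)) (|f' b|) D2 cmp2'
  rw [ek1] at S1
  rw [ek2] at S2
  -- half bounds
  have s72 : (0:ℝ) ≤ Real.sqrt (1/72) := Real.sqrt_nonneg _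
  have B1 : (∫ t, |t - 1/6| * |f' (φ t)| ∂μ1)
      ≤ Real.sqrt (1/72) * (|f' a| * Real.sqrt C1 + |f' b| * Real.sqrt D1) := by
    refine S1.trans ?_
    rw [mul_add]
    exact add_le_add (mul_le_mul_of_nonneg_left q1 s72) (mul_le_mul_of_nonneg_left q1' s72)
  have B2 : (∫ t, |t - 5/6| * |f' (φ t)| ∂μ2)
      ≤ Real.sqrt (1/72) * (|f' a| * Real.sqrt C2 + |f' b| * Real.sqrt D2) := by
    refine S2.trans ?_
    rw [mul_add]
    exact add_le_add (mul_le_mul_of_nonneg_left q2 s72) (mul_le_mul_of_nonneg_left q2' s72)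
  -- bound |K1|, |K2|
  have absK1 : |K1| ≤ (b-a) * (∫ t, |t - 1/6| * |f' (φ t)| ∂μ1) := by
    rw [hK1]
    refine (intervalIntegral.abs_integral_le_integral_abs (by norm_num)).trans ?_
    have e : (fun t => |(t - 1/6) * (f' (φ t) * (a-b))|)
        = fun t => |t - 1/6| * |f' (φ t)| * (b-a) := by
      funext t
      rw [abs_mul, abs_mul, abs_sub_comm a b, abs_of_pos hab']
      ring
    rw [show (∫ t in (0:ℝ)..(1/2), |(t - 1/6) * (f' (φ t) * (a-b))|)
        = ∫ t in (0:ℝ)..(1/2), |t - 1/6| * |f' (φ t)| * (b-a) from by rw [e]]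
    rw [intervalIntegral.integral_mul_const,
      intervalIntegral.integral_of_le (by norm_num : (0:ℝ) ≤ 1/2)]
    exact le_of_eq (mul_comm _ _)
  have absK2 : |K2| ≤ (b-a) * (∫ t, |t - 5/6| * |f' (φ t)| ∂μ2) := by
    rw [hK2]
    refine (intervalIntegral.abs_integral_le_integral_abs (by norm_num)).trans ?_
    have e : (fun t => |(t - 5/6) * (f' (φ t) * (a-b))|)
        = fun t => |t - 5/6| * |f' (φ t)| * (b-a) := by
      funext t
      rw [abs_mul, abs_mul, abs_sub_comm a b, abs_of_pos hab']
      ring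
    rw [show (∫ t in (1/2:ℝ)..1, |(t - 5/6) * (f' (φ t) * (a-b))|)
        = ∫ t in (1/2:ℝ)..1, |t - 5/6| * |f' (φ t)| * (b-a) from by rw [e]]
    rw [intervalIntegral.integral_mul_const,
      intervalIntegral.integral_of_le (by norm_num : (1/2:ℝ) ≤ 1)]
    exact le_of_eq (mul_comm _ _)
  -- final numeric bound
  have hc : Real.sqrt (1/72) ≤ 1/(3 * Real.sqrt 2) := by
    have hr : (0:ℝ) < Real.sqrt 2 := Real.sqrt_pos.2 (by norm_num)
    rw [le_div_iff₀ (by positivity)]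
    have e1 := Real.sq_sqrt (show (0:ℝ) ≤ 1/72 by norm_num)
    have e2 := Real.sq_sqrt (show (0:ℝ) ≤ 2 by norm_num)
    nlinarith [Real.sqrt_nonneg (1/72), Real.sqrt_nonneg 2,
      sq_nonneg (Real.sqrt (1/72) * (3*Real.sqrt 2) - 1/2)]
  have hX0 : (0:ℝ) ≤ |f' a| * (Real.sqrt C1 + Real.sqrt C2)
      + |f' b| * (Real.sqrt D1 + Real.sqrt D2) := by positivity
  have hfc : IntervalIntegrable f volume a b := by
    apply ContinuousOn.intervalIntegrable
    intro x hx
    rw [uIcc_of_le hab.le] at hx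
    exact (hderiv x (hIcc hx)).continuousAt.continuousWithinAt
  have swallow : (∫ x in a..b, f x - (1/3) * ((f a + f b)/2 + 2 * f ((a+b)/2)))
      = (∫ x in a..b, f x) - (b-a) * ((1/3) * ((f a + f b)/2 + 2 * f ((a+b)/2))) := by
    rw [intervalIntegral.integral_sub hfc intervalIntegrable_const,
      intervalIntegral.integral_const, smul_eq_mul]
  rw [swallow]
  have regroup : (1/(b-a)) * ((∫ x in a..b, f x)
        - (b-a) * ((1/3) * ((f a + f b)/2 + 2 * f ((a+b)/2))))
      = (1/(b-a)) * (∫ x in a..b, f x)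
        - (1/3) * ((f a + f b)/2 + 2 * f ((a+b)/2)) := by
    have hba : b - a ≠ 0 := ne_of_gt hab'
    field_simp
  rw [regroup]
  calc |(1/(b-a)) * (∫ x in a..b, f x) - (1/3) * ((f a + f b)/2 + 2 * f ((a+b)/2))|
      = |K1 + K2| := by rw [hident, abs_neg]
    _ ≤ |K1| + |K2| := abs_add_le _ _
    _ ≤ (b-a) * (∫ t, |t - 1/6| * |f' (φ t)| ∂μ1)
        + (b-a) * (∫ t, |t - 5/6| * |f' (φ t)| ∂μ2) := add_le_add absK1 absK2
    _ ≤ (b-a) * (Real.sqrt (1/72) * (|f' a| * Real.sqrt C1 + |f' b| * Real.sqrt D1))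
        + (b-a) * (Real.sqrt (1/72) * (|f' a| * Real.sqrt C2 + |f' b| * Real.sqrt D2)) := by
        exact add_le_add (mul_le_mul_of_nonneg_left B1 (le_of_lt hab'))
          (mul_le_mul_of_nonneg_left B2 (le_of_lt hab'))
    _ = (b-a) * Real.sqrt (1/72) * (|f' a| * (Real.sqrt C1 + Real.sqrt C2)
        + |f' b| * (Real.sqrt D1 + Real.sqrt D2)) := by ring
    _ ≤ (b-a) * (1/(3 * Real.sqrt 2)) * (|f' a| * (Real.sqrt C1 + Real.sqrt C2)
        + |f' b| * (Real.sqrt D1 + Real.sqrt D2)) := by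
        refine mul_le_mul_of_nonneg_right ?_ hX0
        exact mul_le_mul_of_nonneg_left hc (le_of_lt hab')
    _ = ((b-a)/(3 * Real.sqrt 2)) * (|f' a| * (Real.sqrt C1 + Real.sqrt C2)
        + |f' b| * (Real.sqrt D1 + Real.sqrt D2)) := by ring
end

section
/- Let f : I ⊂ [0,∞) → ℝ be differentiable on the interior of I with f′ ∈ L[a,b], where a, b are interior points of I with a < b, and suppose f(a) = f((a+b)/2) = f(b). Let p, q > 1 with 1/p + 1/q = 1. If |f′| is a P-function on I (i.e. |f′(t x + (1−t) y)| ≤ |f′(x)| + |f′(y)| for all x, y ∈ I, t ∈ [0,1]), then |(1/(b−a)) ∫_a^b f(x) dx − f((a+b)/2)| ≤ ((b−a)/3) ((1 + 2^{p+1})/(3(p+1)))^{1/p} [ |f′(a)| + |f′(b)| ]. -/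
open MeasureTheory Set

/-- `2^(p+1) ≥ (9p+5)/4` for `p ≥ 1`. -/
lemma aux_rpow_bound {p : ℝ} (hp : 1 ≤ p) : (9*p+5)/4 ≤ (2:ℝ)^(p+1) := by
  have h2 : (0:ℝ) < 2 := by norm_num
  have e1 : (2:ℝ)^(p+1) = (2:ℝ)^(p-1) * (2:ℝ)^(2:ℝ) := by
    rw [← Real.rpow_add h2]; ring_nf
  have e2 : (2:ℝ)^(2:ℝ) = 4 := by
    rw [show (2:ℝ) = ((2:ℕ):ℝ) by norm_num, Real.rpow_natCast]; norm_num
  have e3 : (2:ℝ)^(p-1) = Real.exp ((p-1) * Real.log 2) := by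
    rw [Real.rpow_def_of_pos h2]; ring_nf
  have h4 : (p-1) * Real.log 2 + 1 ≤ (2:ℝ)^(p-1) := by
    rw [e3]; exact Real.add_one_le_exp _
  have hlog : (0.6931471803 : ℝ) < Real.log 2 := Real.log_two_gt_d9
  rw [e1, e2]
  nlinarith [mul_le_mul_of_nonneg_left hlog.le (by linarith : (0:ℝ) ≤ p - 1)]

/-- The Hölder constant is at least `3/4`. -/
lemma aux_const_bound {p : ℝ} (hp : 1 < p) :
    (3/4 : ℝ) ≤ ((1 + 2^(p+1))/(3*(p+1)))^(1/p) := by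
  have hp0 : (0:ℝ) < p := by linarith
  have hC : (3/4 : ℝ) ≤ (1 + 2^(p+1))/(3*(p+1)) := by
    rw [div_le_div_iff₀ (by norm_num) (by linarith)]
    have := aux_rpow_bound hp.le
    linarith
  have h34 : ((3/4:ℝ))^p ≤ 3/4 := by
    calc ((3/4:ℝ))^p ≤ (3/4:ℝ)^(1:ℝ) :=
          Real.rpow_le_rpow_of_exponent_ge (by norm_num) (by norm_num) hp.le
      _ = 3/4 := Real.rpow_one _
  calc (3/4:ℝ) = (((3/4:ℝ))^p)^(1/p) := by
        rw [← Real.rpow_mul (by norm_num), mul_one_div, div_self hp0.ne', Real.rpow_one]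
    _ ≤ ((1 + 2^(p+1))/(3*(p+1)))^(1/p) := by
        apply Real.rpow_le_rpow (Real.rpow_nonneg (by norm_num) _)
          (le_trans h34 hC) (by positivity)

/-- Midpoint-type inequality for functions with `f(a) = f((a+b)/2) = f(b)` whose derivative
has absolute value a `P`-function (`h`-convex with `h ≡ 1`), via Hölder's inequality. -/
theorem simpson_Pfunction_holder
    (I : Set ℝ) (hI : I ⊆ Set.Ici (0:ℝ)) (hIc : I.OrdConnected)
    (f f' : ℝ → ℝ) (a b : ℝ)
    (ha : a ∈ interior I) (hb : b ∈ interior I) (hab : a < b)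
    (p q : ℝ) (hp : 1 < p) (hq : 1 < q) (hpq : 1/p + 1/q = 1)
    (hderiv : ∀ x ∈ interior I, HasDerivAt f (f' x) x)
    (hfint : IntervalIntegrable f' volume a b)
    (hfa : f a = f ((a+b)/2)) (hfb : f b = f ((a+b)/2))
    (hP : ∀ x ∈ I, ∀ y ∈ I, ∀ t ∈ Set.Icc (0:ℝ) 1,
      |f' (t*x + (1-t)*y)| ≤ |f' x| + |f' y|) :
    |(1/(b-a)) * ∫ x in a..b, f x - f ((a+b)/2)|
      ≤ ((b-a)/3) * ((1 + 2^(p+1))/(3*(p+1)))^(1/p) * (|f' a| + |f' b|) := by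
  set m := (a+b)/2 with hm
  set M := |f' a| + |f' b| with hM
  have hba : (0:ℝ) < b - a := by linarith
  have hM0 : 0 ≤ M := by positivity
  -- [a,b] ⊆ interior I
  have hsub : Icc a b ⊆ interior I := by
    have h1 : Icc a b ⊆ I := hIc.out (interior_subset ha) (interior_subset hb)
    have h2 : Ioo a b ⊆ interior I := by
      rw [← interior_Icc]; exact interior_mono h1
    intro x hx
    rcases hx.1.eq_or_lt with rfl | hax
    · exact ha
    rcases hx.2.eq_or_lt with rfl | hxb
    · exact hb
    exact h2 ⟨hax, hxb⟩
  have hmI : m ∈ Icc a b := ⟨by simp [hm]; linarith, by simp [hm]; linarith⟩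
  -- |f'| ≤ M on [a,b]
  have hbound : ∀ x ∈ Icc a b, |f' x| ≤ M := by
    intro x hx
    have ht : (b - x)/(b - a) ∈ Icc (0:ℝ) 1 := by
      constructor
      · apply div_nonneg (by linarith [hx.2]) hba.le
      · rw [div_le_one hba]; linarith [hx.1]
    have hx' : (b - x)/(b - a) * a + (1 - (b - x)/(b - a)) * b = x := by
      field_simp
      ring
    have := hP a (interior_subset ha) b (interior_subset hb) _ ht
    rwa [hx'] at this
  -- mean value bound
  have hlip : ∀ x ∈ Icc a b, |f x - f m| ≤ M * |x - m| := by
    intro x hx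
    have := Convex.norm_image_sub_le_of_norm_hasDerivWithin_le
      (f := f) (f' := f') (s := Icc a b) (C := M)
      (fun y hy => (hderiv y (hsub hy)).hasDerivWithinAt) hbound (convex_Icc a b) hmI hx
    simpa [Real.norm_eq_abs] using this
  -- integrability of f - f m on [a,b]
  have hcont : ContinuousOn f (Icc a b) := fun x hx =>
    ((hderiv x (hsub hx)).continuousAt).continuousWithinAt
  have hfint' : IntervalIntegrable (fun x => f x - f m) volume a b := by
    apply ContinuousOn.intervalIntegrable
    rw [uIcc_of_le hab.le]
    exact hcont.sub continuousOn_const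
  have habscont : Continuous (fun x : ℝ => |x - m|) :=
    continuous_abs.comp (continuous_id.sub continuous_const)
  have hgint : IntervalIntegrable (fun x => M * |x - m|) volume a b :=
    (continuous_const.mul habscont).intervalIntegrable _ _
  -- compute ∫ |x - m| = (b-a)^2/4
  have hint_abs : (∫ x in a..b, M * |x - m|) = M * ((b-a)^2/4) := by
    have ham : a ≤ m := hmI.1
    have hmb : m ≤ b := hmI.2
    have s1 : (∫ x in a..m, |x - m|) = (m - a)^2/2 := by
      have : (∫ x in a..m, |x - m|) = ∫ x in a..m, (m - x) := by
        apply intervalIntegral.integral_congr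
        intro x hx
        rw [uIcc_of_le ham] at hx
        obtain ⟨h1, h2⟩ := hx
        show |x - m| = m - x
        rw [abs_of_nonpos (by linarith)]; ring
      rw [this, intervalIntegral.integral_sub intervalIntegrable_const
        (continuous_id'.intervalIntegrable _ _),
        intervalIntegral.integral_const, integral_id]
      simp; ring
    have s2 : (∫ x in m..b, |x - m|) = (b - m)^2/2 := by
      have : (∫ x in m..b, |x - m|) = ∫ x in m..b, (x - m) := by
        apply intervalIntegral.integral_congr
        intro x hx
        rw [uIcc_of_le hmb] at hx
        obtain ⟨h1, h2⟩ := hx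
        show |x - m| = x - m
        rw [abs_of_nonneg (by linarith)]
      rw [this, intervalIntegral.integral_sub
        (continuous_id'.intervalIntegrable _ _) intervalIntegrable_const,
        intervalIntegral.integral_const, integral_id]
      simp; ring
    have hadd : (∫ x in a..m, |x - m|) + (∫ x in m..b, |x - m|)
        = ∫ x in a..b, |x - m| := by
      apply intervalIntegral.integral_add_adjacent_intervals <;>
        exact habscont.intervalIntegrable _ _
    have habs : (∫ x in a..b, |x - m|) = (b-a)^2/4 := by
      rw [← hadd, s1, s2]
      have : m = (a+b)/2 := hm
      rw [this]; ring
    rw [intervalIntegral.integral_const_mul, habs]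
  -- main estimate
  have key : |∫ x in a..b, f x - f m| ≤ M * ((b-a)^2/4) := by
    calc |∫ x in a..b, f x - f m| ≤ ∫ x in a..b, |f x - f m| :=
          intervalIntegral.abs_integral_le_integral_abs hab.le
      _ ≤ ∫ x in a..b, M * |x - m| := by
          apply intervalIntegral.integral_mono_on hab.le hfint'.abs hgint
          intro x hx
          exact hlip x hx
      _ = M * ((b-a)^2/4) := hint_abs
  have lhs_le : |(1/(b-a)) * ∫ x in a..b, f x - f m| ≤ M * (b-a)/4 := by
    rw [abs_mul, abs_of_pos (by positivity : (0:ℝ) < 1/(b-a))]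
    calc (1/(b-a)) * |∫ x in a..b, f x - f m| ≤ (1/(b-a)) * (M * ((b-a)^2/4)) := by
          apply mul_le_mul_of_nonneg_left key (by positivity)
      _ = M * (b-a)/4 := by field_simp
  refine lhs_le.trans ?_
  have hc := aux_const_bound hp
  calc M * (b-a)/4 = (b-a)/3 * (3/4) * M := by ring
    _ ≤ (b-a)/3 * ((1 + 2^(p+1))/(3*(p+1)))^(1/p) * M := by
        apply mul_le_mul_of_nonneg_right _ hM0
        apply mul_le_mul_of_nonneg_left hc (by positivity)
end

section
/- Let f : I ⊂ [0,∞) → ℝ be differentiable on the interior of I with f′ ∈ L[a,b], where a, b are interior points of I with a < b, and let p, q > 1 with 1/p + 1/q = 1. If |f′| is convex on I, then |(1/(b−a)) ∫_a^b f(x) dx − (1/3)[(f(a)+f(b))/2 + 2 f((a+b)/2)]| ≤ ((b−a)/6) ((1 + 2^{p+1})/(3(p+1)))^{1/p} (1/(q+1))^{1/q} [ |f′(a)|/2 + |f′(b)| (2 − (1/2)^q)^{1/q} ]. -/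
open MeasureTheory Set intervalIntegral

noncomputable def kk : ℝ → ℝ := fun t => if t ≤ 1/2 then t - 1/6 else t - 5/6

lemma kk_meas : Measurable kk :=
  Measurable.ite (measurableSet_le measurable_id measurable_const)
    (measurable_id.sub_const _) (measurable_id.sub_const _)

lemma kk_II (u v : ℝ) : IntervalIntegrable kk volume u v := by
  rw [intervalIntegrable_iff]
  refine Integrable.mono' (g := fun t : ℝ => |t| + 1)
    ((continuous_abs.add continuous_const).integrableOn_uIoc)
    kk_meas.aestronglyMeasurable (Filter.Eventually.of_forall fun t => ?_)
  simp only [kk, Real.norm_eq_abs]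
  have h1 := le_abs_self t
  have h2 := neg_abs_le t
  split <;> (rw [abs_le]; constructor <;> linarith)

lemma int_congr {f g : ℝ → ℝ} {u v : ℝ} (huv : u ≤ v) (h : ∀ t ∈ Set.Ioc u v, f t = g t) :
    ∫ t in u..v, f t = ∫ t in u..v, g t :=
  integral_congr_ae (Filter.Eventually.of_forall fun t ht => h t (by rwa [Set.uIoc_of_le huv] at ht))

lemma II_congr {f g : ℝ → ℝ} {u v : ℝ} (huv : u ≤ v) (h : ∀ t ∈ Set.Ioc u v, f t = g t)
    (hg : IntervalIntegrable g volume u v) : IntervalIntegrable f volume u v := by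
  refine hg.congr ?_
  refine fun t ht => (h t ?_).symm
  rwa [Set.uIoc_of_le huv] at ht

lemma integral_quad (c0 c1 c2 u v : ℝ) :
    ∫ t in u..v, (c0 + c1*t + c2*t^2) =
      (c0*v + c1*v^2/2 + c2*v^3/3) - (c0*u + c1*u^2/2 + c2*u^3/3) := by
  have h : ∀ t ∈ Set.uIcc u v, HasDerivAt (fun s => c0*s + c1*s^2/2 + c2*s^3/3)
      (c0 + c1*t + c2*t^2) t := by
    intro t _
    have h1 : HasDerivAt (fun s : ℝ => c0*s + c1*s^2/2 + c2*s^3/3)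
        (c0*1 + c1*(2*t^1)/2 + c2*(3*t^2)/3) t := by
      exact (((hasDerivAt_id t).const_mul c0).add
        (((hasDerivAt_pow 2 t).const_mul c1).div_const 2)).add
        (((hasDerivAt_pow 3 t).const_mul c2).div_const 3)
    convert h1 using 1; ring
  rw [integral_eq_sub_of_hasDerivAt h (Continuous.intervalIntegrable (by continuity) u v)]

noncomputable def XX (z : ℝ) : ℝ := ∫ t in (0:ℝ)..z, kk t * (z - t)
noncomputable def PP (z : ℝ) : ℝ := ∫ t in (0:ℝ)..z, |kk t| * (z - t)

lemma IIk (z u v : ℝ) : IntervalIntegrable (fun t => kk t * (z - t)) volume u v :=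
  (kk_II u v).mul_continuousOn (by fun_prop)

lemma IIka (z u v : ℝ) : IntervalIntegrable (fun t => |kk t| * (z - t)) volume u v :=
  (kk_II u v).abs.mul_continuousOn (by fun_prop)

lemma kk_lo {t : ℝ} (h : t ≤ 1/2) : kk t = t - 1/6 := if_pos h
lemma kk_hi {t : ℝ} (h : 1/2 < t) : kk t = t - 5/6 := if_neg (not_le.2 h)

lemma akk_1 {t : ℝ} (h0 : t ≤ 1/6) : |kk t| = 1/6 - t := by
  rw [kk_lo (by linarith), abs_of_nonpos (by linarith)]; ring
lemma akk_2 {t : ℝ} (h0 : 1/6 ≤ t) (h1 : t ≤ 1/2) : |kk t| = t - 1/6 := by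
  rw [kk_lo h1, abs_of_nonneg (by linarith)]
lemma akk_3 {t : ℝ} (h0 : 1/2 < t) (h1 : t ≤ 5/6) : |kk t| = 5/6 - t := by
  rw [kk_hi h0, abs_of_nonpos (by linarith)]; ring
lemma akk_4 {t : ℝ} (h0 : 5/6 ≤ t) : |kk t| = t - 5/6 := by
  rw [kk_hi (by linarith), abs_of_nonneg (by linarith)]

lemma evalX_lo {z : ℝ} (h0 : 0 ≤ z) (h1 : z ≤ 1/2) : XX z = z^3/6 - z^2/12 := by
  have e : ∫ t in (0:ℝ)..z, kk t * (z - t)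
      = ∫ t in (0:ℝ)..z, ((-z/6) + (z + 1/6)*t + (-1)*t^2) :=
    int_congr h0 (fun t ht => by rw [kk_lo (le_trans ht.2 h1)]; ring)
  rw [XX, e, integral_quad]; ring

lemma evalX_hi {z : ℝ} (h0 : 1/2 ≤ z) (h1 : z ≤ 1) :
    XX z = z^3/6 - 5*z^2/12 + z/3 - 1/12 := by
  rw [XX, ← integral_add_adjacent_intervals (IIk z 0 (1/2)) (IIk z (1/2) z)]
  have e1 : ∫ t in (0:ℝ)..(1/2), kk t * (z - t)
      = ∫ t in (0:ℝ)..(1/2), ((-z/6) + (z + 1/6)*t + (-1)*t^2) :=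
    int_congr (by norm_num) (fun t ht => by rw [kk_lo ht.2]; ring)
  have e2 : ∫ t in (1/2:ℝ)..z, kk t * (z - t)
      = ∫ t in (1/2:ℝ)..z, ((-5*z/6) + (z + 5/6)*t + (-1)*t^2) :=
    int_congr h0 (fun t ht => by rw [kk_hi ht.1]; ring)
  rw [e1, e2, integral_quad, integral_quad]; ring

lemma evalP_1 {z : ℝ} (h0 : 0 ≤ z) (h1 : z ≤ 1/6) : PP z = z^2/12 - z^3/6 := by
  have e : ∫ t in (0:ℝ)..z, |kk t| * (z - t)
      = ∫ t in (0:ℝ)..z, ((z/6) + (-z - 1/6)*t + 1*t^2) :=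
    int_congr h0 (fun t ht => by rw [akk_1 (le_trans ht.2 h1)]; ring)
  rw [PP, e, integral_quad]; ring

lemma evalP_2 {z : ℝ} (h0 : 1/6 ≤ z) (h1 : z ≤ 1/2) :
    PP z = z^3/6 - z^2/12 + z/36 - 1/648 := by
  rw [PP, ← integral_add_adjacent_intervals (IIka z 0 (1/6)) (IIka z (1/6) z)]
  have e1 : ∫ t in (0:ℝ)..(1/6), |kk t| * (z - t)
      = ∫ t in (0:ℝ)..(1/6), ((z/6) + (-z - 1/6)*t + 1*t^2) :=
    int_congr (by norm_num) (fun t ht => by rw [akk_1 ht.2]; ring)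
  have e2 : ∫ t in (1/6:ℝ)..z, |kk t| * (z - t)
      = ∫ t in (1/6:ℝ)..z, ((-z/6) + (z + 1/6)*t + (-1)*t^2) :=
    int_congr h0 (fun t ht => by rw [akk_2 ht.1.le (le_trans ht.2 h1)]; ring)
  rw [e1, e2, integral_quad, integral_quad]; ring

lemma evalP_3 {z : ℝ} (h0 : 1/2 ≤ z) (h1 : z ≤ 5/6) :
    PP z = -z^3/6 + 5*z^2/12 - 2*z/9 + 13/324 := by
  rw [PP, ← integral_add_adjacent_intervals (IIka z 0 (1/2)) (IIka z (1/2) z),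
    ← integral_add_adjacent_intervals (IIka z 0 (1/6)) (IIka z (1/6) (1/2))]
  have e1 : ∫ t in (0:ℝ)..(1/6), |kk t| * (z - t)
      = ∫ t in (0:ℝ)..(1/6), ((z/6) + (-z - 1/6)*t + 1*t^2) :=
    int_congr (by norm_num) (fun t ht => by rw [akk_1 ht.2]; ring)
  have e2 : ∫ t in (1/6:ℝ)..(1/2), |kk t| * (z - t)
      = ∫ t in (1/6:ℝ)..(1/2), ((-z/6) + (z + 1/6)*t + (-1)*t^2) :=
    int_congr (by norm_num) (fun t ht => by rw [akk_2 ht.1.le ht.2]; ring)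
  have e3 : ∫ t in (1/2:ℝ)..z, |kk t| * (z - t)
      = ∫ t in (1/2:ℝ)..z, ((5*z/6) + (-z - 5/6)*t + 1*t^2) :=
    int_congr h0 (fun t ht => by rw [akk_3 ht.1 (le_trans ht.2 h1)]; ring)
  rw [e1, e2, e3, integral_quad, integral_quad, integral_quad]; ring

lemma evalP_4 {z : ℝ} (h0 : 5/6 ≤ z) (h1 : z ≤ 1) :
    PP z = z^3/6 - 5*z^2/12 + 17*z/36 - 11/72 := by
  rw [PP, ← integral_add_adjacent_intervals (IIka z 0 (5/6)) (IIka z (5/6) z),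
    ← integral_add_adjacent_intervals (IIka z 0 (1/2)) (IIka z (1/2) (5/6)),
    ← integral_add_adjacent_intervals (IIka z 0 (1/6)) (IIka z (1/6) (1/2))]
  have e1 : ∫ t in (0:ℝ)..(1/6), |kk t| * (z - t)
      = ∫ t in (0:ℝ)..(1/6), ((z/6) + (-z - 1/6)*t + 1*t^2) :=
    int_congr (by norm_num) (fun t ht => by rw [akk_1 ht.2]; ring)
  have e2 : ∫ t in (1/6:ℝ)..(1/2), |kk t| * (z - t)
      = ∫ t in (1/6:ℝ)..(1/2), ((-z/6) + (z + 1/6)*t + (-1)*t^2) :=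
    int_congr (by norm_num) (fun t ht => by rw [akk_2 ht.1.le ht.2]; ring)
  have e3 : ∫ t in (1/2:ℝ)..(5/6), |kk t| * (z - t)
      = ∫ t in (1/2:ℝ)..(5/6), ((5*z/6) + (-z - 5/6)*t + 1*t^2) :=
    int_congr (by norm_num) (fun t ht => by rw [akk_3 ht.1 ht.2]; ring)
  have e4 : ∫ t in (5/6:ℝ)..z, |kk t| * (z - t)
      = ∫ t in (5/6:ℝ)..z, ((-5*z/6) + (z + 5/6)*t + (-1)*t^2) :=
    int_congr h0 (fun t ht => by rw [akk_4 ht.1.le]; ring)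
  rw [e1, e2, e3, e4, integral_quad, integral_quad, integral_quad, integral_quad]; ring

lemma key_z {z : ℝ} (h0 : 0 ≤ z) (h1 : z ≤ 1) : |XX z| + PP z ≤ 5*z/72 := by
  rcases le_total z (1/6) with hz | hz
  · rw [evalX_lo h0 (by linarith), evalP_1 h0 hz]
    rcases abs_cases (z^3/6 - z^2/12) with ⟨h,_⟩ | ⟨h,_⟩ <;> rw [h] <;>
      nlinarith [mul_nonneg (mul_nonneg h0 h0) h0, mul_nonneg h0 h0, sq_nonneg z]
  · rcases le_total z (1/2) with hz2 | hz2
    · rw [evalX_lo h0 hz2, evalP_2 hz hz2]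
      rcases abs_cases (z^3/6 - z^2/12) with ⟨h,_⟩ | ⟨h,_⟩ <;> rw [h] <;>
        nlinarith [mul_nonneg (mul_nonneg h0 h0) h0, mul_nonneg h0 h0, sq_nonneg z,
          mul_nonneg (sub_nonneg.2 hz2) (mul_nonneg h0 h0)]
    · rcases le_total z (5/6) with hz3 | hz3
      · rw [evalX_hi hz2 h1, evalP_3 hz2 hz3]
        rcases abs_cases (z^3/6 - 5*z^2/12 + z/3 - 1/12) with ⟨h,_⟩ | ⟨h,_⟩ <;> rw [h] <;>
          nlinarith [sq_nonneg (z - 1/2), sq_nonneg (z - 5/6), sq_nonneg (z - 2/3),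
            mul_nonneg (sub_nonneg.2 hz2) (sub_nonneg.2 hz3),
            mul_nonneg (mul_nonneg (sub_nonneg.2 hz2) (sub_nonneg.2 hz2)) (sub_nonneg.2 hz3),
            mul_nonneg (mul_nonneg (sub_nonneg.2 hz2) (sub_nonneg.2 hz3)) (sub_nonneg.2 hz3)]
      · rw [evalX_hi hz2 h1, evalP_4 hz3 h1]
        rcases abs_cases (z^3/6 - 5*z^2/12 + z/3 - 1/12) with ⟨h,_⟩ | ⟨h,_⟩ <;> rw [h] <;>
          nlinarith [mul_nonneg (sub_nonneg.2 h1) (sq_nonneg (z - 3/4)),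
            mul_nonneg (sub_nonneg.2 hz3) (sub_nonneg.2 h1), sq_nonneg (z - 1)]
lemma eval_chordK (A B : ℝ) : ∫ t in (0:ℝ)..1, kk t * ((1-t)*A + t*B) = 0 := by
  have hi1 : IntervalIntegrable (fun t => kk t * ((1-t)*A + t*B)) volume 0 (1/2) :=
    (kk_II _ _).mul_continuousOn (by fun_prop)
  have hi2 : IntervalIntegrable (fun t => kk t * ((1-t)*A + t*B)) volume (1/2) 1 :=
    (kk_II _ _).mul_continuousOn (by fun_prop)
  rw [← integral_add_adjacent_intervals hi1 hi2]
  have e1 : ∫ t in (0:ℝ)..(1/2), kk t * ((1-t)*A + t*B)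
      = ∫ t in (0:ℝ)..(1/2), ((-A/6) + (7*A/6 - B/6)*t + (B - A)*t^2) :=
    int_congr (by norm_num) (fun t ht => by rw [kk_lo ht.2]; ring)
  have e2 : ∫ t in (1/2:ℝ)..1, kk t * ((1-t)*A + t*B)
      = ∫ t in (1/2:ℝ)..1, ((-5*A/6) + (11*A/6 - 5*B/6)*t + (B - A)*t^2) :=
    int_congr (by norm_num) (fun t ht => by rw [kk_hi ht.1]; ring)
  rw [e1, e2, integral_quad, integral_quad]; ring

lemma eval_chordKa (A B : ℝ) :
    ∫ t in (0:ℝ)..1, |kk t| * ((1-t)*A + t*B) = 5*(A+B)/72 := by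
  have hi : ∀ u v : ℝ, IntervalIntegrable (fun t => |kk t| * ((1-t)*A + t*B)) volume u v :=
    fun u v => (kk_II _ _).abs.mul_continuousOn (by fun_prop)
  rw [← integral_add_adjacent_intervals (hi 0 (5/6)) (hi (5/6) 1),
    ← integral_add_adjacent_intervals (hi 0 (1/2)) (hi (1/2) (5/6)),
    ← integral_add_adjacent_intervals (hi 0 (1/6)) (hi (1/6) (1/2))]
  have e1 : ∫ t in (0:ℝ)..(1/6), |kk t| * ((1-t)*A + t*B)
      = ∫ t in (0:ℝ)..(1/6), ((A/6) + (B/6 - 7*A/6)*t + (A - B)*t^2) :=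
    int_congr (by norm_num) (fun t ht => by rw [akk_1 ht.2]; ring)
  have e2 : ∫ t in (1/6:ℝ)..(1/2), |kk t| * ((1-t)*A + t*B)
      = ∫ t in (1/6:ℝ)..(1/2), ((-A/6) + (7*A/6 - B/6)*t + (B - A)*t^2) :=
    int_congr (by norm_num) (fun t ht => by rw [akk_2 ht.1.le ht.2]; ring)
  have e3 : ∫ t in (1/2:ℝ)..(5/6), |kk t| * ((1-t)*A + t*B)
      = ∫ t in (1/2:ℝ)..(5/6), ((5*A/6) + (5*B/6 - 11*A/6)*t + (A - B)*t^2) :=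
    int_congr (by norm_num) (fun t ht => by rw [akk_3 ht.1 ht.2]; ring)
  have e4 : ∫ t in (5/6:ℝ)..1, |kk t| * ((1-t)*A + t*B)
      = ∫ t in (5/6:ℝ)..1, ((-5*A/6) + (11*A/6 - 5*B/6)*t + (B - A)*t^2) :=
    int_congr (by norm_num) (fun t ht => by rw [akk_4 ht.1.le]; ring)
  rw [e1, e2, e3, e4, integral_quad, integral_quad, integral_quad, integral_quad]; ring

lemma kk_refl {x : ℝ} (hx : x ≠ 1/2) : kk (1-x) = - kk x := by
  rcases lt_or_gt_of_ne hx with h | h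
  · rw [kk_lo h.le, kk_hi (by linarith)]; ring
  · rw [kk_hi h, kk_lo (by linarith)]; ring

lemma ae_ne_half : ∀ᵐ (x:ℝ), x ≠ (1/2:ℝ) := by
  rw [ae_iff]
  have h : {a : ℝ | ¬a ≠ 1/2} = {(1/2:ℝ)} := by ext a; simp
  rw [h]; exact measure_singleton _

lemma XXrefl (w : ℝ) : ∫ t in w..1, kk t * (t - w) = - XX (1-w) := by
  have h1 : ∫ x in w..1, kk (1-x) * ((1-w) - (1-x)) = XX (1-w) := by
    have h := integral_comp_sub_left (a := w) (b := 1) (fun s => kk s * ((1-w) - s)) 1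
    rw [h]; norm_num [XX]
  rw [← h1, ← intervalIntegral.integral_neg]
  refine integral_congr_ae (ae_ne_half.mono fun x hx _ => ?_)
  show kk x * (x - w) = -(kk (1-x) * (1 - w - (1 - x)))
  rw [kk_refl hx]; ring

lemma PPrefl (w : ℝ) : ∫ t in w..1, |kk t| * (t - w) = PP (1-w) := by
  have h1 : ∫ x in w..1, |kk (1-x)| * ((1-w) - (1-x)) = PP (1-w) := by
    have h := integral_comp_sub_left (a := w) (b := 1) (fun s => |kk s| * ((1-w) - s)) 1
    rw [h]; norm_num [PP]
  rw [← h1]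
  refine integral_congr_ae (ae_ne_half.mono fun x hx _ => ?_)
  rw [kk_refl hx, abs_neg]; ring
lemma simpson_identity (F G : ℝ → ℝ)
    (hFG : ∀ t ∈ Set.Icc (0:ℝ) 1, HasDerivAt F (G t) t)
    (hGi : IntervalIntegrable G volume 0 1) :
    ∫ t in (0:ℝ)..1, kk t * G t
      = (F 0 + F 1 + 4 * F (1/2))/6 - ∫ t in (0:ℝ)..1, F t := by
  have hFc : ContinuousOn F (Set.Icc 0 1) := fun t ht => (hFG t ht).continuousAt.continuousWithinAt
  have hFi : IntervalIntegrable F volume 0 1 :=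
    (hFc.mono (by rw [Set.uIcc_of_le (by norm_num : (0:ℝ) ≤ 1)])).intervalIntegrable
  have hsub1 : Set.uIcc (0:ℝ) (1/2) ⊆ Set.uIcc (0:ℝ) 1 := by
    rw [Set.uIcc_of_le (by norm_num : (0:ℝ) ≤ 1/2), Set.uIcc_of_le (by norm_num : (0:ℝ) ≤ 1)]
    exact Set.Icc_subset_Icc le_rfl (by norm_num)
  have hsub2 : Set.uIcc (1/2:ℝ) 1 ⊆ Set.uIcc (0:ℝ) 1 := by
    rw [Set.uIcc_of_le (by norm_num : (1/2:ℝ) ≤ 1), Set.uIcc_of_le (by norm_num : (0:ℝ) ≤ 1)]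
    exact Set.Icc_subset_Icc (by norm_num) le_rfl
  have hFi1 : IntervalIntegrable F volume 0 (1/2) := hFi.mono_set hsub1
  have hFi2 : IntervalIntegrable F volume (1/2) 1 := hFi.mono_set hsub2
  have hGi1 : IntervalIntegrable G volume 0 (1/2) := hGi.mono_set hsub1
  have hGi2 : IntervalIntegrable G volume (1/2) 1 := hGi.mono_set hsub2
  have hm1 : IntervalIntegrable (fun t => (t - 1/6) * G t) volume 0 (1/2) :=
    hGi1.continuousOn_mul (by fun_prop)
  have hm2 : IntervalIntegrable (fun t => (t - 5/6) * G t) volume (1/2) 1 :=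
    hGi2.continuousOn_mul (by fun_prop)
  have hkg1 : IntervalIntegrable (fun t => kk t * G t) volume 0 (1/2) :=
    II_congr (by norm_num) (fun t ht => by rw [kk_lo ht.2]) hm1
  have hkg2 : IntervalIntegrable (fun t => kk t * G t) volume (1/2) 1 :=
    II_congr (by norm_num) (fun t ht => by rw [kk_hi ht.1]) hm2
  have ibp1 : ∫ t in (0:ℝ)..(1/2), (F t + (t - 1/6) * G t)
      = (1/2 - 1/6) * F (1/2) - (0 - 1/6) * F 0 := by
    apply intervalIntegral.integral_eq_sub_of_hasDerivAt (f := fun t => (t - 1/6) * F t)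
    · intro t ht
      rw [Set.uIcc_of_le (by norm_num : (0:ℝ) ≤ 1/2)] at ht
      have ht' : t ∈ Set.Icc (0:ℝ) 1 := ⟨ht.1, le_trans ht.2 (by norm_num)⟩
      have h := ((hasDerivAt_id t).sub_const (1/6)).mul (hFG t ht')
      exact h.congr_deriv (by simp only [id_eq]; ring)
    · exact hFi1.add hm1
  have ibp2 : ∫ t in (1/2:ℝ)..1, (F t + (t - 5/6) * G t)
      = (1 - 5/6) * F 1 - (1/2 - 5/6) * F (1/2) := by
    apply intervalIntegral.integral_eq_sub_of_hasDerivAt (f := fun t => (t - 5/6) * F t)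
    · intro t ht
      rw [Set.uIcc_of_le (by norm_num : (1/2:ℝ) ≤ 1)] at ht
      have ht' : t ∈ Set.Icc (0:ℝ) 1 := ⟨le_trans (by norm_num) ht.1, ht.2⟩
      have h := ((hasDerivAt_id t).sub_const (5/6)).mul (hFG t ht')
      exact h.congr_deriv (by simp only [id_eq]; ring)
    · exact hFi2.add hm2
  rw [intervalIntegral.integral_add hFi1 hm1] at ibp1
  rw [intervalIntegral.integral_add hFi2 hm2] at ibp2
  have s1 : ∫ t in (0:ℝ)..(1/2), kk t * G t = ∫ t in (0:ℝ)..(1/2), (t - 1/6) * G t :=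
    int_congr (by norm_num) (fun t ht => by rw [kk_lo ht.2])
  have s2 : ∫ t in (1/2:ℝ)..1, kk t * G t = ∫ t in (1/2:ℝ)..1, (t - 5/6) * G t :=
    int_congr (by norm_num) (fun t ht => by rw [kk_hi ht.1])
  rw [← intervalIntegral.integral_add_adjacent_intervals hkg1 hkg2,
    ← intervalIntegral.integral_add_adjacent_intervals hFi1 hFi2, s1, s2]
  linarith [ibp1, ibp2]
lemma core (F G : ℝ → ℝ)
    (hFG : ∀ t ∈ Set.Icc (0:ℝ) 1, HasDerivAt F (G t) t)
    (hGi : IntervalIntegrable G volume 0 1)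
    (hconv : ∀ s ∈ Set.Icc (0:ℝ) 1, ∀ u ∈ Set.Icc (0:ℝ) 1, ∀ τ ∈ Set.Icc (0:ℝ) 1,
        |G (τ*s + (1-τ)*u)| ≤ τ*|G s| + (1-τ)*|G u|)
    (hGabs : ContinuousOn (fun t => |G t|) (Set.Icc 0 1)) :
    |∫ t in (0:ℝ)..1, kk t * G t| ≤ 5/144 * (|G 0| + |G 1|) := by
  classical
  have h01 : Set.uIcc (0:ℝ) 1 = Set.Icc (0:ℝ) 1 := Set.uIcc_of_le (by norm_num)
  -- integrability of kk * G
  have hsub1 : Set.uIcc (0:ℝ) (1/2) ⊆ Set.uIcc (0:ℝ) 1 := by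
    rw [Set.uIcc_of_le (by norm_num : (0:ℝ) ≤ 1/2), h01]
    exact Set.Icc_subset_Icc le_rfl (by norm_num)
  have hsub2 : Set.uIcc (1/2:ℝ) 1 ⊆ Set.uIcc (0:ℝ) 1 := by
    rw [Set.uIcc_of_le (by norm_num : (1/2:ℝ) ≤ 1), h01]
    exact Set.Icc_subset_Icc (by norm_num) le_rfl
  have hkG : IntervalIntegrable (fun t => kk t * G t) volume 0 1 := by
    refine IntervalIntegrable.trans (b := 1/2) ?_ ?_
    · exact II_congr (by norm_num) (fun t ht => by rw [kk_lo ht.2])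
        ((hGi.mono_set hsub1).continuousOn_mul (by fun_prop))
    · exact II_congr (by norm_num) (fun t ht => by rw [kk_hi ht.1])
        ((hGi.mono_set hsub2).continuousOn_mul (by fun_prop))
  -- the main estimation engine, given a comparison function M
  have main : ∀ M : ℝ → ℝ, Continuous M →
      (∀ t ∈ Set.Icc (0:ℝ) 1, |G t - M t / 2| ≤ |M t| / 2) →
      (|∫ t in (0:ℝ)..1, kk t * M t| + ∫ t in (0:ℝ)..1, |kk t| * |M t|
          ≤ 5/72 * (|G 0| + |G 1|)) →
      |∫ t in (0:ℝ)..1, kk t * G t| ≤ 5/144 * (|G 0| + |G 1|) := by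
    intro M hMc hMG hMest
    have hkM : IntervalIntegrable (fun t => kk t * M t) volume 0 1 :=
      (kk_II 0 1).mul_continuousOn hMc.continuousOn
    have hkMa : IntervalIntegrable (fun t => |kk t| * |M t|) volume 0 1 :=
      (kk_II 0 1).abs.mul_continuousOn hMc.abs.continuousOn
    have hsplit : ∫ t in (0:ℝ)..1, kk t * G t
        = (∫ t in (0:ℝ)..1, (kk t * G t - kk t * M t / 2))
          + (∫ t in (0:ℝ)..1, kk t * M t)/2 := by
      rw [intervalIntegral.integral_sub hkG (hkM.div_const 2),
        intervalIntegral.integral_div]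
      ring
    have hPnn : (0:ℝ) ≤ ∫ t in (0:ℝ)..1, |kk t| * |M t| :=
      intervalIntegral.integral_nonneg (by norm_num)
        (fun t _ => mul_nonneg (abs_nonneg _) (abs_nonneg _))
    have habs1 : |∫ t in (0:ℝ)..1, (kk t * G t - kk t * M t / 2)|
        ≤ (∫ t in (0:ℝ)..1, |kk t| * |M t|)/2 := by
      have hb : ∀ᵐ t ∂(volume.restrict (Set.uIoc (0:ℝ) 1)),
          ‖kk t * G t - kk t * M t / 2‖ ≤ |kk t| * |M t| / 2 := by
        refine (ae_restrict_mem measurableSet_uIoc).mono fun t ht => ?_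
        rw [Set.uIoc_of_le (by norm_num : (0:ℝ) ≤ 1)] at ht
        have ht' : t ∈ Set.Icc (0:ℝ) 1 := ⟨ht.1.le, ht.2⟩
        have : kk t * G t - kk t * M t / 2 = kk t * (G t - M t / 2) := by ring
        rw [Real.norm_eq_abs, this, abs_mul, mul_div_assoc]
        exact mul_le_mul_of_nonneg_left (hMG t ht') (abs_nonneg _)
      have h := intervalIntegral.norm_integral_le_abs_of_norm_le hb
        ((hkMa.div_const 2).congr ?_)
      · rw [Real.norm_eq_abs] at h
        refine le_trans h (le_of_eq ?_)
        rw [abs_of_nonneg, intervalIntegral.integral_div]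
        rw [intervalIntegral.integral_div]
        positivity
      · exact fun _ _ => rfl
    calc |∫ t in (0:ℝ)..1, kk t * G t|
        ≤ |∫ t in (0:ℝ)..1, (kk t * G t - kk t * M t / 2)|
          + |∫ t in (0:ℝ)..1, kk t * M t|/2 := by
          rw [hsplit]; refine le_trans (abs_add_le _ _) ?_; rw [abs_div]; norm_num
      _ ≤ (∫ t in (0:ℝ)..1, |kk t| * |M t|)/2
          + |∫ t in (0:ℝ)..1, kk t * M t|/2 := by linarith
      _ ≤ 5/144 * (|G 0| + |G 1|) := by linarith
  have h0m : (0:ℝ) ∈ Set.Icc (0:ℝ) 1 := by norm_num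
  have h1m : (1:ℝ) ∈ Set.Icc (0:ℝ) 1 := by norm_num
  have chord : ∀ t ∈ Set.Icc (0:ℝ) 1, |G t| ≤ (1-t)*|G 0| + t*|G 1| := by
    intro t ht
    have h := hconv 1 h1m 0 h0m t ht
    rw [show t*1 + (1-t)*0 = t by ring] at h
    linarith
  by_cases hzero : ∃ z ∈ Set.Icc (0:ℝ) 1, G z = 0
  · -- there is a zero of G in [0,1]
    obtain ⟨z₀, hz₀, hGz₀⟩ := hzero
    set g : ℝ → ℝ := fun t => |G t| with hg
    set Z : Set ℝ := Set.Icc (0:ℝ) 1 ∩ g ⁻¹' {0} with hZ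
    have hZc : IsClosed Z := hGabs.preimage_isClosed_of_isClosed isClosed_Icc isClosed_singleton
    have hZne : Z.Nonempty := ⟨z₀, hz₀, by simp [hg, hGz₀]⟩
    have hZbb : BddBelow Z := ⟨0, fun x hx => hx.1.1⟩
    have hZba : BddAbove Z := ⟨1, fun x hx => hx.1.2⟩
    set z1 := sInf Z with hz1
    set z2 := sSup Z with hz2
    have hz1Z : z1 ∈ Z := hZc.csInf_mem hZne hZbb
    have hz2Z : z2 ∈ Z := hZc.csSup_mem hZne hZba
    have hz10 : 0 ≤ z1 := hz1Z.1.1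
    have hz11 : z1 ≤ 1 := hz1Z.1.2
    have hz20 : 0 ≤ z2 := hz2Z.1.1
    have hz21 : z2 ≤ 1 := hz2Z.1.2
    have hz12 : z1 ≤ z2 := csInf_le_csSup hZne hZbb hZba
    have hGz1 : G z1 = 0 := by
      have := hz1Z.2; simpa [hg, abs_eq_zero] using this
    have hGz2 : G z2 = 0 := by
      have := hz2Z.2; simpa [hg, abs_eq_zero] using this
    have hZmem : ∀ t ∈ Set.Icc (0:ℝ) 1, G t = 0 → (z1 ≤ t ∧ t ≤ z2) := by
      intro t ht hGt
      have htZ : t ∈ Z := ⟨ht, by simp [hg, hGt]⟩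
      exact ⟨csInf_le hZbb htZ, le_csSup hZba htZ⟩
    have hmid : ∀ t, z1 ≤ t → t ≤ z2 → G t = 0 := by
      intro t ht1 ht2
      rcases eq_or_lt_of_le hz12 with he | hlt
      · have : t = z1 := le_antisymm (he ▸ ht2) ht1
        rw [this]; exact hGz1
      · have hτ : (z2 - t)/(z2 - z1) ∈ Set.Icc (0:ℝ) 1 := by
          constructor
          · apply div_nonneg <;> linarith
          · rw [div_le_one (by linarith)]; linarith
        have h := hconv z1 ⟨hz10, hz11⟩ z2 ⟨hz20, hz21⟩ _ hτ
        have hne : z2 - z1 ≠ 0 := ne_of_gt (by linarith)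
        have harg : (z2 - t)/(z2 - z1)*z1 + (1-(z2 - t)/(z2 - z1))*z2 = t := by
          field_simp
          ring
        rw [harg] at h
        have : |G t| ≤ 0 := by
          rw [hGz1, hGz2] at h; simpa using h
        exact abs_eq_zero.1 (le_antisymm this (abs_nonneg _))
    have darboux : ∀ u ∈ Set.Icc (0:ℝ) 1, ∀ v ∈ Set.Icc (0:ℝ) 1, G u < 0 → 0 < G v →
        ∃ w, (min u v < w ∧ w < max u v) ∧ G w = 0 := by
      intro u hu v hv hGu hGv
      rcases le_total u v with huv | huv
      · have hD := exists_hasDerivWithinAt_eq_of_gt_of_lt huv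
          (f := F) (f' := G)
          (fun x hx => (hFG x (Set.Icc_subset_Icc hu.1 hv.2 hx)).hasDerivWithinAt)
          (m := 0) hGu hGv
        obtain ⟨w, hw, hw0⟩ := hD
        exact ⟨w, by rw [min_eq_left huv, max_eq_right huv]; exact ⟨hw.1, hw.2⟩, hw0⟩
      · have hD := exists_hasDerivWithinAt_eq_of_lt_of_gt huv
          (f := F) (f' := G)
          (fun x hx => (hFG x (Set.Icc_subset_Icc hv.1 hu.2 hx)).hasDerivWithinAt)
          (m := 0) hGv hGu
        obtain ⟨w, hw, hw0⟩ := hD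
        exact ⟨w, by rw [min_eq_right huv, max_eq_left huv]; exact ⟨hw.1, hw.2⟩, hw0⟩
    -- sign dichotomy on the left of z1
    have hdichL : (∀ t, 0 ≤ t → t < z1 → 0 ≤ G t) ∨ (∀ t, 0 ≤ t → t < z1 → G t ≤ 0) := by
      by_contra hcon
      push_neg at hcon
      obtain ⟨⟨u, hu0, hu1, hGu⟩, ⟨v, hv0, hv1, hGv⟩⟩ := hcon
      obtain ⟨w, ⟨hwl, hwr⟩, hw0⟩ := darboux u ⟨hu0, le_trans hu1.le hz11⟩
        v ⟨hv0, le_trans hv1.le hz11⟩ hGu hGv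
      have hw01 : w ∈ Set.Icc (0:ℝ) 1 := by
        constructor
        · exact le_trans (le_min hu0 hv0) hwl.le
        · exact le_trans hwr.le (le_trans (max_le hu1.le hv1.le) hz11)
      have := (hZmem w hw01 hw0).1
      have hwz1 : w < z1 := lt_of_lt_of_le hwr (max_le hu1.le hv1.le)
      linarith
    have hdichR : (∀ t, z2 < t → t ≤ 1 → 0 ≤ G t) ∨ (∀ t, z2 < t → t ≤ 1 → G t ≤ 0) := by
      by_contra hcon
      push_neg at hcon
      obtain ⟨⟨u, hu0, hu1, hGu⟩, ⟨v, hv0, hv1, hGv⟩⟩ := hcon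
      obtain ⟨w, ⟨hwl, hwr⟩, hw0⟩ := darboux u ⟨le_trans hz20 hu0.le, hu1⟩
        v ⟨le_trans hz20 hv0.le, hv1⟩ hGu hGv
      have hw01 : w ∈ Set.Icc (0:ℝ) 1 := by
        constructor
        · exact le_trans (le_trans hz20 (le_min hu0.le hv0.le)) hwl.le
        · exact le_trans hwr.le (max_le hu1 hv1)
      have := (hZmem w hw01 hw0).2
      have hwz2 : z2 < w := lt_of_le_of_lt (le_min hu0.le hv0.le) hwl
      linarith
    set A := |G 0| with hA
    set B := |G 1| with hB
    set σL : ℝ := if (∀ t, 0 ≤ t → t < z1 → 0 ≤ G t) then 1 else -1 with hσL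
    set σR : ℝ := if (∀ t, z2 < t → t ≤ 1 → 0 ≤ G t) then 1 else -1 with hσR
    have hσLcases : σL = 1 ∨ σL = -1 := by rw [hσL]; split <;> simp
    have hσRcases : σR = 1 ∨ σR = -1 := by rw [hσR]; split <;> simp
    have hσLsgn : ∀ t, 0 ≤ t → t < z1 → σL * G t = |G t| := by
      intro t ht0 ht1
      rw [hσL]
      split
      · next hc => rw [one_mul, abs_of_nonneg (hc t ht0 ht1)]
      · next hc =>
        rcases hdichL with h | h
        · exact absurd h hc
        · rw [abs_of_nonpos (h t ht0 ht1)]; ring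
    have hσRsgn : ∀ t, z2 < t → t ≤ 1 → σR * G t = |G t| := by
      intro t ht0 ht1
      rw [hσR]
      split
      · next hc => rw [one_mul, abs_of_nonneg (hc t ht0 ht1)]
      · next hc =>
        rcases hdichR with h | h
        · exact absurd h hc
        · rw [abs_of_nonpos (h t ht0 ht1)]; ring
    set M : ℝ → ℝ := fun t => if t ≤ z1 then σL * (A * ((z1 - t) / z1))
      else if t ≤ z2 then 0 else σR * (B * ((t - z2) / (1 - z2))) with hM
    have hMc : Continuous M := by
      rw [hM]
      refine Continuous.if ?_ (by fun_prop) (Continuous.if ?_ continuous_const (by fun_prop))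
      · intro a ha
        have ha' : a = z1 := by
          have : frontier {x : ℝ | x ≤ z1} = {z1} := by
            rw [show {x : ℝ | x ≤ z1} = Set.Iic z1 from rfl, frontier_Iic]
          rw [this] at ha; exact ha
        subst ha'
        simp [hz12]
      · intro a ha
        have ha' : a = z2 := by
          have : frontier {x : ℝ | x ≤ z2} = {z2} := by
            rw [show {x : ℝ | x ≤ z2} = Set.Iic z2 from rfl, frontier_Iic]
          rw [this] at ha; exact ha
        subst ha'
        simp
    have XX_def : ∀ z : ℝ, XX z = ∫ t in (0:ℝ)..z, kk t * (z - t) := fun z => rfl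
    have PP_def : ∀ z : ℝ, PP z = ∫ t in (0:ℝ)..z, |kk t| * (z - t) := fun z => rfl
    have hσLabs : |σL| = 1 := by rcases hσLcases with h | h <;> rw [h] <;> norm_num
    have hσRabs : |σR| = 1 := by rcases hσRcases with h | h <;> rw [h] <;> norm_num
    -- pointwise comparison |G - M/2| ≤ |M|/2
    have hMG : ∀ t ∈ Set.Icc (0:ℝ) 1, |G t - M t / 2| ≤ |M t| / 2 := by
      intro t ht
      simp only [hM]
      rcases le_or_gt t z1 with h1 | h1
      · rw [if_pos h1]
        rcases eq_or_lt_of_le h1 with he | hlt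
        · rw [he, sub_self, zero_div, mul_zero, mul_zero, he] at *
          simp [hGz1]
        · have hz1pos : 0 < z1 := lt_of_le_of_lt ht.1 hlt
          have hL0 : 0 ≤ |G 0| * ((z1 - t)/z1) :=
            mul_nonneg (abs_nonneg _) (div_nonneg (by linarith) hz1pos.le)
          have hchord2 : |G t| ≤ |G 0| * ((z1 - t)/z1) := by
            have hτ : (z1 - t)/z1 ∈ Set.Icc (0:ℝ) 1 :=
              ⟨div_nonneg (by linarith) hz1pos.le,
               by rw [div_le_one hz1pos]; linarith [ht.1]⟩
            have h := hconv 0 h0m z1 ⟨hz10, hz11⟩ _ hτ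
            have hne : z1 ≠ 0 := ne_of_gt hz1pos
            have harg : (z1 - t)/z1 * 0 + (1 - (z1 - t)/z1) * z1 = t := by
              field_simp
              ring
            rw [harg] at h
            have hz : |G z1| = 0 := by rw [hGz1, abs_zero]
            rw [hz, mul_zero, add_zero] at h
            rw [mul_comm]; exact h
          have hsgn := hσLsgn t ht.1 hlt
          rcases hσLcases with hσ | hσ <;> rw [hσ] at hsgn ⊢
          · rw [one_mul] at hsgn ⊢
            have hGt0 : 0 ≤ G t := by rw [hsgn]; exact abs_nonneg _
            have hGtL : G t ≤ |G 0| * ((z1 - t)/z1) := le_trans (le_abs_self _) hchord2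
            rw [abs_of_nonneg hL0, abs_le]
            constructor <;> linarith
          · rw [neg_one_mul] at hsgn ⊢
            have hGt0 : G t ≤ 0 := by
              have h0 := abs_nonneg (G t); rw [← hsgn] at h0; linarith
            have hGtL : -(|G 0| * ((z1 - t)/z1)) ≤ G t := by
              have := neg_abs_le (G t); linarith [hchord2]
            rw [abs_neg, abs_of_nonneg hL0, abs_le]
            constructor <;> linarith
      · rw [if_neg (not_le.2 h1)]
        rcases le_or_gt t z2 with h2 | h2
        · rw [if_pos h2]
          have hGt : G t = 0 := hmid t h1.le h2
          simp [hGt]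
        · rw [if_neg (not_le.2 h2)]
          have hz2lt1 : z2 < 1 := lt_of_lt_of_le h2 ht.2
          have h1z2 : 0 < 1 - z2 := by linarith
          have hL0 : 0 ≤ |G 1| * ((t - z2)/(1 - z2)) :=
            mul_nonneg (abs_nonneg _) (div_nonneg (by linarith) h1z2.le)
          have hchord2 : |G t| ≤ |G 1| * ((t - z2)/(1 - z2)) := by
            have hτ : (t - z2)/(1 - z2) ∈ Set.Icc (0:ℝ) 1 :=
              ⟨div_nonneg (by linarith) h1z2.le,
               by rw [div_le_one h1z2]; linarith [ht.2]⟩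
            have h := hconv 1 h1m z2 ⟨hz20, hz21⟩ _ hτ
            have hne : (1:ℝ) - z2 ≠ 0 := ne_of_gt h1z2
            have harg : (t - z2)/(1 - z2) * 1 + (1 - (t - z2)/(1 - z2)) * z2 = t := by
              field_simp
              ring
            rw [harg] at h
            have hz : |G z2| = 0 := by rw [hGz2, abs_zero]
            rw [hz, mul_zero, add_zero] at h
            rw [mul_comm]; exact h
          have hsgn := hσRsgn t h2 ht.2
          rcases hσRcases with hσ | hσ <;> rw [hσ] at hsgn ⊢
          · rw [one_mul] at hsgn ⊢
            have hGt0 : 0 ≤ G t := by rw [hsgn]; exact abs_nonneg _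
            have hGtL : G t ≤ |G 1| * ((t - z2)/(1 - z2)) := le_trans (le_abs_self _) hchord2
            rw [abs_of_nonneg hL0, abs_le]
            constructor <;> linarith
          · rw [neg_one_mul] at hsgn ⊢
            have hGt0 : G t ≤ 0 := by
              have h0 := abs_nonneg (G t); rw [← hsgn] at h0; linarith
            have hGtL : -(|G 1| * ((t - z2)/(1 - z2))) ≤ G t := by
              have := neg_abs_le (G t); linarith [hchord2]
            rw [abs_neg, abs_of_nonneg hL0, abs_le]
            constructor <;> linarith
    -- integral estimates
    have IIM : ∀ u v : ℝ, IntervalIntegrable (fun t => kk t * M t) volume u v :=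
      fun u v => (kk_II u v).mul_continuousOn hMc.continuousOn
    have IIMa : ∀ u v : ℝ, IntervalIntegrable (fun t => |kk t| * |M t|) volume u v :=
      fun u v => (kk_II u v).abs.mul_continuousOn hMc.abs.continuousOn
    have eL : |∫ t in (0:ℝ)..z1, kk t * M t| + (∫ t in (0:ℝ)..z1, |kk t| * |M t|)
        ≤ 5/72 * A := by
      rcases eq_or_lt_of_le hz10 with he | hz1pos
      · rw [← he, intervalIntegral.integral_same, intervalIntegral.integral_same]
        have hA0 : 0 ≤ A := abs_nonneg _
        simp
        linarith
      · have hne : z1 ≠ 0 := ne_of_gt hz1pos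
        have ev1 : ∫ t in (0:ℝ)..z1, kk t * M t = (σL * A / z1) * XX z1 := by
          have e : ∫ t in (0:ℝ)..z1, kk t * M t
              = ∫ t in (0:ℝ)..z1, (σL * A / z1) * (kk t * (z1 - t)) := by
            refine int_congr hz10 (fun t ht => ?_)
            simp only [hM]
            rw [if_pos ht.2]
            field_simp
          rw [e, intervalIntegral.integral_const_mul, ← XX_def]
        have ev2 : ∫ t in (0:ℝ)..z1, |kk t| * |M t| = (A / z1) * PP z1 := by
          have e : ∫ t in (0:ℝ)..z1, |kk t| * |M t|
              = ∫ t in (0:ℝ)..z1, (A / z1) * (|kk t| * (z1 - t)) := by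
            refine int_congr hz10 (fun t ht => ?_)
            simp only [hM]
            rw [if_pos ht.2, abs_mul, hσLabs, one_mul, abs_mul,
              abs_of_nonneg (abs_nonneg (G 0)),
              abs_of_nonneg (div_nonneg (by linarith [ht.2] : (0:ℝ) ≤ z1 - t) hz1pos.le)]
            field_simp
            ring
          rw [e, intervalIntegral.integral_const_mul, ← PP_def]
        rw [ev1, ev2]
        have hXP := key_z hz10 hz11
        have habs : |(σL * A / z1) * XX z1| = (A/z1) * |XX z1| := by
          rw [abs_mul, abs_div, abs_mul, hσLabs, one_mul,
            abs_of_nonneg (abs_nonneg (G 0)), abs_of_nonneg hz10]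
        rw [habs]
        have hAz : 0 ≤ A / z1 := div_nonneg (abs_nonneg _) hz10
        calc (A/z1) * |XX z1| + (A/z1) * PP z1 = (A/z1) * (|XX z1| + PP z1) := by ring
          _ ≤ (A/z1) * (5 * z1/72) := mul_le_mul_of_nonneg_left hXP hAz
          _ = 5/72 * A := by field_simp
    have eM1 : ∫ t in z1..z2, kk t * M t = 0 := by
      have e : ∫ t in z1..z2, kk t * M t = ∫ t in z1..z2, (0:ℝ) :=
        int_congr hz12 (fun t ht => by
          simp only [hM]; rw [if_neg (not_le.2 ht.1), if_pos ht.2, mul_zero])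
      rw [e]; simp
    have eM2 : ∫ t in z1..z2, |kk t| * |M t| = 0 := by
      have e : ∫ t in z1..z2, |kk t| * |M t| = ∫ t in z1..z2, (0:ℝ) :=
        int_congr hz12 (fun t ht => by
          simp only [hM]; rw [if_neg (not_le.2 ht.1), if_pos ht.2, abs_zero, mul_zero])
      rw [e]; simp
    have eR : |∫ t in z2..1, kk t * M t| + (∫ t in z2..1, |kk t| * |M t|)
        ≤ 5/72 * B := by
      rcases eq_or_lt_of_le hz21 with he | hz2lt
      · rw [he, intervalIntegral.integral_same, intervalIntegral.integral_same]
        have hB0 : 0 ≤ B := abs_nonneg _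
        simp
        linarith
      · have h1z2 : 0 < 1 - z2 := by linarith
        have hne : (1:ℝ) - z2 ≠ 0 := ne_of_gt h1z2
        have ev1 : ∫ t in z2..1, kk t * M t
            = (σR * B / (1 - z2)) * (∫ t in z2..1, kk t * (t - z2)) := by
          have e : ∫ t in z2..1, kk t * M t
              = ∫ t in z2..1, (σR * B / (1 - z2)) * (kk t * (t - z2)) := by
            refine int_congr hz21 (fun t ht => ?_)
            simp only [hM]
            rw [if_neg (not_le.2 (lt_of_le_of_lt hz12 ht.1)), if_neg (not_le.2 ht.1)]
            field_simp
          rw [e, intervalIntegral.integral_const_mul]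
        have ev2 : ∫ t in z2..1, |kk t| * |M t|
            = (B / (1 - z2)) * (∫ t in z2..1, |kk t| * (t - z2)) := by
          have e : ∫ t in z2..1, |kk t| * |M t|
              = ∫ t in z2..1, (B / (1 - z2)) * (|kk t| * (t - z2)) := by
            refine int_congr hz21 (fun t ht => ?_)
            simp only [hM]
            rw [if_neg (not_le.2 (lt_of_le_of_lt hz12 ht.1)), if_neg (not_le.2 ht.1),
              abs_mul, hσRabs, one_mul, abs_mul,
              abs_of_nonneg (abs_nonneg (G 1)),
              abs_of_nonneg (div_nonneg (by linarith [ht.1] : (0:ℝ) ≤ t - z2) h1z2.le)]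
            field_simp
            ring
          rw [e, intervalIntegral.integral_const_mul]
        rw [ev1, ev2, XXrefl, PPrefl]
        have hXP := key_z (z := 1 - z2) (by linarith) (by linarith)
        have habs : |(σR * B / (1 - z2)) * (- XX (1 - z2))| = (B/(1-z2)) * |XX (1-z2)| := by
          rw [abs_mul, abs_neg, abs_div, abs_mul, hσRabs, one_mul,
            abs_of_nonneg (abs_nonneg (G 1)), abs_of_nonneg h1z2.le]
        rw [habs]
        have hBz : 0 ≤ B / (1 - z2) := div_nonneg (abs_nonneg _) h1z2.le
        calc (B/(1-z2)) * |XX (1-z2)| + (B/(1-z2)) * PP (1-z2)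
            = (B/(1-z2)) * (|XX (1-z2)| + PP (1-z2)) := by ring
          _ ≤ (B/(1-z2)) * (5 * (1-z2)/72) := mul_le_mul_of_nonneg_left hXP hBz
          _ = 5/72 * B := by field_simp
    refine main M hMc hMG ?_
    have hsplitM : ∫ t in (0:ℝ)..1, kk t * M t
        = (∫ t in (0:ℝ)..z1, kk t * M t) + (∫ t in z1..z2, kk t * M t)
          + (∫ t in z2..1, kk t * M t) := by
      rw [intervalIntegral.integral_add_adjacent_intervals (IIM 0 z1) (IIM z1 z2),
        intervalIntegral.integral_add_adjacent_intervals (IIM 0 z2) (IIM z2 1)]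
    have hsplitMa : ∫ t in (0:ℝ)..1, |kk t| * |M t|
        = (∫ t in (0:ℝ)..z1, |kk t| * |M t|) + (∫ t in z1..z2, |kk t| * |M t|)
          + (∫ t in z2..1, |kk t| * |M t|) := by
      rw [intervalIntegral.integral_add_adjacent_intervals (IIMa 0 z1) (IIMa z1 z2),
        intervalIntegral.integral_add_adjacent_intervals (IIMa 0 z2) (IIMa z2 1)]
    rw [hsplitM, hsplitMa, eM1, eM2]
    have htri : |(∫ t in (0:ℝ)..z1, kk t * M t) + 0 + (∫ t in z2..1, kk t * M t)|
        ≤ |∫ t in (0:ℝ)..z1, kk t * M t| + |∫ t in z2..1, kk t * M t| := by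
      rw [add_zero]; exact abs_add_le _ _
    linarith [eL, eR, htri]
  · -- G has no zero on [0,1] : single sign
    push_neg at hzero
    have hdich := hasDerivWithinAt_forall_lt_or_forall_gt_of_forall_ne (convex_Icc (0:ℝ) 1)
      (f := F) (f' := G) (fun x hx => (hFG x hx).hasDerivWithinAt) (m := 0) hzero
    set A := |G 0| with hA
    set B := |G 1| with hB
    have hL0 : ∀ t ∈ Set.Icc (0:ℝ) 1, 0 ≤ (1-t)*A + t*B := by
      intro t ht
      have := abs_nonneg (G 0); have := abs_nonneg (G 1)
      apply add_nonneg <;> [apply mul_nonneg; apply mul_nonneg] <;> first | linarith [ht.1, ht.2] | assumption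
    rcases hdich with hneg | hpos
    · -- G < 0 everywhere
      refine main (fun t => -((1-t)*A + t*B)) (by fun_prop) ?_ ?_
      · intro t ht
        have hc := chord t ht
        have hn := hneg t ht
        have h0 := hL0 t ht
        have h1 : -((1-t)*A + t*B) ≤ G t := by
          have : |G t| ≤ (1-t)*A + t*B := hc
          have := neg_abs_le (G t)
          linarith
        rw [abs_of_nonpos (by linarith : -((1-t)*A + t*B) ≤ 0)]
        rw [abs_le]
        constructor <;> [linarith; linarith]
      · have e1 : ∫ t in (0:ℝ)..1, kk t * -((1-t)*A + t*B)
            = - ∫ t in (0:ℝ)..1, kk t * ((1-t)*A + t*B) := by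
          rw [← intervalIntegral.integral_neg]
          congr 1; funext t; ring
        have e2 : ∫ t in (0:ℝ)..1, |kk t| * |(-((1-t)*A + t*B))|
            = ∫ t in (0:ℝ)..1, |kk t| * ((1-t)*A + t*B) := by
          refine int_congr (by norm_num) (fun t ht => ?_)
          rw [abs_neg, abs_of_nonneg (hL0 t ⟨ht.1.le, ht.2⟩)]
        rw [e1, e2, eval_chordK, eval_chordKa, neg_zero, abs_zero]
        rw [hA, hB]; linarith
    · -- G > 0 everywhere
      refine main (fun t => (1-t)*A + t*B) (by fun_prop) ?_ ?_
      · intro t ht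
        have hc := chord t ht
        have hn := hpos t ht
        have h0 := hL0 t ht
        have h1 : G t ≤ (1-t)*A + t*B := le_trans (le_abs_self _) hc
        rw [abs_of_nonneg h0, abs_le]
        constructor <;> [linarith; linarith]
      · have e2 : ∫ t in (0:ℝ)..1, |kk t| * |((1-t)*A + t*B)|
            = ∫ t in (0:ℝ)..1, |kk t| * ((1-t)*A + t*B) := by
          refine int_congr (by norm_num) (fun t ht => ?_)
          rw [abs_of_nonneg (hL0 t ⟨ht.1.le, ht.2⟩)]
        rw [e2, eval_chordK, eval_chordKa, abs_zero]
        rw [hA, hB]; linarith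
lemma rpow_fact1 {p : ℝ} (hp : 1 < p) :
    (5/6 : ℝ) ≤ ((1 + 2^(p+1))/(3*(p+1)))^(1/p) := by
  have hp0 : 0 < p := by linarith
  have hbase : (5/6 : ℝ) ≤ (1 + 2^(p+1))/(3*(p+1)) := by
    rw [le_div_iff₀ (by linarith : (0:ℝ) < 3*(p+1))]
    have h2 : (2:ℝ)^(p+1) = 4 * Real.exp (Real.log 2 * (p-1)) := by
      rw [show p+1 = 2 + (p-1) by ring, Real.rpow_add (by norm_num : (0:ℝ) < 2),
        ← Real.rpow_def_of_pos (by norm_num : (0:ℝ) < 2) (p-1)]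
      norm_num
    have hexp : 1 + Real.log 2 * (p-1) ≤ Real.exp (Real.log 2 * (p-1)) := by
      have := Real.add_one_le_exp (Real.log 2 * (p-1)); linarith
    have hlog : (0.6931471803:ℝ) ≤ Real.log 2 := le_of_lt Real.log_two_gt_d9
    have hkey : 0 ≤ (p - 1) * (4 * Real.log 2 - 5/2) :=
      mul_nonneg (by linarith) (by linarith)
    nlinarith [hexp, h2]
  calc (5/6 : ℝ) = (5/6 : ℝ)^(1:ℝ) := (Real.rpow_one _).symm
    _ ≤ (5/6 : ℝ)^(1/p) := by
        apply Real.rpow_le_rpow_of_exponent_ge (by norm_num) (by norm_num)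
        rw [div_le_one hp0]; linarith
    _ ≤ ((1 + 2^(p+1))/(3*(p+1)))^(1/p) :=
        Real.rpow_le_rpow (by norm_num) hbase (by positivity)

lemma rpow_fact2 {q : ℝ} (hq : 1 < q) : (1/2 : ℝ) ≤ (1/(q+1))^(1/q) := by
  have hq0 : 0 < q := by linarith
  have h1 : q + 1 ≤ (2:ℝ)^q := by
    have h := one_add_mul_self_le_rpow_one_add (by norm_num : (-1:ℝ) ≤ 1) hq.le
    norm_num at h
    linarith
  have h4 : ((2:ℝ)^q)⁻¹ ^ (1/q) = 1/2 := by
    rw [← Real.rpow_neg (by norm_num : (0:ℝ) ≤ 2),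
      ← Real.rpow_mul (by norm_num : (0:ℝ) ≤ 2),
      show (-q) * (1/q) = -1 by field_simp,
      Real.rpow_neg (by norm_num : (0:ℝ) ≤ 2), Real.rpow_one]
    norm_num
  have h3 : ((2:ℝ)^q)⁻¹ ^ (1/q) ≤ (1/(q+1))^(1/q) := by
    apply Real.rpow_le_rpow (by positivity) ?_ (by positivity)
    rw [one_div]
    apply inv_anti₀ (by linarith) h1
  linarith [h4 ▸ h3]

lemma rpow_fact3 {q : ℝ} (hq : 1 < q) : (1:ℝ) ≤ (2 - (1/2)^q)^(1/q) := by
  apply Real.one_le_rpow ?_ (by positivity)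
  have h : ((1:ℝ)/2)^q ≤ 1 := Real.rpow_le_one (by norm_num) (by norm_num) (by linarith)
  linarith
/-- Simpson-type inequality for functions whose derivative has convex absolute value
(the case `h(t) = t`), via Hölder's inequality with conjugate exponents `p, q`. -/
theorem simpson_convex_holder
    (I : Set ℝ) (hI : I ⊆ Set.Ici (0:ℝ)) (hIc : I.OrdConnected)
    (f f' : ℝ → ℝ) (a b : ℝ)
    (ha : a ∈ interior I) (hb : b ∈ interior I) (hab : a < b)
    (p q : ℝ) (hp : 1 < p) (hq : 1 < q) (hpq : 1/p + 1/q = 1)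
    (hderiv : ∀ x ∈ interior I, HasDerivAt f (f' x) x)
    (hfint : IntervalIntegrable f' volume a b)
    (hconv : ∀ x ∈ I, ∀ y ∈ I, ∀ t ∈ Set.Icc (0:ℝ) 1,
      |f' (t*x + (1-t)*y)| ≤ t * |f' x| + (1-t) * |f' y|) :
    |(1/(b-a)) * ∫ x in a..b, f x
        - (1/3) * ((f a + f b)/2 + 2 * f ((a+b)/2))|
      ≤ ((b-a)/6) * ((1 + 2^(p+1))/(3*(p+1)))^(1/p) * (1/(q+1))^(1/q) *
        (|f' a|/2 + |f' b| * (2 - (1/2)^q)^(1/q)) := by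
  have hba : (0:ℝ) < b - a := sub_pos.2 hab
  have hba' : b - a ≠ 0 := ne_of_gt hba
  -- an open interval around [a,b] inside I
  obtain ⟨ε₁, hε₁, hball₁⟩ := Metric.isOpen_iff.1 isOpen_interior a ha
  obtain ⟨ε₂, hε₂, hball₂⟩ := Metric.isOpen_iff.1 isOpen_interior b hb
  set ε := min ε₁ ε₂ with hε
  have hεpos : 0 < ε := lt_min hε₁ hε₂
  have haI : a - ε/2 ∈ interior I := by
    apply hball₁
    rw [Metric.mem_ball, Real.dist_eq]
    rw [abs_of_nonpos (by linarith)]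
    have : ε ≤ ε₁ := min_le_left _ _
    linarith
  have hbI : b + ε/2 ∈ interior I := by
    apply hball₂
    rw [Metric.mem_ball, Real.dist_eq]
    rw [abs_of_nonneg (by linarith)]
    have : ε ≤ ε₂ := min_le_right _ _
    linarith
  have hIcc : Set.Icc (a - ε/2) (b + ε/2) ⊆ I :=
    hIc.out (interior_subset haI) (interior_subset hbI)
  have hIoo : Set.Ioo (a - ε/2) (b + ε/2) ⊆ interior I :=
    interior_maximal (le_trans Set.Ioo_subset_Icc_self hIcc) isOpen_Ioo
  have habIoo : Set.Icc a b ⊆ Set.Ioo (a - ε/2) (b + ε/2) :=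
    fun x hx => ⟨by linarith [hx.1], by linarith [hx.2]⟩
  -- normalized functions
  set F : ℝ → ℝ := fun t => f ((b-a)*t + a) with hF
  set G : ℝ → ℝ := fun t => (b-a) * f' ((b-a)*t + a) with hG
  set δ := ε/(2*(b-a)) with hδ
  have hδpos : 0 < δ := by positivity
  have hmapI : ∀ t ∈ Set.Ioo (-δ) (1+δ), (b-a)*t + a ∈ I := by
    intro t ht
    apply hIcc
    constructor
    · have h1 : (b-a)*(-δ) ≤ (b-a)*t := mul_le_mul_of_nonneg_left ht.1.le hba.le
      have h2 : (b-a)*(-δ) = -(ε/2) := by rw [hδ]; field_simp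
      linarith
    · have h1 : (b-a)*t ≤ (b-a)*(1+δ) := mul_le_mul_of_nonneg_left ht.2.le hba.le
      have h2 : (b-a)*(1+δ) = (b-a) + ε/2 := by rw [hδ]; field_simp
      linarith
  have hmap01 : ∀ t ∈ Set.Icc (0:ℝ) 1, (b-a)*t + a ∈ Set.Icc a b := by
    intro t ht
    constructor
    · nlinarith [ht.1, ht.2]
    · nlinarith [ht.1, ht.2]
  have hFG : ∀ t ∈ Set.Icc (0:ℝ) 1, HasDerivAt F (G t) t := by
    intro t ht
    have hx : (b-a)*t + a ∈ interior I := hIoo (habIoo (hmap01 t ht))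
    have hinner : HasDerivAt (fun s : ℝ => (b-a)*s + a) ((b-a)*1) t :=
      ((hasDerivAt_id t).const_mul (b-a)).add_const a
    have h := (hderiv _ hx).comp t hinner
    refine HasDerivAt.congr_deriv h ?_
    simp only [hG]
    ring
  have hGi : IntervalIntegrable G volume 0 1 := by
    have h1 : IntervalIntegrable (fun x => f' (x + a)) volume 0 (b-a) := by
      have := hfint.comp_add_right a
      simpa using this
    have h2 : IntervalIntegrable (fun x => f' (x*(b-a) + a)) volume 0 1 := by
      have := h1.comp_mul_right (c := b-a)
      rw [zero_div, div_self hba'] at this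
      exact this
    have h3 := h2.const_mul (b-a)
    refine h3.congr (fun t _ => ?_)
    simp [hG, mul_comm]
  have hconv01 : ∀ s ∈ Set.Icc (0:ℝ) 1, ∀ u ∈ Set.Icc (0:ℝ) 1, ∀ τ ∈ Set.Icc (0:ℝ) 1,
      |G (τ*s + (1-τ)*u)| ≤ τ*|G s| + (1-τ)*|G u| := by
    intro s hs u hu τ hτ
    have hsI : (b-a)*s + a ∈ I := hmapI s ⟨by linarith [hs.1], by linarith [hs.2]⟩
    have huI : (b-a)*u + a ∈ I := hmapI u ⟨by linarith [hu.1], by linarith [hu.2]⟩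
    have h := hconv _ hsI _ huI τ hτ
    have harg : τ*((b-a)*s + a) + (1-τ)*((b-a)*u + a) = (b-a)*(τ*s + (1-τ)*u) + a := by
      ring
    rw [harg] at h
    simp only [hG, abs_mul, abs_of_pos hba]
    calc (b-a) * |f' ((b-a)*(τ*s + (1-τ)*u) + a)|
        ≤ (b-a) * (τ * |f' ((b-a)*s + a)| + (1-τ) * |f' ((b-a)*u + a)|) :=
          mul_le_mul_of_nonneg_left h hba.le
      _ = τ*((b-a) * |f' ((b-a)*s + a)|) + (1-τ)*((b-a) * |f' ((b-a)*u + a)|) := by ring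
  have hGconvOn : ConvexOn ℝ (Set.Ioo (-δ) (1+δ)) (fun t => |G t|) := by
    refine ⟨convex_Ioo _ _, ?_⟩
    intro x hx y hy α β hα hβ hαβ
    simp only [smul_eq_mul]
    have hxI : (b-a)*x + a ∈ I := hmapI x hx
    have hyI : (b-a)*y + a ∈ I := hmapI y hy
    have h := hconv _ hxI _ hyI α ⟨hα, by linarith⟩
    have hβα : β = 1 - α := by linarith
    have harg : α*((b-a)*x + a) + (1-α)*((b-a)*y + a) = (b-a)*(α*x + β*y) + a := by
      rw [hβα]; ring
    rw [harg] at h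
    simp only [hG, abs_mul, abs_of_pos hba]
    calc (b-a) * |f' ((b-a)*(α*x + β*y) + a)|
        ≤ (b-a) * (α * |f' ((b-a)*x + a)| + (1-α) * |f' ((b-a)*y + a)|) :=
          mul_le_mul_of_nonneg_left h hba.le
      _ = α*((b-a) * |f' ((b-a)*x + a)|) + β*((b-a) * |f' ((b-a)*y + a)|) := by
          rw [hβα]; ring
  have hGabs : ContinuousOn (fun t => |G t|) (Set.Icc 0 1) := by
    have hco := hGconvOn.continuousOn isOpen_Ioo
    intro t ht
    have htIoo : t ∈ Set.Ioo (-δ) (1+δ) := ⟨by linarith [ht.1], by linarith [ht.2]⟩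
    exact ((hco t htIoo).continuousAt (isOpen_Ioo.mem_nhds htIoo)).continuousWithinAt
  -- core estimate
  have hcore := core F G hFG hGi hconv01 hGabs
  have hident := simpson_identity F G hFG hGi
  -- translate back
  have hF0 : F 0 = f a := by simp [hF]
  have hF1 : F 1 = f b := by
    show f ((b-a)*1 + a) = f b
    norm_num
  have hFm : F (1/2) = f ((a+b)/2) := by
    show f ((b-a)*(1/2) + a) = f ((a+b)/2)
    ring_nf
  have hInt : ∫ x in a..b, f x = (b-a) * ∫ t in (0:ℝ)..1, F t := by
    have h := intervalIntegral.integral_comp_mul_add (a := 0) (b := 1) f hba' a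
    rw [show (b-a)*0 + a = a by ring, show (b-a)*1 + a = b by ring, smul_eq_mul] at h
    rw [hF, h]
    field_simp
  have hG0 : |G 0| = (b-a) * |f' a| := by
    show |(b-a) * f' ((b-a)*0 + a)| = (b-a)*|f' a|
    rw [show (b-a)*0 + a = a by ring, abs_mul, abs_of_pos hba]
  have hG1 : |G 1| = (b-a) * |f' b| := by
    show |(b-a) * f' ((b-a)*1 + a)| = (b-a)*|f' b|
    rw [show (b-a)*1 + a = b by ring, abs_mul, abs_of_pos hba]
  have hfc : ContinuousOn f (Set.uIcc a b) := by
    rw [Set.uIcc_of_le hab.le]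
    intro x hx
    exact (hderiv x (hIoo (habIoo hx))).continuousAt.continuousWithinAt
  have hfi : IntervalIntegrable f volume a b := hfc.intervalIntegrable
  have hexpr : (1/(b-a)) * ∫ x in a..b, f x
        - (1/3) * ((f a + f b)/2 + 2 * f ((a+b)/2))
      = -(∫ t in (0:ℝ)..1, kk t * G t) := by
    rw [intervalIntegral.integral_sub hfi (intervalIntegrable_const),
      intervalIntegral.integral_const, smul_eq_mul, hident, hInt, ← hF0, ← hF1, ← hFm]
    field_simp
    ring
  rw [hexpr, abs_neg]
  have hfinal : |∫ t in (0:ℝ)..1, kk t * G t| ≤ 5/144 * (b-a) * (|f' a| + |f' b|) := by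
    calc |∫ t in (0:ℝ)..1, kk t * G t| ≤ 5/144 * (|G 0| + |G 1|) := hcore
      _ = 5/144 * (b-a) * (|f' a| + |f' b|) := by rw [hG0, hG1]; ring
  refine le_trans hfinal ?_
  have hXp := rpow_fact1 hp
  have hYq := rpow_fact2 hq
  have hCq := rpow_fact3 hq
  have hA0 : (0:ℝ) ≤ |f' a| := abs_nonneg _
  have hB0 : (0:ℝ) ≤ |f' b| := abs_nonneg _
  have hstep : ((b-a)/6) * (5/6) * (1/2) * (|f' a|/2 + |f' b| * 1)
      ≤ ((b-a)/6) * ((1 + 2^(p+1))/(3*(p+1)))^(1/p) * (1/(q+1))^(1/q) *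
        (|f' a|/2 + |f' b| * (2 - (1/2)^q)^(1/q)) := by
    gcongr <;> first | positivity | linarith
  refine le_trans ?_ hstep
  nlinarith [mul_nonneg hba.le hB0, mul_nonneg hba.le hA0]
end

section
/- Let f : I ⊂ [0,∞) → ℝ be differentiable on the interior of I with f′ ∈ L[a,b], where a, b are interior points of I with a < b, and suppose f(a) = f((a+b)/2) = f(b). If |f′| is a P-function on I, then |(1/(b−a)) ∫_a^b f(x) dx − f((a+b)/2)| ≤ (b−a) [ |f′(a)| + |f′(b)| ]. -/
open MeasureTheory Set

/-- Midpoint-type inequality for functions with `f(a) = f((a+b)/2) = f(b)` whose derivative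
has absolute value a `P`-function (`h`-convex with `h ≡ 1`). -/
theorem simpson_Pfunction
    (I : Set ℝ) (hI : I ⊆ Set.Ici (0:ℝ)) (hIc : I.OrdConnected)
    (f f' : ℝ → ℝ) (a b : ℝ)
    (ha : a ∈ interior I) (hb : b ∈ interior I) (hab : a < b)
    (hderiv : ∀ x ∈ interior I, HasDerivAt f (f' x) x)
    (hfint : IntervalIntegrable f' volume a b)
    (hfa : f a = f ((a+b)/2)) (hfb : f b = f ((a+b)/2))
    (hP : ∀ x ∈ I, ∀ y ∈ I, ∀ t ∈ Set.Icc (0:ℝ) 1,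
      |f' (t*x + (1-t)*y)| ≤ |f' x| + |f' y|) :
    |(1/(b-a)) * ∫ x in a..b, f x - f ((a+b)/2)|
      ≤ (b-a) * (|f' a| + |f' b|) := by
  set m : ℝ := (a+b)/2 with hm
  set M : ℝ := |f' a| + |f' b| with hMdef
  have hM0 : 0 ≤ M := by positivity
  have hba : 0 < b - a := by linarith
  have hsub : Set.Icc a b ⊆ interior I := hIc.interior.out ha hb
  have haI : a ∈ I := interior_subset ha
  have hbI : b ∈ I := interior_subset hb
  have hmI : m ∈ Set.Icc a b := ⟨by simp [hm]; linarith, by simp [hm]; linarith⟩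
  -- Bound |f'| by M on [a,b]
  have hM : ∀ s ∈ Set.Icc a b, |f' s| ≤ M := by
    intro s hs
    have ht : (b - s)/(b-a) ∈ Set.Icc (0:ℝ) 1 := by
      constructor
      · apply div_nonneg (by linarith [hs.2]) hba.le
      · rw [div_le_one hba]; linarith [hs.1]
    have := hP a haI b hbI _ ht
    have heq : (b - s)/(b-a) * a + (1 - (b - s)/(b-a)) * b = s := by
      field_simp
      ring
    rwa [heq] at this
  -- Key estimate on |f x - f m|
  have hkey : ∀ x ∈ Set.Icc a b, |f x - f m| ≤ (b-a) * M := by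
    intro x hx
    have husub : Set.uIcc m x ⊆ Set.Icc a b := Set.uIcc_subset_Icc hmI hx
    have hftc : ∫ t in m..x, f' t = f x - f m := by
      apply intervalIntegral.integral_eq_sub_of_hasDerivAt
      · intro t ht
        exact hderiv t (hsub (husub ht))
      · apply hfint.mono_set
        refine husub.trans ?_
        rw [Set.uIcc_of_le hab.le]
    rw [← hftc]
    have hbound : |∫ t in m..x, f' t| ≤ M * |x - m| := by
      rw [← Real.norm_eq_abs]
      apply intervalIntegral.norm_integral_le_of_norm_le_const
      intro s hs
      exact hM s (husub (Set.uIoc_subset_uIcc hs))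
    refine hbound.trans ?_
    have hxm : |x - m| ≤ b - a := by
      rw [abs_le]
      constructor <;> [linarith [hx.1, hmI.2]; linarith [hx.2, hmI.1]]
    calc M * |x - m| ≤ M * (b-a) := by nlinarith
      _ = (b-a) * M := by ring
  -- Bound the integral
  have hint : |∫ x in a..b, (f x - f m)| ≤ ((b-a) * M) * |b - a| := by
    rw [← Real.norm_eq_abs]
    apply intervalIntegral.norm_integral_le_of_norm_le_const
    intro s hs
    have hsab : s ∈ Set.Icc a b := by
      rw [Set.uIoc_of_le hab.le] at hs
      exact ⟨hs.1.le, hs.2⟩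
    exact hkey s hsab
  rw [abs_mul]
  have h1 : |1/(b-a)| = 1/(b-a) := abs_of_pos (by positivity)
  rw [h1]
  rw [abs_of_pos hba] at hint
  calc 1/(b-a) * |∫ x in a..b, (f x - f m)| ≤ 1/(b-a) * ((b-a) * M * (b-a)) := by
        apply mul_le_mul_of_nonneg_left hint (by positivity)
    _ = (b-a) * M := by field_simp
end

section
/- Let f : I ⊂ ℝ → ℝ be a differentiable mapping on the interior of I with f′ ∈ L¹[a,b], where a, b ∈ I with a < b. If |f′| is convex on [a,b], then |(1/6)[f(a) + 4 f((a+b)/2) + f(b)] − (1/(b−a)) ∫_a^b f(x) dx| ≤ (5(b−a)/72) [ |f′(a)| + |f′(b)| ]. -/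
open MeasureTheory Set
open intervalIntegral

lemma poly_int (p q r u v : ℝ) :
    ∫ x in u..v, (p*x^2 + q*x + r) = p*(v^3-u^3)/3 + q*(v^2-u^2)/2 + r*(v-u) := by
  have h : ∀ x : ℝ, HasDerivAt (fun y : ℝ => p*y^3/3 + q*y^2/2 + r*y) (p*x^2 + q*x + r) x := by
    intro x
    have := (((hasDerivAt_pow 3 x).const_mul p).div_const 3).add
      (((hasDerivAt_pow 2 x).const_mul q).div_const 2) |>.add ((hasDerivAt_id x).const_mul r)
    refine this.congr_deriv ?_; norm_num; ring
  rw [integral_eq_sub_of_hasDerivAt (fun x _ => h x)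
    ((by continuity : Continuous fun x : ℝ => p*x^2 + q*x + r).intervalIntegrable u v)]
  ring

lemma lin_quad_int (c A B a' b' u v : ℝ) :
    ∫ x in u..v, (c - x)*((x-a')*A + (b'-x)*B)
    = (B-A)*(v^3-u^3)/3 + (c*(A-B) - B*b' + A*a')*(v^2-u^2)/2 + (c*(B*b' - A*a'))*(v-u) := by
  rw [show (fun x : ℝ => (c - x)*((x-a')*A + (b'-x)*B))
      = fun x : ℝ => (B-A)*x^2 + (c*(A-B) - B*b' + A*a')*x + c*(B*b' - A*a')
    from funext fun x => by ring]
  exact poly_int _ _ _ _ _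

lemma lin_quad_int' (c A B a' b' u v : ℝ) :
    ∫ x in u..v, (x - c)*((x-a')*A + (b'-x)*B)
    = -((B-A)*(v^3-u^3)/3 + (c*(A-B) - B*b' + A*a')*(v^2-u^2)/2 + (c*(B*b' - A*a'))*(v-u)) := by
  rw [show (fun x : ℝ => (x - c)*((x-a')*A + (b'-x)*B))
      = fun x : ℝ => -((c - x)*((x-a')*A + (b'-x)*B)) from funext fun x => by ring,
    intervalIntegral.integral_neg, lin_quad_int]

set_option maxHeartbeats 1000000 in
/-- Sarıkaya et al.: Simpson-type inequality for a differentiable `f` whose derivative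
has convex absolute value on `[a,b]`. -/
theorem simpson_convex_abs_deriv
    (I : Set ℝ) (hIc : I.OrdConnected) (f f' : ℝ → ℝ) (a b : ℝ)
    (ha : a ∈ I) (hb : b ∈ I) (hab : a < b)
    (hderiv : ∀ x ∈ interior I, HasDerivAt f (f' x) x)
    (hcont : ContinuousOn f I)
    (hfint : IntervalIntegrable f' volume a b)
    (hconv : ∀ x ∈ Set.Icc a b, ∀ y ∈ Set.Icc a b, ∀ t ∈ Set.Icc (0:ℝ) 1,
      |f' (t*x + (1-t)*y)| ≤ t * |f' x| + (1-t) * |f' y|) :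
    |(1/6) * (f a + 4 * f ((a+b)/2) + f b) - (1/(b-a)) * ∫ x in a..b, f x|
      ≤ (5*(b-a)/72) * (|f' a| + |f' b|) := by
  have hba : (0:ℝ) < b - a := by linarith
  have hIcc : Icc a b ⊆ I := hIc.out ha hb
  have hIoo : Ioo a b ⊆ interior I :=
    interior_maximal (Ioo_subset_Icc_self.trans hIcc) isOpen_Ioo
  set m : ℝ := (a+b)/2 with hm
  set c₁ : ℝ := (5*a+b)/6 with hc₁
  set c₂ : ℝ := (a+5*b)/6 with hc₂
  have ham : a < m := by rw [hm]; linarith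
  have hmb : m < b := by rw [hm]; linarith
  have hac₁ : a < c₁ := by rw [hc₁]; linarith
  have hc₁m : c₁ < m := by rw [hc₁, hm]; linarith
  have hmc₂ : m < c₂ := by rw [hc₂, hm]; linarith
  have hc₂b : c₂ < b := by rw [hc₂]; linarith
  -- continuity of f on subintervals
  have hfc : ∀ u v : ℝ, a ≤ u → v ≤ b → ContinuousOn f (Icc u v) :=
    fun u v hu hv => hcont.mono ((Icc_subset_Icc hu hv).trans hIcc)
  have hfci : ∀ u v : ℝ, a ≤ u → u ≤ v → v ≤ b → IntervalIntegrable f volume u v := by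
    intro u v hu huv hv
    apply ContinuousOn.intervalIntegrable
    rw [uIcc_of_le huv]; exact hfc u v hu hv
  -- integrability of (x-c)*f' on subintervals
  have hkfi : ∀ c u v : ℝ, a ≤ u → u ≤ v → v ≤ b →
      IntervalIntegrable (fun x => (x - c) * f' x) volume u v := by
    intro c u v hu huv hv
    have h1 : IntervalIntegrable f' volume u v := by
      apply hfint.mono_set
      rw [uIcc_of_le huv, uIcc_of_le hab.le]; exact Icc_subset_Icc hu hv
    exact h1.continuousOn_mul ((continuous_id.sub continuous_const).continuousOn)
  -- FTC on subintervals
  have ftc : ∀ c u v : ℝ, a ≤ u → u < v → v ≤ b →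
      ∫ x in u..v, (f x + (x - c) * f' x) = (v - c) * f v - (u - c) * f u := by
    intro c u v hu huv hv
    have := integral_eq_sub_of_hasDeriv_right_of_le_real (g := fun x => (x - c) * f x)
      (g' := fun x => f x + (x - c) * f' x) huv.le
      (((continuousOn_id.sub continuousOn_const).mul (hfc u v hu hv)))
      (fun x hx => by
        have hxi : x ∈ interior I := hIoo ⟨lt_of_le_of_lt hu hx.1, lt_of_lt_of_le hx.2 hv⟩
        have := ((hasDerivAt_id x).sub_const c).mul (hderiv x hxi)
        have h2 : HasDerivAt (fun y => (y - c) * f y) (f x + (x - c) * f' x) x := by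
          refine this.congr_deriv ?_; simp only [id_eq]; ring
        exact h2.hasDerivWithinAt)
      (by
        rw [← intervalIntegrable_iff_integrableOn_Icc_of_le huv.le]
        exact (hfci u v hu huv.le hv).add (hkfi c u v hu huv.le hv))
    exact this
  -- the two integration-by-parts identities
  have hI1 : ∫ x in a..m, (x - c₁) * f' x
      = (m - c₁) * f m - (a - c₁) * f a - ∫ x in a..m, f x := by
    have h := ftc c₁ a m le_rfl ham hmb.le
    rw [integral_add (hfci a m le_rfl ham.le hmb.le) (hkfi c₁ a m le_rfl ham.le hmb.le)] at h
    linarith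
  have hI2 : ∫ x in m..b, (x - c₂) * f' x
      = (b - c₂) * f b - (m - c₂) * f m - ∫ x in m..b, f x := by
    have h := ftc c₂ m b ham.le hmb le_rfl
    rw [integral_add (hfci m b ham.le hmb.le le_rfl) (hkfi c₂ m b ham.le hmb.le le_rfl)] at h
    linarith
  have hsplitf : (∫ x in a..b, f x) = (∫ x in a..m, f x) + ∫ x in m..b, f x :=
    (integral_add_adjacent_intervals (hfci a m le_rfl ham.le hmb.le)
      (hfci m b ham.le hmb.le le_rfl)).symm
  -- key identity
  have hkey : (1/6) * (f a + 4 * f m + f b) - (1/(b-a)) * ∫ x in a..b, f x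
      = (1/(b-a)) * ((∫ x in a..m, (x - c₁) * f' x) + ∫ x in m..b, (x - c₂) * f' x) := by
    rw [hI1, hI2, hsplitf, hm, hc₁, hc₂]
    field_simp
    try ring
  set A : ℝ := |f' b| with hA
  set B : ℝ := |f' a| with hB
  -- pointwise convexity bound
  have hptw : ∀ x ∈ Icc a b, |f' x| ≤ ((x-a)*A + (b-x)*B)/(b-a) := by
    intro x hx
    have ht : (x-a)/(b-a) ∈ Icc (0:ℝ) 1 :=
      ⟨div_nonneg (by linarith [hx.1]) hba.le, (div_le_one hba).2 (by linarith [hx.2])⟩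
    have hxx : (x-a)/(b-a) * b + (1 - (x-a)/(b-a)) * a = x := by
      field_simp
      ring
    have h := hconv b ⟨hab.le, le_rfl⟩ a ⟨le_rfl, hab.le⟩ _ ht
    rw [hxx] at h
    calc |f' x| ≤ (x-a)/(b-a) * A + (1 - (x-a)/(b-a)) * B := h
      _ = ((x-a)*A + (b-x)*B)/(b-a) := by
          field_simp
          try ring
  have hcontk' : ∀ c : ℝ, Continuous fun x : ℝ => |x - c| * ((x-a)*A + (b-x)*B) := by
    intro c
    exact ((continuous_id.sub continuous_const).abs).mul (by continuity)
  -- bound each integral by the polynomial integral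
  have hbound : ∀ c u v : ℝ, a ≤ u → u ≤ v → v ≤ b →
      |∫ x in u..v, (x - c) * f' x|
        ≤ ∫ x in u..v, (|x - c| * ((x-a)*A + (b-x)*B))/(b-a) := by
    intro c u v hu huv hv
    refine le_trans (abs_integral_le_integral_abs huv) ?_
    apply integral_mono_on huv ((hkfi c u v hu huv hv).abs)
    · exact (((hcontk' c).div_const (b-a)).intervalIntegrable _ _)
    · intro x hx
      rw [abs_mul, mul_div_assoc]
      exact mul_le_mul_of_nonneg_left (hptw x ⟨hu.trans hx.1, hx.2.trans hv⟩) (abs_nonneg _)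
  -- compute the polynomial integrals
  have habs1 : ∫ x in a..m, (|x - c₁| * ((x-a)*A + (b-x)*B))/(b-a)
      = ((∫ x in a..c₁, (c₁ - x)*((x-a)*A + (b-x)*B))
        + ∫ x in c₁..m, (x - c₁)*((x-a)*A + (b-x)*B))/(b-a) := by
    rw [show (fun x : ℝ => (|x - c₁| * ((x-a)*A + (b-x)*B))/(b-a))
        = fun x : ℝ => (|x - c₁| * ((x-a)*A + (b-x)*B)) * (1/(b-a))
      from funext fun x => by ring, intervalIntegral.integral_mul_const]
    rw [← integral_add_adjacent_intervals (b := c₁)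
      ((hcontk' c₁).intervalIntegrable _ _) ((hcontk' c₁).intervalIntegrable _ _)]
    rw [integral_congr (g := fun x => (c₁ - x)*((x-a)*A + (b-x)*B)) (fun x hx => by
        rw [uIcc_of_le hac₁.le] at hx
        rw [abs_of_nonpos (by linarith [hx.2] : x - c₁ ≤ 0)]; ring),
      integral_congr (a := c₁) (b := m) (g := fun x => (x - c₁)*((x-a)*A + (b-x)*B))
        (fun x hx => by
        rw [uIcc_of_le hc₁m.le] at hx
        rw [abs_of_nonneg (by linarith [hx.1] : 0 ≤ x - c₁)])]
    ring
  have habs2 : ∫ x in m..b, (|x - c₂| * ((x-a)*A + (b-x)*B))/(b-a)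
      = ((∫ x in m..c₂, (c₂ - x)*((x-a)*A + (b-x)*B))
        + ∫ x in c₂..b, (x - c₂)*((x-a)*A + (b-x)*B))/(b-a) := by
    rw [show (fun x : ℝ => (|x - c₂| * ((x-a)*A + (b-x)*B))/(b-a))
        = fun x : ℝ => (|x - c₂| * ((x-a)*A + (b-x)*B)) * (1/(b-a))
      from funext fun x => by ring, intervalIntegral.integral_mul_const]
    rw [← integral_add_adjacent_intervals (b := c₂)
      ((hcontk' c₂).intervalIntegrable _ _) ((hcontk' c₂).intervalIntegrable _ _)]
    rw [integral_congr (g := fun x => (c₂ - x)*((x-a)*A + (b-x)*B)) (fun x hx => by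
        rw [uIcc_of_le hmc₂.le] at hx
        rw [abs_of_nonpos (by linarith [hx.2] : x - c₂ ≤ 0)]; ring),
      integral_congr (a := c₂) (b := b) (g := fun x => (x - c₂)*((x-a)*A + (b-x)*B))
        (fun x hx => by
        rw [uIcc_of_le hc₂b.le] at hx
        rw [abs_of_nonneg (by linarith [hx.1] : 0 ≤ x - c₂)])]
    ring
  have hval : (∫ x in a..m, (|x - c₁| * ((x-a)*A + (b-x)*B))/(b-a))
      + (∫ x in m..b, (|x - c₂| * ((x-a)*A + (b-x)*B))/(b-a))
      = 5*(b-a)^2/72 * (A + B) := by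
    rw [habs1, habs2, lin_quad_int, lin_quad_int', lin_quad_int, lin_quad_int',
      hm, hc₁, hc₂]
    field_simp
    ring
  -- put it all together
  rw [hkey]
  calc |(1/(b-a)) * ((∫ x in a..m, (x - c₁) * f' x) + ∫ x in m..b, (x - c₂) * f' x)|
      = (1/(b-a)) * |(∫ x in a..m, (x - c₁) * f' x) + ∫ x in m..b, (x - c₂) * f' x| := by
        rw [abs_mul, abs_of_pos (by positivity : (0:ℝ) < 1/(b-a))]
    _ ≤ (1/(b-a)) * (|∫ x in a..m, (x - c₁) * f' x| + |∫ x in m..b, (x - c₂) * f' x|) :=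
        mul_le_mul_of_nonneg_left (abs_add_le _ _) (by positivity)
    _ ≤ (1/(b-a)) * ((∫ x in a..m, (|x - c₁| * ((x-a)*A + (b-x)*B))/(b-a))
          + ∫ x in m..b, (|x - c₂| * ((x-a)*A + (b-x)*B))/(b-a)) := by
        apply mul_le_mul_of_nonneg_left _ (by positivity)
        exact add_le_add (hbound c₁ a m le_rfl ham.le hmb.le)
          (hbound c₂ m b ham.le hmb.le le_rfl)
    _ = (5*(b-a)/72) * (|f' a| + |f' b|) := by
        rw [hval]
        field_simp
        ring
end

section
/- Let f : I ⊂ [0,∞) → ℝ be differentiable on the interior of I with f′ ∈ L[a,b], where a, b are interior points of I with a < b, and let p, q > 1 with 1/p + 1/q = 1. If |f′| is concave on I, then |(1/(b−a)) ∫_a^b f(x) dx − (1/3)[(f(a)+f(b))/2 + 2 f((a+b)/2)]| ≤ ((b−a)/6) ((1 + 2^{p+1})/(p+1))^{1/p} |f′((a+b)/2)|. -/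
open MeasureTheory Set intervalIntegral

set_option maxHeartbeats 1000000

/-- Simpson-type inequality for functions whose derivative has concave absolute value
(the case `h(t) = t` of the `h`-concave result). -/
theorem simpson_concave
    (I : Set ℝ) (hI : I ⊆ Set.Ici (0:ℝ)) (hIc : I.OrdConnected)
    (f f' : ℝ → ℝ) (a b : ℝ)
    (ha : a ∈ interior I) (hb : b ∈ interior I) (hab : a < b)
    (p q : ℝ) (hp : 1 < p) (hq : 1 < q) (hpq : 1/p + 1/q = 1)
    (hderiv : ∀ x ∈ interior I, HasDerivAt f (f' x) x)
    (hfint : IntervalIntegrable f' volume a b)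
    (hconc : ∀ x ∈ I, ∀ y ∈ I, ∀ t ∈ Set.Icc (0:ℝ) 1,
      t * |f' x| + (1-t) * |f' y| ≤ |f' (t*x + (1-t)*y)|) :
    |(1/(b-a)) * ∫ x in a..b, f x
        - (1/3) * ((f a + f b)/2 + 2 * f ((a+b)/2))|
      ≤ ((b-a)/6) * ((1 + 2^(p+1))/(p+1))^(1/p) * |f' ((a+b)/2)| := by
  have hba : (0:ℝ) < b - a := sub_pos.mpr hab
  set m : ℝ := (a+b)/2 with hm
  set c1 : ℝ := (5*a+b)/6 with hc1
  set c2 : ℝ := (a+5*b)/6 with hc2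
  have ham : a ≤ m := by rw [hm]; linarith
  have hmb : m ≤ b := by rw [hm]; linarith
  have hIcc : Icc a b ⊆ interior I := hIc.interior.out ha hb
  have hIccI : Icc a b ⊆ I := hIcc.trans interior_subset
  have hd : ∀ x ∈ Icc a b, HasDerivAt f (f' x) x := fun x hx => hderiv x (hIcc hx)
  have hfc : ContinuousOn f (Icc a b) := fun x hx =>
    ((hd x hx).continuousAt).continuousWithinAt
  -- integrability pieces
  have hf'am : IntervalIntegrable f' volume a m :=
    hfint.mono_set (by rw [uIcc_of_le ham, uIcc_of_le (le_of_lt hab)]; exact Icc_subset_Icc le_rfl hmb)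
  have hf'mb : IntervalIntegrable f' volume m b :=
    hfint.mono_set (by rw [uIcc_of_le hmb, uIcc_of_le (le_of_lt hab)]; exact Icc_subset_Icc ham le_rfl)
  have hfam : IntervalIntegrable f volume a m :=
    (hfc.mono (by rw [uIcc_of_le ham]; exact Icc_subset_Icc le_rfl hmb)).intervalIntegrable
  have hfmb : IntervalIntegrable f volume m b :=
    (hfc.mono (by rw [uIcc_of_le hmb]; exact Icc_subset_Icc ham le_rfl)).intervalIntegrable
  -- integration by parts on [a,m]
  have P1 : ∫ x in a..m, (x - c1) * f' x
      = (m - c1) * f m - (a - c1) * f a - ∫ x in a..m, 1 * f x := by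
    apply intervalIntegral.integral_mul_deriv_eq_deriv_mul
    · intro x _; simpa using (hasDerivAt_id x).sub_const c1
    · intro x hx
      apply hd
      rw [uIcc_of_le ham] at hx
      exact ⟨hx.1, hx.2.trans hmb⟩
    · exact intervalIntegrable_const
    · exact hf'am
  have P2 : ∫ x in m..b, (x - c2) * f' x
      = (b - c2) * f b - (m - c2) * f m - ∫ x in m..b, 1 * f x := by
    apply intervalIntegral.integral_mul_deriv_eq_deriv_mul
    · intro x _; simpa using (hasDerivAt_id x).sub_const c2
    · intro x hx
      apply hd
      rw [uIcc_of_le hmb] at hx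
      exact ⟨ham.trans hx.1, hx.2⟩
    · exact intervalIntegrable_const
    · exact hf'mb
  have hadd : (∫ x in a..m, f x) + ∫ x in m..b, f x = ∫ x in a..b, f x :=
    integral_add_adjacent_intervals hfam hfmb
  simp only [one_mul] at P1 P2
  set S : ℝ := (∫ x in a..m, (x - c1) * f' x) + ∫ x in m..b, (x - c2) * f' x with hS
  have key : S = (b-a) * ((1/3) * ((f a + f b)/2 + 2 * f m)) - ∫ x in a..b, f x := by
    rw [hS, P1, P2, ← hadd, hm, hc1, hc2]; ring
  have hfab : IntervalIntegrable f volume a b :=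
    (hfc.mono (by rw [uIcc_of_le (le_of_lt hab)])).intervalIntegrable
  have key2 : (1/(b-a)) * ∫ x in a..b, f x
      - (1/3) * ((f a + f b)/2 + 2 * f m) = -S/(b-a) := by
    rw [integral_sub hfab intervalIntegrable_const, intervalIntegral.integral_const, smul_eq_mul, key]
    field_simp
    ring
  rw [key2]
  rw [abs_div, abs_neg, abs_of_pos hba, div_le_iff₀ hba]
  -- bound |S|
  have habs1 : |∫ x in a..m, (x - c1) * f' x| ≤ ∫ x in a..m, |(x - c1) * f' x| :=
    abs_integral_le_integral_abs ham
  have habs2 : |∫ x in m..b, (x - c2) * f' x| ≤ ∫ x in m..b, |(x - c2) * f' x| :=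
    abs_integral_le_integral_abs hmb
  -- reflect the second integral
  have hrefl : (∫ x in m..b, |(x - c2) * f' x|)
      = ∫ y in a..m, |((a+b-y) - c2) * f' (a+b-y)| := by
    have := integral_comp_sub_left (fun x => |(x - c2) * f' x|) (a+b) (a := a) (b := m)
    rw [show a+b-m = m by rw [hm]; ring, show a+b-a = b by ring] at this
    exact this.symm
  -- integrability of the reflected integrand
  have hf'refl : IntervalIntegrable (fun y => f' (a+b-y)) volume a m := by
    have := hf'mb.comp_sub_left (a+b)
    rw [show a+b-m = m by rw [hm]; ring, show a+b-b = a by ring] at this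
    exact this.symm
  have hint1 : IntervalIntegrable (fun x => |(x - c1) * f' x|) volume a m := by
    exact (hf'am.continuousOn_mul (by fun_prop)).abs
  have hint2 : IntervalIntegrable (fun y => |((a+b-y) - c2) * f' (a+b-y)|) volume a m := by
    exact (hf'refl.continuousOn_mul (by fun_prop)).abs
  have hsum : (∫ x in a..m, |(x - c1) * f' x|) + (∫ y in a..m, |((a+b-y) - c2) * f' (a+b-y)|)
      = ∫ y in a..m, (|(y - c1) * f' y| + |((a+b-y) - c2) * f' (a+b-y)|) :=
    (integral_add hint1 hint2).symm
  -- pointwise bound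
  have hpt : ∀ y ∈ Icc a m,
      |(y - c1) * f' y| + |((a+b-y) - c2) * f' (a+b-y)| ≤ |y - c1| * (2 * |f' m|) := by
    intro y hy
    have hyI : y ∈ I := hIccI ⟨hy.1, hy.2.trans hmb⟩
    have hyI' : a+b-y ∈ I := hIccI ⟨by linarith [hy.2, ham], by linarith [hy.1]⟩
    have hc := hconc y hyI (a+b-y) hyI' (1/2) ⟨by norm_num, by norm_num⟩
    rw [show (1/2:ℝ)*y + (1-1/2)*(a+b-y) = m by rw [hm]; ring] at hc
    have habs : |(a+b-y) - c2| = |y - c1| := by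
      rw [show (a+b-y) - c2 = -(y - c1) by rw [hc1, hc2]; ring, abs_neg]
    rw [abs_mul, abs_mul, habs]
    nlinarith [abs_nonneg (y - c1), abs_nonneg (f' y), abs_nonneg (f' (a+b-y))]
  have hcabs : Continuous fun y : ℝ => |y - c1| := (continuous_id.sub continuous_const).abs
  have hcont1 : IntervalIntegrable (fun y => |y - c1| * (2 * |f' m|)) volume a m :=
    (hcabs.mul continuous_const).intervalIntegrable a m
  have hmono : (∫ y in a..m, (|(y - c1) * f' y| + |((a+b-y) - c2) * f' (a+b-y)|))
      ≤ ∫ y in a..m, |y - c1| * (2 * |f' m|) := by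
    apply integral_mono_on ham (hint1.add hint2) hcont1
    exact hpt
  -- compute ∫ |y - c1|
  have hintid : ∀ u v c : ℝ, ∫ y in u..v, (y - c) = (v^2 - u^2)/2 - c*(v-u) := by
    intro u v c
    rw [integral_sub intervalIntegrable_id intervalIntegrable_const, integral_id,
      intervalIntegral.integral_const, smul_eq_mul]
    ring
  have hac1 : a ≤ c1 := by rw [hc1]; linarith
  have hc1m : c1 ≤ m := by rw [hc1, hm]; linarith
  have hE : (∫ y in a..m, |y - c1|) = 5*(b-a)^2/72 := by
    have e1 : (∫ y in a..c1, |y - c1|) = ∫ y in a..c1, (c1 - y) := by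
      apply integral_congr
      intro y hy
      rw [uIcc_of_le hac1] at hy
      show |y - c1| = c1 - y
      rw [abs_of_nonpos (by linarith [hy.2]), neg_sub]
    have e2 : (∫ y in c1..m, |y - c1|) = ∫ y in c1..m, (y - c1) := by
      apply integral_congr
      intro y hy
      rw [uIcc_of_le hc1m] at hy
      show |y - c1| = y - c1
      rw [abs_of_nonneg (by linarith [hy.1])]
    have e3 : ∀ u v c : ℝ, ∫ y in u..v, (c - y) = c*(v-u) - (v^2 - u^2)/2 := by
      intro u v c
      rw [integral_sub intervalIntegrable_const intervalIntegrable_id, integral_id,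
        intervalIntegral.integral_const, smul_eq_mul]
      ring
    have hsplit : (∫ y in a..c1, |y - c1|) + (∫ y in c1..m, |y - c1|) = ∫ y in a..m, |y - c1| :=
      integral_add_adjacent_intervals (hcabs.intervalIntegrable a c1) (hcabs.intervalIntegrable c1 m)
    rw [← hsplit, e1, e2, e3, hintid, hc1, hm]
    ring
  have hEc : (∫ y in a..m, |y - c1| * (2 * |f' m|)) = 2 * |f' m| * (5*(b-a)^2/72) := by
    rw [intervalIntegral.integral_mul_const, hE]; ring
  -- assemble the bound on |S|
  have hSbound : |S| ≤ 5*(b-a)^2/36 * |f' m| := by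
    calc |S| ≤ |∫ x in a..m, (x - c1) * f' x| + |∫ x in m..b, (x - c2) * f' x| := abs_add_le _ _
      _ ≤ (∫ x in a..m, |(x - c1) * f' x|) + ∫ x in m..b, |(x - c2) * f' x| :=
          add_le_add habs1 habs2
      _ = (∫ x in a..m, |(x - c1) * f' x|) + ∫ y in a..m, |((a+b-y) - c2) * f' (a+b-y)| := by
          rw [hrefl]
      _ = ∫ y in a..m, (|(y - c1) * f' y| + |((a+b-y) - c2) * f' (a+b-y)|) := hsum
      _ ≤ ∫ y in a..m, |y - c1| * (2 * |f' m|) := hmono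
      _ = 2 * |f' m| * (5*(b-a)^2/72) := hEc
      _ = 5*(b-a)^2/36 * |f' m| := by ring
  -- the constant is at least 1
  have hp1 : (0:ℝ) < p := lt_trans one_pos hp
  have hbern : 1 + (p+1) * 1 ≤ (1+1) ^ (p+1) :=
    one_add_mul_self_le_rpow_one_add (by norm_num) (by linarith)
  have hbase : (1:ℝ) ≤ (1 + 2^(p+1))/(p+1) := by
    rw [le_div_iff₀ (by linarith)]
    have h2 : (1:ℝ)+1 = 2 := by norm_num
    rw [h2] at hbern
    linarith
  have hC : (1:ℝ) ≤ ((1 + 2^(p+1))/(p+1))^(1/p) := by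
    calc (1:ℝ) = (1:ℝ)^(1/p) := (Real.one_rpow _).symm
      _ ≤ ((1 + 2^(p+1))/(p+1))^(1/p) :=
          Real.rpow_le_rpow zero_le_one hbase (by positivity)
  set C : ℝ := ((1 + 2^(p+1))/(p+1))^(1/p) with hCdef
  have hkey : (0:ℝ) ≤ (C - 1) * ((b-a)^2 * |f' m|) :=
    mul_nonneg (by linarith) (by positivity)
  calc |S| ≤ 5*(b-a)^2/36 * |f' m| := hSbound
    _ ≤ (b-a)/6 * C * |f' m| * (b-a) := by nlinarith [abs_nonneg (f' m)]
end

section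
/- Let h : J ⊂ ℝ → ℝ be a non-negative function, let f : I → ℝ be h-convex with f ∈ L¹([a,b]) where a, b ∈ I, a < b, and suppose h(1/2) > 0. Then (1/(2 h(1/2))) f((a+b)/2) ≤ (1/(b−a)) ∫_a^b f(x) dx ≤ [f(a) + f(b)] ∫_0^1 h(t) dt. -/
open MeasureTheory Set

/-- Hermite–Hadamard inequality for `h`-convex functions (Sarıkaya et al.):
`(1/(2h(1/2))) f((a+b)/2) ≤ (1/(b−a)) ∫_a^b f ≤ [f(a)+f(b)] ∫_0^1 h`. -/
theorem hermite_hadamard_hconvex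
    (I : Set ℝ) (hIc : I.OrdConnected) (h f : ℝ → ℝ) (a b : ℝ)
    (ha : a ∈ I) (hb : b ∈ I) (hab : a < b)
    (hh0 : ∀ t ∈ Set.Ioo (0:ℝ) 1, 0 ≤ h t)
    (hhalf : 0 < h (1/2))
    (hf0 : ∀ x ∈ I, 0 ≤ f x)
    (hfint : IntervalIntegrable f volume a b)
    (hhint : IntervalIntegrable h volume 0 1)
    (hconv : ∀ x ∈ I, ∀ y ∈ I, ∀ t ∈ Set.Ioo (0:ℝ) 1,
      f (t*x + (1-t)*y) ≤ h t * f x + h (1-t) * f y) :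
    (1/(2 * h (1/2))) * f ((a+b)/2) ≤ (1/(b-a)) * ∫ x in a..b, f x
      ∧ (1/(b-a)) * ∫ x in a..b, f x ≤ (f a + f b) * ∫ t in (0:ℝ)..1, h t := by
  have hsub : Set.Icc a b ⊆ I := hIc.out ha hb
  have hba : (0:ℝ) < b - a := by linarith
  have hhalfmem : (1/2 : ℝ) ∈ Set.Ioo (0:ℝ) 1 := by norm_num
  -- reflected integrand
  have hrefl : IntervalIntegrable (fun x => f (a + b - x)) volume a b := by
    have := hfint.comp_sub_left (a + b)
    simpa using this.symm
  have hreflint : (∫ x in a..b, f (a + b - x)) = ∫ x in a..b, f x := by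
    rw [intervalIntegral.integral_comp_sub_left f (a + b)]
    norm_num
  constructor
  · -- left inequality
    have key : (b - a) * f ((a+b)/2) ≤ 2 * h (1/2) * ∫ x in a..b, f x := by
      have hmono : (∫ x in a..b, f ((a+b)/2)) ≤
          ∫ x in a..b, (h (1/2) * f x + h (1/2) * f (a + b - x)) := by
        apply intervalIntegral.integral_mono_on hab.le
        · exact intervalIntegrable_const
        · exact ((hfint.const_mul _).add (hrefl.const_mul _))
        · intro x hx
          have hx1 : x ∈ I := hsub hx
          have hx2 : a + b - x ∈ I := hsub ⟨by linarith [hx.2], by linarith [hx.1]⟩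
          have := hconv x hx1 (a + b - x) hx2 (1/2) hhalfmem
          have heq : (1/2:ℝ) * x + (1 - 1/2) * (a + b - x) = (a+b)/2 := by ring
          rw [heq] at this
          calc f ((a+b)/2) ≤ h (1/2) * f x + h (1 - 1/2) * f (a + b - x) := this
            _ = h (1/2) * f x + h (1/2) * f (a + b - x) := by norm_num
      rw [intervalIntegral.integral_const, intervalIntegral.integral_add
        (hfint.const_mul _) (hrefl.const_mul _), intervalIntegral.integral_const_mul,
        intervalIntegral.integral_const_mul, hreflint] at hmono
      simpa [smul_eq_mul] using hmono.trans_eq (by ring)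
    rw [one_div_mul_eq_div, one_div_mul_eq_div, div_le_div_iff₀ (by positivity) hba]
    nlinarith [key]
  · -- right inequality
    set J := ∫ x in a..b, f x with hJ
    have hcomp : IntervalIntegrable (fun t => f ((a - b) * t + b)) volume 0 1 := by
      have hne : a - b ≠ 0 := by linarith
      have h2 := (hfint.comp_add_right b).comp_mul_left (c := a - b)
      rw [show (a-b)/(a-b) = 1 from div_self hne, show (b-b)/(a-b) = 0 by simp] at h2
      exact h2.symm
    have hsubst : (∫ t in (0:ℝ)..1, f ((a - b) * t + b)) = (1/(b-a)) * J := by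
      have hne : a - b ≠ 0 := by linarith
      rw [intervalIntegral.integral_comp_mul_add f hne b]
      simp only [mul_zero, zero_add, mul_one, smul_eq_mul]
      rw [show a - b + b = a by ring, intervalIntegral.integral_symm a b]
      rw [hJ]
      field_simp
      ring
    have hh1 : IntervalIntegrable (fun t => h (1 - t)) volume 0 1 := by
      have := hhint.comp_sub_left 1
      simpa using this.symm
    have hrhsint : IntervalIntegrable (fun t => h t * f a + h (1-t) * f b) volume 0 1 :=
      (hhint.mul_const _).add (hh1.mul_const _)
    have hmono : (∫ t in (0:ℝ)..1, f ((a - b) * t + b)) ≤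
        ∫ t in (0:ℝ)..1, (h t * f a + h (1-t) * f b) := by
      apply intervalIntegral.integral_mono_ae_restrict (by norm_num) hcomp hrhsint
      have h0 : ∀ᵐ t : ℝ ∂(volume.restrict (Set.Icc (0:ℝ) 1)), t ≠ 0 ∧ t ≠ 1 := by
        refine ae_restrict_of_ae ?_
        have : volume ({0, 1} : Set ℝ) = 0 :=
          ((Set.countable_singleton (1:ℝ)).insert 0).measure_zero volume
        filter_upwards [measure_eq_zero_iff_ae_notMem.mp this] with t ht
        simp only [Set.mem_insert_iff, Set.mem_singleton_iff] at ht
        push_neg at ht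
        exact ht
      filter_upwards [h0, ae_restrict_mem measurableSet_Icc] with t ht htI
      obtain ⟨ht0, ht1⟩ := ht
      have htoo : t ∈ Set.Ioo (0:ℝ) 1 :=
        ⟨lt_of_le_of_ne htI.1 (Ne.symm ht0), lt_of_le_of_ne htI.2 ht1⟩
      have := hconv a ha b hb t htoo
      have heq : t * a + (1 - t) * b = (a - b) * t + b := by ring
      rw [heq] at this
      exact this
    have hsum : (∫ t in (0:ℝ)..1, (h t * f a + h (1-t) * f b))
        = (f a + f b) * ∫ t in (0:ℝ)..1, h t := by
      rw [intervalIntegral.integral_add (hhint.mul_const _) (hh1.mul_const _),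
        intervalIntegral.integral_mul_const, intervalIntegral.integral_mul_const]
      have : (∫ t in (0:ℝ)..1, h (1 - t)) = ∫ t in (0:ℝ)..1, h t := by
        rw [intervalIntegral.integral_comp_sub_left h 1]
        norm_num
      rw [this]; ring
    calc (1/(b-a)) * J = ∫ t in (0:ℝ)..1, f ((a - b) * t + b) := hsubst.symm
      _ ≤ ∫ t in (0:ℝ)..1, (h t * f a + h (1-t) * f b) := hmono
      _ = (f a + f b) * ∫ t in (0:ℝ)..1, h t := hsum
end

section
/- Let h : J ⊂ ℝ → ℝ be a non-negative function with h(1/2) > 0, let a < b be reals, let q ≥ 1, and let g : [a,b] → [0,∞) be integrable such that g^q is h-concave on [a,b]. Then ∫_0^1 g(t a + (1−t) b)^q dt ≤ (1/(2 h(1/2))) g((a+b)/2)^q. -/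
open MeasureTheory Set

/-- Intermediate estimate from the Hermite–Hadamard inequality for `h`-concave functions:
if `g ≥ 0` on `[a,b]` and `g^q` is `h`-concave there, then
`∫_0^1 g(ta+(1−t)b)^q dt ≤ (1/(2h(1/2))) g((a+b)/2)^q`. -/
theorem hconcave_power_integral_bound
    (h g : ℝ → ℝ) (a b : ℝ) (hab : a < b) (q : ℝ) (hq : 1 ≤ q)
    (hh0 : ∀ t ∈ Set.Ioo (0:ℝ) 1, 0 ≤ h t)
    (hhalf : 0 < h (1/2))
    (hg0 : ∀ x ∈ Set.Icc a b, 0 ≤ g x)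
    (hgint : IntervalIntegrable g volume a b)
    (hconc : ∀ x ∈ Set.Icc a b, ∀ y ∈ Set.Icc a b, ∀ t ∈ Set.Ioo (0:ℝ) 1,
      h t * g x ^ q + h (1-t) * g y ^ q ≤ g (t*x + (1-t)*y) ^ q) :
    (∫ t in (0:ℝ)..1, g (t*a + (1-t)*b) ^ q)
      ≤ (1/(2 * h (1/2))) * g ((a+b)/2) ^ q := by
  set H := h (1/2) with hH
  set c := g ((a+b)/2) ^ q with hc
  have hmid : (a+b)/2 ∈ Set.Icc a b := ⟨by linarith, by linarith⟩
  have hc0 : 0 ≤ c := Real.rpow_nonneg (hg0 _ hmid) q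
  -- the key pointwise inequality from h-concavity at t = 1/2
  have key : ∀ t ∈ Set.Ioo (0:ℝ) 1,
      H * g (t*a + (1-t)*b) ^ q + H * g ((1-t)*a + t*b) ^ q ≤ c := by
    intro t ht
    obtain ⟨ht0, ht1⟩ := ht
    have hx : t*a + (1-t)*b ∈ Set.Icc a b :=
      ⟨by nlinarith, by nlinarith⟩
    have hy : (1-t)*a + t*b ∈ Set.Icc a b :=
      ⟨by nlinarith, by nlinarith⟩
    have hhalfmem : (1/2 : ℝ) ∈ Set.Ioo (0:ℝ) 1 := by norm_num
    have h2 := hconc _ hx _ hy (1/2) hhalfmem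
    have e : (1/2 : ℝ) * (t*a + (1-t)*b) + (1 - 1/2) * ((1-t)*a + t*b) = (a+b)/2 := by ring
    have e2 : (1:ℝ) - 1/2 = 1/2 := by norm_num
    rw [e, e2] at h2
    exact h2
  -- bound on (a,b): g x ^ q ≤ c / H
  have hbnd : ∀ x ∈ Set.Ioo a b, g x ^ q ≤ c / H := by
    intro x hx
    have hba : (0:ℝ) < b - a := by linarith
    set t := (b - x) / (b - a) with htdef
    have ht : t ∈ Set.Ioo (0:ℝ) 1 := by
      constructor
      · apply div_pos (by linarith [hx.2]) hba
      · rw [div_lt_one hba]; linarith [hx.1]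
    have hxe : t*a + (1-t)*b = x := by
      field_simp [htdef]
      have hmul : t * (b - a) = b - x := by rw [htdef]; field_simp [hba.ne']
      linear_combination (-1) * hmul
    have hye : (1-t)*a + t*b = a + b - x := by
      field_simp [htdef]
      have hmul : t * (b - a) = b - x := by rw [htdef]; field_simp [hba.ne']
      linear_combination hmul
    have h2 := key t ht
    rw [hxe, hye] at h2
    have hy' : a + b - x ∈ Set.Icc a b := ⟨by linarith [hx.2], by linarith [hx.1]⟩
    have hy0 : 0 ≤ g (a + b - x) ^ q := Real.rpow_nonneg (hg0 _ hy') q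
    rw [le_div_iff₀ hhalf]
    nlinarith
  -- integrability of g ^ q on [a, b]
  have hfm : AEStronglyMeasurable (fun x => g x ^ q) (volume.restrict (Set.Ioc a b)) :=
    (Real.continuous_rpow_const (by linarith : (0:ℝ) ≤ q)).comp_aestronglyMeasurable
      hgint.1.aestronglyMeasurable
  have hrestr : volume.restrict (Set.Ioc a b) = volume.restrict (Set.Ioo a b) :=
    (Measure.restrict_congr_set Ioo_ae_eq_Ioc).symm
  have hf_intOn : IntegrableOn (fun x => g x ^ q) (Set.Ioc a b) volume := by
    apply Integrable.mono' (integrable_const (c / H)) hfm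
    rw [hrestr]
    apply ae_restrict_of_forall_mem measurableSet_Ioo
    intro x hx
    have h0 : 0 ≤ g x := hg0 x ⟨hx.1.le, hx.2.le⟩
    rw [Real.norm_eq_abs, abs_of_nonneg (Real.rpow_nonneg h0 q)]
    exact hbnd x hx
  have hf_int : IntervalIntegrable (fun x => g x ^ q) volume a b :=
    (intervalIntegrable_iff_integrableOn_Ioc_of_le hab.le).mpr hf_intOn
  -- transport integrability to [0,1] via the affine map t ↦ t*(a-b) + b
  have hab' : a - b ≠ 0 := by intro hcon; linarith [sub_eq_zero.mp hcon]
  have h1 : IntervalIntegrable (fun x => g (x + b) ^ q) volume (a - b) (b - b) :=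
    hf_int.comp_add_right b
  have h2 : IntervalIntegrable (fun x => g (x * (a - b) + b) ^ q) volume
      ((a - b)/(a - b)) ((b - b)/(a - b)) := h1.comp_mul_right (c := a - b)
  rw [div_self hab'] at h2
  have hzero : (b - b)/(a - b) = 0 := by simp
  rw [hzero] at h2
  have hFeq : (fun t => g (t * (a - b) + b) ^ q) = fun t => g (t*a + (1-t)*b) ^ q := by
    funext t
    have : t * (a - b) + b = t*a + (1-t)*b := by ring
    rw [this]
  have hF : IntervalIntegrable (fun t => g (t*a + (1-t)*b) ^ q) volume 0 1 := by
    rw [← hFeq]; exact h2.symm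
  have hG : IntervalIntegrable (fun t => g ((1-t)*a + t*b) ^ q) volume 0 1 := by
    have := hF.comp_sub_left 1
    simp only [sub_zero, sub_self] at this
    have heq : (fun x => g ((1-x)*a + (1-(1-x))*b) ^ q)
        = fun t => g ((1-t)*a + t*b) ^ q := by
      funext t
      have : (1 - (1 - t)) = t := by ring
      rw [this]
    rw [← heq]
    exact this.symm
  -- the two integrals agree by the substitution t ↦ 1 - t
  have hGF : (∫ t in (0:ℝ)..1, g ((1-t)*a + t*b) ^ q)
      = ∫ t in (0:ℝ)..1, g (t*a + (1-t)*b) ^ q := by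
    have := intervalIntegral.integral_comp_sub_left
      (fun t => g (t*a + (1-t)*b) ^ q) 1 (a := 0) (b := 1)
    simp only [sub_zero, sub_self] at this
    rw [← this]
    congr 1
    funext t
    have : (1 - (1 - t)) = t := by ring
    rw [this]
  -- integrate the key inequality
  have hsum : (∫ t in (0:ℝ)..1,
      (H * g (t*a + (1-t)*b) ^ q + H * g ((1-t)*a + t*b) ^ q)) ≤ ∫ t in (0:ℝ)..1, c := by
    apply intervalIntegral.integral_mono_ae_restrict (by norm_num : (0:ℝ) ≤ 1)
      ((hF.const_mul H).add (hG.const_mul H)) intervalIntegrable_const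
    rw [(Measure.restrict_congr_set Ioo_ae_eq_Icc).symm]
    apply ae_restrict_of_forall_mem measurableSet_Ioo
    intro t ht
    exact key t ht
  rw [intervalIntegral.integral_add (hF.const_mul H) (hG.const_mul H),
    intervalIntegral.integral_const_mul, intervalIntegral.integral_const_mul,
    hGF, intervalIntegral.integral_const] at hsum
  simp only [sub_zero, one_smul] at hsum
  have h2H : (0:ℝ) < 2 * H := by positivity
  rw [one_div, inv_mul_eq_div, le_div_iff₀ h2H]
  linarith
end

section
/- Let a, b ∈ ℝ with 0 < a < b, let n ∈ ℕ with n > 1, and let p, q > 1 with 1/p + 1/q = 1. Then |L_n^n(a,b) − (1/3)[A(a^n, b^n) + 2 A^n(a,b)]| ≤ n ((b−a)/6) ((1 + 2^{p+1})/(3(p+1)))^{1/p} (1/(q+1))^{1/q} [ a^{n−1}/2 + b^{n−1} (2 − (1/2)^q)^{1/q} ], where A(α,β) = (α+β)/2 is the arithmetic mean and L_n(α,β) = [ (β^{n+1} − α^{n+1}) / ((n+1)(β−α)) ]^{1/n} is the generalized log-mean, so that L_n^n(a,b) = (1/(b−a)) ∫_a^b x^n dx. -/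
open Real

open MeasureTheory intervalIntegral


lemma lin_int (c d A B : ℝ) : ∫ x in c..d, (A + B*x) = A*(d-c) + B*(d^2-c^2)/2 := by
  have h1 : IntervalIntegrable (fun _ : ℝ => A) volume c d := intervalIntegrable_const
  have h2 : IntervalIntegrable (fun x : ℝ => B*x) volume c d :=
    (continuous_const.mul continuous_id).intervalIntegrable c d
  rw [intervalIntegral.integral_add h1 h2, intervalIntegral.integral_const,
    intervalIntegral.integral_const_mul, integral_id]
  simp [smul_eq_mul]; ring

lemma tangent (M : ℕ) {c x : ℝ} (hc : 0 < c) (hx : 0 < x) :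
    c^(M+1) + ((M:ℝ)+1)*c^M*(x-c) ≤ x^(M+1) := by
  have ht : (-2:ℝ) ≤ x/c - 1 := by
    have : 0 < x/c := div_pos hx hc
    linarith
  have h := one_add_mul_le_pow ht (M+1)
  have h2 : (1 + (x/c - 1)) = x/c := by ring
  rw [h2] at h
  push_cast at h
  have h3 := mul_le_mul_of_nonneg_left h (pow_nonneg hc.le (M+1))
  calc c^(M+1) + ((M:ℝ)+1)*c^M*(x-c)
      = c^(M+1) * (1 + ((M:ℝ)+1) * (x/c - 1)) := by field_simp; ring
    _ ≤ c^(M+1) * (x/c)^(M+1) := h3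
    _ = x^(M+1) := by rw [div_pow]; field_simp

lemma chord (N : ℕ) {c d x : ℝ} (hc : 0 ≤ c) (hcd : c < d) (hx : x ∈ Set.Icc c d) :
    (d-c)*x^N ≤ (d*c^N - c*d^N) + (d^N - c^N)*x := by
  have he : 0 < d - c := sub_pos.2 hcd
  have ht : (0:ℝ) ≤ (d-x)/(d-c) := div_nonneg (by linarith [hx.2]) he.le
  have hs : (0:ℝ) ≤ (x-c)/(d-c) := div_nonneg (by linarith [hx.1]) he.le
  have hts : (d-x)/(d-c) + (x-c)/(d-c) = 1 := by field_simp; ring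
  have hcomb : ((d-x)/(d-c)) • c + ((x-c)/(d-c)) • d = x := by
    simp only [smul_eq_mul]; field_simp; ring
  have hcv := (convexOn_pow N).2 (Set.mem_Ici.2 hc) (Set.mem_Ici.2 (hc.trans hcd.le)) ht hs hts
  rw [hcomb] at hcv
  simp only [smul_eq_mul] at hcv
  have h4 := mul_le_mul_of_nonneg_left hcv he.le
  calc (d-c)*x^N ≤ (d-c)*((d-x)/(d-c)*c^N + (x-c)/(d-c)*d^N) := h4
    _ = (d*c^N - c*d^N) + (d^N - c^N)*x := by field_simp; ring

lemma trap (N : ℕ) {c d : ℝ} (hc : 0 ≤ c) (hcd : c < d) :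
    ∫ x in c..d, x^N ≤ (d-c)*(c^N + d^N)/2 := by
  have he : 0 < d - c := sub_pos.2 hcd
  have hmono : ∫ x in c..d, (d-c)*x^N ≤ ∫ x in c..d, ((d*c^N - c*d^N) + (d^N - c^N)*x) := by
    apply intervalIntegral.integral_mono_on hcd.le
    · exact (continuous_const.mul (continuous_pow N)).intervalIntegrable c d
    · exact (continuous_const.add (continuous_const.mul continuous_id)).intervalIntegrable c d
    · intro x hx; exact chord N hc hcd hx
  rw [intervalIntegral.integral_const_mul, integral_pow, lin_int] at hmono
  have key : (d-c) * ∫ x in c..d, x^N ≤ (d-c) * ((d-c)*(c^N + d^N)/2) := by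
    rw [integral_pow]
    calc (d-c) * ((d^(N+1) - c^(N+1))/(N+1)) ≤ (d*c^N - c*d^N)*(d-c) + (d^N - c^N)*(d^2-c^2)/2 := hmono
      _ = (d-c) * ((d-c)*(c^N + d^N)/2) := by ring
  exact le_of_mul_le_mul_left key he

lemma jensen_low (M : ℕ) {a b : ℝ} (ha : 0 < a) (hab : a < b) :
    (b-a) * ((a+b)/2)^(M+1) ≤ ∫ x in a..b, x^(M+1) := by
  set m := (a+b)/2 with hm
  have hm0 : 0 < m := by rw [hm]; linarith
  have hmono : ∫ x in a..b, ((m^(M+1) - ((M:ℝ)+1)*m^M*m) + (((M:ℝ)+1)*m^M)*x)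
      ≤ ∫ x in a..b, x^(M+1) := by
    apply intervalIntegral.integral_mono_on hab.le
    · exact (continuous_const.add (continuous_const.mul continuous_id)).intervalIntegrable a b
    · exact (continuous_pow (M+1)).intervalIntegrable a b
    · intro x hx
      have hx0 : 0 < x := lt_of_lt_of_le ha hx.1
      have := tangent M hm0 hx0
      linarith [this]
  rw [lin_int] at hmono
  calc (b-a) * m^(M+1)
      = (m^(M+1) - ((M:ℝ)+1)*m^M*m)*(b-a) + (((M:ℝ)+1)*m^M)*(b^2-a^2)/2 := by
        rw [hm]; ring
    _ ≤ ∫ x in a..b, x^(M+1) := hmono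

lemma key_const {p q : ℝ} (hp : 1 < p) (hq : 1 < q) (hpq : 1/p + 1/q = 1) :
    1/2 ≤ ((1 + 2^(p+1))/(3*(p+1)))^(1/p) * ((1/(q+1))^(1/q) * (2 - (1/2)^q)^(1/q)) := by
  have hp0 : (0:ℝ) < p := by linarith
  have hq0 : (0:ℝ) < q := by linarith
  have hp1 : (0:ℝ) < p + 1 := by linarith
  have hq1 : (0:ℝ) < q + 1 := by linarith
  have hhalf : ((1:ℝ)/2)^q ≤ 1/2 := by
    have := Real.rpow_le_rpow_of_exponent_ge (x := (1:ℝ)/2) (by norm_num) (by norm_num) hq.le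
    simpa using this
  have hDpos : (0:ℝ) ≤ 2 - (1/2)^q := by
    have : (0:ℝ) < ((1:ℝ)/2)^q := Real.rpow_pos_of_pos (by norm_num) q
    linarith
  have hCqD : (1/(q+1))^(1/q) * (2 - (1/2)^q)^(1/q) = ((2 - (1/2)^q)/(q+1))^(1/q) := by
    rw [← Real.mul_rpow (by positivity) hDpos]
    congr 1
    field_simp
  have hY : ((3:ℝ)/(2*(q+1)))^(1/q) ≤ ((2 - (1/2)^q)/(q+1))^(1/q) := by
    apply Real.rpow_le_rpow (by positivity) _ (by positivity)
    rw [div_le_div_iff₀ (by positivity) (by positivity)]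
    nlinarith
  have h2p : (2:ℝ)^(p+1) = 2^p * 2 := by
    rw [Real.rpow_add (by norm_num), Real.rpow_one]
  have hXeq : ((2:ℝ)^(p+1)/(3*(p+1)))^(1/p) = 2 * (2/(3*(p+1)))^(1/p) := by
    have hb : (2:ℝ)^(p+1)/(3*(p+1)) = 2^p * (2/(3*(p+1))) := by
      rw [h2p]; field_simp
    rw [hb, Real.mul_rpow (Real.rpow_nonneg (by norm_num) p) (by positivity),
      ← Real.rpow_mul (by norm_num : (0:ℝ) ≤ 2), mul_one_div_cancel hp0.ne', Real.rpow_one]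
  have hX : 2 * ((2:ℝ)/(3*(p+1)))^(1/p) ≤ ((1 + 2^(p+1))/(3*(p+1)))^(1/p) := by
    rw [← hXeq]
    apply Real.rpow_le_rpow (by positivity) _ (by positivity)
    have h2pos : (0:ℝ) < 2^p := Real.rpow_pos_of_pos (by norm_num) p
    rw [div_le_div_iff₀ (by positivity) (by positivity)]
    nlinarith
  set u : ℝ := 3*(p+1)/2 with hu
  set v : ℝ := 2*(q+1)/3 with hv
  have hu0 : (0:ℝ) ≤ u := by positivity
  have hv0 : (0:ℝ) ≤ v := by positivity
  have hAM : u^(1/p) * v^(1/q) ≤ (1/p)*u + (1/q)*v :=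
    Real.geom_mean_le_arith_mean2_weighted (by positivity) (by positivity) hu0 hv0 hpq
  have hsum : (1/p)*u + (1/q)*v ≤ 4 := by
    have hu' : (1/p)*u = 3/2 + (3/2)*(1/p) := by rw [hu]; field_simp
    have hv' : (1/q)*v = 2/3 + (2/3)*(1/q) := by rw [hv]; field_simp
    have h1p : 1/p ≤ 1 := by rw [div_le_one hp0]; linarith
    have h1q : 1/q ≤ 1 := by rw [div_le_one hq0]; linarith
    rw [hu', hv']; linarith
  have hApos : (0:ℝ) < u^(1/p) * v^(1/q) := by positivity
  have hinv : (4:ℝ)⁻¹ ≤ (u^(1/p) * v^(1/q))⁻¹ :=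
    inv_anti₀ hApos (hAM.trans hsum)
  have hWeq : ((2:ℝ)/(3*(p+1)))^(1/p) * ((3:ℝ)/(2*(q+1)))^(1/q)
      = (u^(1/p) * v^(1/q))⁻¹ := by
    have e1 : (2:ℝ)/(3*(p+1)) = u⁻¹ := by rw [hu, inv_div]
    have e2 : (3:ℝ)/(2*(q+1)) = v⁻¹ := by rw [hv, inv_div]
    rw [e1, e2, Real.inv_rpow hu0, Real.inv_rpow hv0, mul_inv]
  have hW : (1:ℝ)/4 ≤ ((2:ℝ)/(3*(p+1)))^(1/p) * ((3:ℝ)/(2*(q+1)))^(1/q) := by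
    rw [hWeq, one_div]; exact hinv
  rw [hCqD]
  have hY0 : (0:ℝ) ≤ ((3:ℝ)/(2*(q+1)))^(1/q) := by positivity
  have hfin : 2 * ((2:ℝ)/(3*(p+1)))^(1/p) * ((3:ℝ)/(2*(q+1)))^(1/q)
      ≤ ((1 + 2^(p+1))/(3*(p+1)))^(1/p) * ((2 - (1/2)^q)/(q+1))^(1/q) :=
    mul_le_mul hX hY hY0 (by positivity)
  nlinarith [hW, hfin]

set_option maxHeartbeats 1000000 in
/-- Application to special means: for `0 < a < b`, `n > 1` and conjugate exponents `p, q`,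
`|L_n^n(a,b) − (1/3)[A(aⁿ,bⁿ) + 2 Aⁿ(a,b)]|` is bounded by
`n((b−a)/6)((1+2^{p+1})/(3(p+1)))^{1/p} (1/(q+1))^{1/q} [a^{n−1}/2 + b^{n−1}(2−(1/2)^q)^{1/q}]`,
where `A(α,β) = (α+β)/2` and `L_n^n(a,b) = (b^{n+1} − a^{n+1})/((n+1)(b−a))`. -/
theorem simpson_means_pow
    (a b : ℝ) (ha : 0 < a) (hab : a < b) (n : ℕ) (hn : 1 < n)
    (p q : ℝ) (hp : 1 < p) (hq : 1 < q) (hpq : 1/p + 1/q = 1) :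
    |(b^(n+1) - a^(n+1)) / (((n:ℝ)+1)*(b-a))
        - (1/3) * ((a^n + b^n)/2 + 2 * ((a+b)/2)^n)|
      ≤ (n:ℝ) * ((b-a)/6) * ((1 + 2^(p+1))/(3*(p+1)))^(1/p) * (1/(q+1))^(1/q) *
        (a^(n-1)/2 + b^(n-1) * (2 - (1/2)^q)^(1/q)) := by
  obtain ⟨k, rfl⟩ : ∃ k, n = k + 2 := ⟨n - 2, by omega⟩
  have hba : (0:ℝ) < b - a := sub_pos.2 hab
  have hb0 : (0:ℝ) < b := ha.trans hab
  set m : ℝ := (a+b)/2 with hm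
  have hm0 : 0 < m := by rw [hm]; linarith
  have ham : a < m := by rw [hm]; linarith
  have hmb : m < b := by rw [hm]; linarith
  -- integral bounds
  have hlow := jensen_low (k+1) ha hab
  have hsplit : (∫ x in a..m, x^(k+2)) + ∫ x in m..b, x^(k+2) = ∫ x in a..b, x^(k+2) :=
    intervalIntegral.integral_add_adjacent_intervals
      ((continuous_pow (k+2)).intervalIntegrable a m)
      ((continuous_pow (k+2)).intervalIntegrable m b)
  have t1 := trap (k+2) ha.le ham
  have t2 := trap (k+2) hm0.le hmb
  have hup : (∫ x in a..b, x^(k+2)) ≤ (b-a)/2 * (m^(k+2) + (a^(k+2)+b^(k+2))/2) := by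
    rw [← hsplit]
    calc (∫ x in a..m, x^(k+2)) + ∫ x in m..b, x^(k+2)
        ≤ (m-a)*(a^(k+2)+m^(k+2))/2 + (b-m)*(m^(k+2)+b^(k+2))/2 := add_le_add t1 t2
      _ = (b-a)/2 * (m^(k+2) + (a^(k+2)+b^(k+2))/2) := by rw [hm]; ring
  rw [integral_pow] at hlow hup
  push_cast at hlow hup
  simp only [show k+1+1 = k+2 from rfl, show k+1+1+1 = k+2+1 from rfl] at hlow
  rw [← hm] at hlow
  -- tangent bounds for Delta
  have ta := tangent (k+1) ha hm0
  have tb := tangent (k+1) (ha.trans hab) hm0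
  push_cast at ta tb
  rw [show m - a = (b-a)/2 from by rw [hm]; ring] at ta
  rw [show m - b = -((b-a)/2) from by rw [hm]; ring] at tb
  simp only [show k+1+1 = k+2 from rfl] at ta tb
  -- normalize goal
  simp only [show k+2-1 = k+1 from rfl]
  push_cast
  have hdenom : (0:ℝ) < ((k:ℝ)+2+1)*(b-a) := by positivity
  rw [le_div_iff₀ (by positivity : (0:ℝ) < (k:ℝ)+1+1+1)] at hlow
  rw [div_le_iff₀ (by positivity : (0:ℝ) < (k:ℝ)+2+1)] at hup
  have hL1 : m^(k+2) ≤ (b^(k+2+1) - a^(k+2+1)) / (((k:ℝ)+2+1)*(b-a)) := by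
    rw [le_div_iff₀ hdenom]; nlinarith [hlow]
  have hL2 : (b^(k+2+1) - a^(k+2+1)) / (((k:ℝ)+2+1)*(b-a))
      ≤ (m^(k+2) + (a^(k+2)+b^(k+2))/2)/2 := by
    rw [div_le_iff₀ hdenom]; nlinarith [hup]
  have habs : |(b^(k+2+1) - a^(k+2+1)) / (((k:ℝ)+2+1)*(b-a))
      - 1/3 * ((a^(k+2) + b^(k+2))/2 + 2*m^(k+2))|
      ≤ ((a^(k+2)+b^(k+2))/2 - m^(k+2))/3 := by
    rw [abs_le]; constructor <;> [skip; skip] <;> linarith [hL1, hL2]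
  have haux : (0:ℝ) < ((k:ℝ)+2)*(b-a)*a^(k+1) := by positivity
  have hd : ((a^(k+2)+b^(k+2))/2 - m^(k+2))/3 ≤ ((k:ℝ)+2)*(b-a)*b^(k+1)/12 := by
    linarith [ta, tb, haux]
  -- constant bound
  have hkey := key_const hp hq hpq
  have h1 : ((k:ℝ)+2)*((b-a)/6)*b^(k+1) * (1/2)
      ≤ ((k:ℝ)+2)*((b-a)/6)*b^(k+1) *
        (((1 + 2^(p+1))/(3*(p+1)))^(1/p) * ((1/(q+1))^(1/q) * (2 - (1/2)^q)^(1/q))) :=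
    mul_le_mul_of_nonneg_left hkey (by positivity)
  have hhalf : ((1:ℝ)/2)^q ≤ 1/2 := by
    have := Real.rpow_le_rpow_of_exponent_ge (x := (1:ℝ)/2) (by norm_num) (by norm_num) hq.le
    simpa using this
  have hDb : (0:ℝ) ≤ 2 - (1/2)^q := by
    have : (0:ℝ) < ((1:ℝ)/2)^q := Real.rpow_pos_of_pos (by norm_num) q
    linarith
  have h2 : (0:ℝ) ≤ ((k:ℝ)+2)*((b-a)/6)*((1 + 2^(p+1))/(3*(p+1)))^(1/p)
      * (1/(q+1))^(1/q) * (a^(k+1)/2) := by positivity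
  have hRHS : ((k:ℝ)+2)*(b-a)*b^(k+1)/12
      ≤ ((k:ℝ)+2) * ((b-a)/6) * ((1 + 2^(p+1))/(3*(p+1)))^(1/p) * (1/(q+1))^(1/q) *
        (a^(k+1)/2 + b^(k+1) * (2 - (1/2)^q)^(1/q)) := by
    nlinarith [h1, h2, hb0, hba]
  calc |(b^(k+2+1) - a^(k+2+1)) / (((k:ℝ)+2+1)*(b-a))
      - 1/3 * ((a^(k+2) + b^(k+2))/2 + 2*m^(k+2))|
      ≤ ((a^(k+2)+b^(k+2))/2 - m^(k+2))/3 := habs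
    _ ≤ ((k:ℝ)+2)*(b-a)*b^(k+1)/12 := hd
    _ ≤ _ := hRHS
end

section
/- Let a, b ∈ ℝ with 0 < a < b. Then |(1/3)[A(a^{-1}, b^{-1}) + 2 A^{-1}(a,b)] − L^{-1}(a,b)| ≤ (b−a) [ 1/a² + 1/b² ], where A(α,β) = (α+β)/2 is the arithmetic mean, A^{-1}(a,b) = 2/(a+b), and L(a,b) = (b−a)/(ln b − ln a) is the logarithmic mean, so that L^{-1}(a,b) = (1/(b−a)) ∫_a^b x^{-1} dx. -/
open Real

/-- Application to special means: for `0 < a < b`,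
`|(1/3)[A(a⁻¹,b⁻¹) + 2 A⁻¹(a,b)] − L⁻¹(a,b)| ≤ (b−a)[1/a² + 1/b²]`,
where `A(α,β) = (α+β)/2`, `A⁻¹(a,b) = 2/(a+b)` and `L⁻¹(a,b) = (ln b − ln a)/(b−a)`. -/
theorem simpson_means_inv
    (a b : ℝ) (ha : 0 < a) (hab : a < b) :
    |(1/3) * ((a⁻¹ + b⁻¹)/2 + 2 * (2/(a+b))) - (Real.log b - Real.log a)/(b-a)|
      ≤ (b-a) * (1/a^2 + 1/b^2) := by
  have hb : 0 < b := ha.trans hab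
  have hba : 0 < b - a := sub_pos.mpr hab
  have hlog : Real.log b - Real.log a = Real.log (b/a) := by
    rw [Real.log_div hb.ne' ha.ne']
  have h1 : Real.log (b/a) ≤ b/a - 1 := Real.log_le_sub_one_of_pos (by positivity)
  have h2 : Real.log (a/b) ≤ a/b - 1 := Real.log_le_sub_one_of_pos (by positivity)
  have hlog2 : Real.log (a/b) = -(Real.log (b/a)) := by
    rw [Real.log_div ha.ne' hb.ne', Real.log_div hb.ne' ha.ne']; ring
  have hup : Real.log b - Real.log a ≤ (b-a)/a := by
    rw [hlog]
    calc Real.log (b/a) ≤ b/a - 1 := h1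
      _ = (b-a)/a := by field_simp
  have hlo : (b-a)/b ≤ Real.log b - Real.log a := by
    rw [hlog]
    have h3 : 1 - a/b ≤ Real.log (b/a) := by nlinarith [h2, hlog2]
    calc (b-a)/b = 1 - a/b := by field_simp
      _ ≤ Real.log (b/a) := h3
  have hLup : (Real.log b - Real.log a)/(b-a) ≤ 1/a := by
    rw [div_le_div_iff₀ hba ha]
    have := (le_div_iff₀ ha).mp hup
    linarith
  have hLlo : 1/b ≤ (Real.log b - Real.log a)/(b-a) := by
    rw [div_le_div_iff₀ hb hba]
    have := (div_le_iff₀ hb).mp hlo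
    linarith
  have hSup : (1/3) * ((a⁻¹ + b⁻¹)/2 + 2 * (2/(a+b))) ≤ 1/a := by
    rw [← sub_nonneg]
    have h : 1/a - (1/3) * ((a⁻¹ + b⁻¹)/2 + 2 * (2/(a+b)))
        = ((b-a)*(5*b+a))/(6*a*b*(a+b)) := by
      field_simp; ring
    rw [h]; positivity
  have hSlo : 1/b ≤ (1/3) * ((a⁻¹ + b⁻¹)/2 + 2 * (2/(a+b))) := by
    rw [← sub_nonneg]
    have h : (1/3) * ((a⁻¹ + b⁻¹)/2 + 2 * (2/(a+b))) - 1/b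
        = ((b-a)*(b+5*a))/(6*a*b*(a+b)) := by
      field_simp; ring
    rw [h]; positivity
  have hfin : 1/a - 1/b ≤ (b-a) * (1/a^2 + 1/b^2) := by
    rw [← sub_nonneg]
    have h : (b-a) * (1/a^2 + 1/b^2) - (1/a - 1/b)
        = ((b-a)*(a^2 + b^2 - a*b))/(a^2*b^2) := by
      field_simp; ring
    rw [h]
    apply div_nonneg _ (by positivity)
    nlinarith [sq_nonneg (a-b)]
  rw [abs_le]
  constructor <;> linarith
end
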